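/- arXiv:1301.0292 — 4 statements merged into one kernel-verified Lean document; each statement's English description precedes it below -/
import Mathlib

section
/- Let G be a biextraspecial group, D₁ and D₂ distinct dents with diagonal dent D₃ = D₁ + D₂, and D any dent. Then either D commutes with all three of D₁, D₂, D₃, or D commutes with exactly one of them. -/
/-- The centre of the subgroup `Q`, viewed as a subgroup of the ambient group `G`. -/
def centerOf (G : Type*) [Group G] (Q : Subgroup G) : Subgroup G :=
  Subgroup.centralizer (Q : Set G) ⊓ Q

open scoped commutatorElement

/-- A biextraspecial group of rank `m`: `G` is an extension of a special 2-group
`Q` of order `2^(2+2m)` by `L₂(2) ≅ S₃`, the centre `Z = Z(Q) ≅ 2²` is the natural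
module (elementary abelian of order 4 with faithful induced `G/Q`-action), `Q/Z` is
elementary abelian, and every element of order 3 acts fixed-point-freely on `Q`
(equivalently, `Q/Z` has only natural composition factors). -/
structure IsBiextraspecial (G : Type*) [Group G] (Q : Subgroup G) (m : ℕ) : Prop where
  normal : Q.Normal
  card_Q : Nat.card Q = 2 ^ (2 + 2 * m)
  quot_iso : Nonempty ((G ⧸ Q) ≃* Equiv.Perm (Fin 3))
  card_center : Nat.card (centerOf G Q) = 4
  center_exponent : ∀ z ∈ centerOf G Q, z * z = 1
  center_faithful : ∀ g : G, (∀ z ∈ centerOf G Q, g * z * g⁻¹ = z) → g ∈ Q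
  sq_mem_center : ∀ q ∈ Q, q * q ∈ centerOf G Q
  comm_mem_center : ∀ q ∈ Q, ∀ r ∈ Q, ⁅q, r⁆ ∈ centerOf G Q
  order_three_fpf : ∀ g : G, orderOf g = 3 → ∀ q ∈ Q, g * q * g⁻¹ = q → q = 1

/-- A dent: a normal subgroup `D` of `G` with `Z(Q) < D < Q` such that `D/Z` is an
irreducible `L`-submodule of `Q/Z` (i.e. `D` is minimal among normal subgroups
strictly containing `Z(Q)`). -/
structure IsDent (G : Type*) [Group G] (Q D : Subgroup G) : Prop where
  normal : D.Normal
  center_lt : centerOf G Q < D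
  lt_Q : D < Q
  minimal : ∀ E : Subgroup G, E.Normal → centerOf G Q < E → E ≤ D → E = D

/-- `D₃` is the diagonal dent of the distinct dents `D₁` and `D₂`: the unique third
dent contained in `D₁D₂`. -/
def IsDiagonal (G : Type*) [Group G] (Q D₁ D₂ D₃ : Subgroup G) : Prop :=
  IsDent G Q D₁ ∧ IsDent G Q D₂ ∧ IsDent G Q D₃ ∧
    D₁ ≠ D₂ ∧ D₃ ≠ D₁ ∧ D₃ ≠ D₂ ∧ D₃ ≤ D₁ ⊔ D₂

/-- Two subgroups commute elementwise, i.e. `[D₁, D₂] = 1`. -/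
def DentsCommute (G : Type*) [Group G] (D₁ D₂ : Subgroup G) : Prop :=
  ∀ d₁ ∈ D₁, ∀ d₂ ∈ D₂, d₁ * d₂ = d₂ * d₁

/-- A dent is singular when it is elementary abelian (of type `2⁴`). -/
def IsSingularDent (G : Type*) [Group G] (D : Subgroup G) : Prop :=
  ∀ d ∈ D, d * d = 1

/-- A standard basis `x, y` of a dent `D` with respect to `L = ⟨s, t⟩`:
`D = ⟨x, y, Z⟩` with `xᵗ = x`, `xˢ = y` and `yˢ = xy` (singular case) or
`yˢ = x⁻¹y⁻¹` (non-singular case). -/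
structure StdBasis (G : Type*) [Group G] (Q : Subgroup G) (s t : G)
    (D : Subgroup G) (x y : G) : Prop where
  x_mem : x ∈ D
  x_notin : x ∉ centerOf G Q
  gen : D = centerOf G Q ⊔ Subgroup.closure {x, y}
  t_fix : t * x * t⁻¹ = x
  s_x : s * x * s⁻¹ = y
  s_y : s * y * s⁻¹ = x * y ∨ s * y * s⁻¹ = x⁻¹ * y⁻¹

set_option linter.unusedSectionVars false
set_option linter.unusedTactic false

namespace S6
variable {G : Type*} [Group G] {Q : Subgroup G} {m : ℕ}

theorem zle : centerOf G Q ≤ Q := inf_le_right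

theorem zmem_iff {z : G} : z ∈ centerOf G Q ↔ (∀ q ∈ Q, q * z = z * q) ∧ z ∈ Q := by
  constructor
  · rintro ⟨h1, h2⟩
    exact ⟨fun q hq => Subgroup.mem_centralizer_iff.mp h1 q hq, h2⟩
  · rintro ⟨h1, h2⟩
    exact ⟨Subgroup.mem_centralizer_iff.mpr h1, h2⟩

theorem zcomm {z q : G} (hz : z ∈ centerOf G Q) (hq : q ∈ Q) : q * z = z * q :=
  (zmem_iff.mp hz).1 q hq

theorem znormal (hQ : Q.Normal) : (centerOf G Q).Normal := by
  constructor
  intro z hz g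
  rw [zmem_iff]
  refine ⟨?_, hQ.conj_mem z (zle hz) g⟩
  intro q hq
  have h2 : (g⁻¹ * q * g) * z = z * (g⁻¹ * q * g) := zcomm hz (by simpa using hQ.conj_mem q hq g⁻¹)
  calc q * (g * z * g⁻¹) = g * ((g⁻¹ * q * g) * z) * g⁻¹ := by group
    _ = g * (z * (g⁻¹ * q * g)) * g⁻¹ := by rw [h2]
    _ = g * z * g⁻¹ * q := by group

theorem zconj2 {z q : G} (hz : z ∈ centerOf G Q) (hq : q ∈ Q) : z * q * z⁻¹ = q := by
  rw [← zcomm hz hq]; group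

theorem comm_conj (g p q : G) : g * ⁅p, q⁆ * g⁻¹ = ⁅g*p*g⁻¹, g*q*g⁻¹⁆ := by
  simp only [commutatorElement_def]; group

section bil
variable (hG : IsBiextraspecial G Q m)
include hG

theorem zinv {z : G} (hz : z ∈ centerOf G Q) : z⁻¹ = z := by
  have := hG.center_exponent z hz
  calc z⁻¹ = z⁻¹ * (z * z) := by rw [this]; group
    _ = z := by group

theorem comm_mul_right {p q r : G} (hp : p ∈ Q) (hq : q ∈ Q) (hr : r ∈ Q) :
    ⁅p, q*r⁆ = ⁅p,q⁆ * ⁅p,r⁆ := by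
  have h1 : ⁅p, q*r⁆ = ⁅p,q⁆ * (q * ⁅p,r⁆ * q⁻¹) := by
    simp only [commutatorElement_def]; group
  rw [h1, zcomm (hG.comm_mem_center p hp r hr) hq]; group

omit hG in
theorem zconj {z q : G} (hz : z ∈ centerOf G Q) (hq : q ∈ Q) : q * z * q⁻¹ = z := by
  rw [zcomm hz hq]; group

omit hG in
theorem zconj' {z q : G} (hz : z ∈ centerOf G Q) (hq : q ∈ Q) : q⁻¹ * z * q = z := by
  rw [zcomm hz (inv_mem hq)]; group

theorem comm_mul_left {p q r : G} (hp : p ∈ Q) (hq : q ∈ Q) (hr : r ∈ Q) :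
    ⁅p*q, r⁆ = ⁅p,r⁆ * ⁅q,r⁆ := by
  have h2 : ⁅q,r⁆ ∈ centerOf G Q := hG.comm_mem_center q hq r hr
  have h1 : ⁅p*q, r⁆ = (p * ⁅q,r⁆ * p⁻¹) * ⁅p,r⁆ := by
    simp only [commutatorElement_def]; group
  rw [h1, zconj h2 hp, zcomm h2 (zle (hG.comm_mem_center p hp r hr))]

theorem comm_z_right {p z : G} (hp : p ∈ Q) (hz : z ∈ centerOf G Q) : ⁅p, z⁆ = 1 := by
  have : ⁅p, z⁆ = (p * z * p⁻¹) * z⁻¹ := by simp only [commutatorElement_def]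
  rw [this, zconj hz hp]; group

theorem comm_z_left {p z : G} (hp : p ∈ Q) (hz : z ∈ centerOf G Q) : ⁅z, p⁆ = 1 := by
  have : ⁅z, p⁆ = z * (p * z⁻¹ * p⁻¹) := by simp only [commutatorElement_def]; group
  rw [this, zconj (inv_mem hz) hp]; group

theorem comm_swap {p q : G} (hp : p ∈ Q) (hq : q ∈ Q) : ⁅q, p⁆ = ⁅p,q⁆ := by
  have h3 : ⁅q,p⁆ = ⁅p,q⁆⁻¹ := by simp only [commutatorElement_def]; group
  rw [h3]
  exact zinv hG (hG.comm_mem_center p hp q hq)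

theorem comm_inv_right {p q : G} (hp : p ∈ Q) (hq : q ∈ Q) : ⁅p, q⁻¹⁆ = ⁅p,q⁆ := by
  have h1 : ⁅p, q⁻¹⁆ = q⁻¹ * ⁅q, p⁆ * q := by simp only [commutatorElement_def]; group
  have h2 : ⁅q,p⁆ ∈ centerOf G Q := hG.comm_mem_center q hq p hp
  rw [h1, zconj' h2 hq, comm_swap hG hp hq]

theorem comm_inv_left {p q : G} (hp : p ∈ Q) (hq : q ∈ Q) : ⁅p⁻¹, q⁆ = ⁅p,q⁆ := by
  have h1 : ⁅p⁻¹, q⁆ = p⁻¹ * ⁅q, p⁆ * p := by simp only [commutatorElement_def]; group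
  have h2 : ⁅q,p⁆ ∈ centerOf G Q := hG.comm_mem_center q hq p hp
  rw [h1, zconj' h2 hp, comm_swap hG hp hq]

omit hG in
theorem comm_eq_one_iff {p q : G} : ⁅p, q⁆ = 1 ↔ p * q = q * p := by
  simp only [commutatorElement_def]
  constructor
  · intro h
    have := congrArg (fun x => x * q * p) h
    simpa [mul_assoc] using this
  · intro h; rw [h]; group

end bil

/-- Auxiliary data: elements `s` (of order 3) and `t` (an involution mod `Q`)
generating `G` over `Q`, with `t s t⁻¹ ≡ s⁻¹ (mod Q)`. -/
structure Aux (G : Type*) [Group G] (Q : Subgroup G) where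
  s : G
  t : G
  hs3 : s ^ 3 = 1
  hsQ : s ∉ Q
  hsfpf : ∀ q ∈ Q, s * q * s⁻¹ = q → q = 1
  htQ : t ∉ Q
  ht2 : t ^ 2 ∈ Q
  hts : s * (t * s * t⁻¹) ∈ Q

section aux
variable (hG : IsBiextraspecial G Q m)
include hG

theorem finiteG : Finite G := by
  haveI := hG.normal
  apply Nat.finite_of_card_ne_zero
  rw [Subgroup.card_eq_card_quotient_mul_card_subgroup Q]
  have h1 : Nat.card (G ⧸ Q) = 6 := by
    obtain ⟨e⟩ := hG.quot_iso
    rw [Nat.card_congr e.toEquiv]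
    rw [Nat.card_eq_fintype_card, Fintype.card_perm]
    decide
  rw [h1, hG.card_Q]
  positivity

theorem existsAux : Nonempty (Aux G Q) := by
  haveI := hG.normal
  obtain ⟨e⟩ := hG.quot_iso
  have hfin : Finite G := finiteG hG
  haveI : Fact (Nat.Prime 3) := ⟨by norm_num⟩
  -- the order-3 element
  have hc : (finRotate 3 : Equiv.Perm (Fin 3)) ^ 3 = 1 ∧ (finRotate 3 : Equiv.Perm (Fin 3)) ≠ 1 := by decide
  set xbar : G ⧸ Q := e.symm (finRotate 3) with hxbar
  obtain ⟨g, hg⟩ := QuotientGroup.mk_surjective xbar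
  have hx3 : xbar ^ 3 = 1 := by
    rw [hxbar, ← map_pow, hc.1, map_one]
  have hx1 : xbar ≠ 1 := by
    rw [hxbar]; intro h
    exact hc.2 (by simpa using congrArg e h)
  have hox : orderOf xbar = 3 := orderOf_eq_prime hx3 hx1
  set M : ℕ := 3 + 2 * m with hM
  set s : G := g ^ (2 ^ M) with hs
  have hcard : Nat.card G = 2 ^ (M) * 3 := by
    rw [Subgroup.card_eq_card_quotient_mul_card_subgroup Q]
    have h1 : Nat.card (G ⧸ Q) = 6 := by
      rw [Nat.card_congr e.toEquiv, Nat.card_eq_fintype_card, Fintype.card_perm]; decide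
    rw [h1, hG.card_Q, hM]; ring
  have hdvd : orderOf g ∣ 2 ^ M * 3 := hcard ▸ orderOf_dvd_natCard g
  have h3g : 3 ∣ orderOf g := by
    have : (QuotientGroup.mk g : G ⧸ Q) = xbar := hg
    have hpow : xbar ^ orderOf g = 1 := by
      rw [← this, ← QuotientGroup.mk_pow, pow_orderOf_eq_one, QuotientGroup.mk_one]
    have h := orderOf_dvd_of_pow_eq_one hpow
    rwa [hox] at h
  have hcop : Nat.Coprime 3 (2 ^ M) := (Nat.Coprime.pow_right _ (by norm_num))
  -- s ^ 3 = 1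
  have hs3 : s ^ 3 = 1 := by
    rw [hs, ← pow_mul]
    apply orderOf_dvd_iff_pow_eq_one.mp
    obtain ⟨u, hu⟩ := h3g
    rw [hu]
    have hu2 : u ∣ 2 ^ M := by
      have := hdvd
      rw [hu] at this
      -- 3 * u ∣ 2^M * 3
      have : 3 * u ∣ 3 * 2 ^ M := by rwa [mul_comm (2^M) 3] at this
      exact (mul_dvd_mul_iff_left (by norm_num : (3:ℕ) ≠ 0)).mp this
    obtain ⟨v, hv⟩ := hu2
    exact ⟨v, by rw [hv]; ring⟩
  -- image of s is nontrivial
  have hsbar : (QuotientGroup.mk s : G ⧸ Q) = xbar ^ (2 ^ M) := by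
    rw [hs, QuotientGroup.mk_pow, hg]
  have hsQ : s ∉ Q := by
    intro h
    have h1 : (QuotientGroup.mk s : G ⧸ Q) = 1 := (QuotientGroup.eq_one_iff s).mpr h
    rw [hsbar] at h1
    have := orderOf_dvd_of_pow_eq_one h1
    rw [hox] at this
    exact absurd (Nat.eq_one_of_dvd_coprimes hcop (dvd_refl 3) this) (by norm_num)
  have hsne : s ≠ 1 := fun h => hsQ (h ▸ Q.one_mem)
  have hords : orderOf s = 3 := orderOf_eq_prime hs3 hsne
  have hsfpf : ∀ q ∈ Q, s * q * s⁻¹ = q → q = 1 := fun q hq h =>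
    hG.order_three_fpf s hords q hq h
  -- the involution t
  have hτ : (Equiv.swap 0 1 : Equiv.Perm (Fin 3)) ^ 2 = 1 ∧ (Equiv.swap 0 1 : Equiv.Perm (Fin 3)) ≠ 1 := by decide
  set ybar : G ⧸ Q := e.symm (Equiv.swap 0 1) with hybar
  obtain ⟨t, ht⟩ := QuotientGroup.mk_surjective ybar
  have htQ : t ∉ Q := by
    intro h
    have h1 : (QuotientGroup.mk t : G ⧸ Q) = 1 := (QuotientGroup.eq_one_iff t).mpr h
    rw [ht, hybar] at h1
    exact hτ.2 (by simpa using congrArg e h1)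
  have ht2 : t ^ 2 ∈ Q := by
    rw [← QuotientGroup.eq_one_iff, QuotientGroup.mk_pow, ht, hybar, ← map_pow, hτ.1, map_one]
  have hts : s * (t * s * t⁻¹) ∈ Q := by
    rw [← QuotientGroup.eq_one_iff]
    have key : ∀ x y : Equiv.Perm (Fin 3), x^3 = 1 → x ≠ 1 → y^2 = 1 → y ≠ 1 →
        x * (y * x * y⁻¹) = 1 := by decide
    have hxs : e (QuotientGroup.mk s) ^ 3 = 1 := by
      rw [← map_pow, ← QuotientGroup.mk_pow, hs3, QuotientGroup.mk_one, map_one]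
    have hxs1 : e (QuotientGroup.mk s) ≠ 1 := by
      intro h
      have : (QuotientGroup.mk s : G ⧸ Q) = 1 := by
        have := congrArg e.symm h
        simpa using this
      exact hsQ ((QuotientGroup.eq_one_iff s).mp this)
    have hyt : e (QuotientGroup.mk t) ^ 2 = 1 := by
      rw [← map_pow, ← QuotientGroup.mk_pow]
      rw [(QuotientGroup.eq_one_iff (t^2)).mpr ht2, map_one]
    have hyt1 : e (QuotientGroup.mk t) ≠ 1 := by
      intro h
      have : (QuotientGroup.mk t : G ⧸ Q) = 1 := by
        have := congrArg e.symm h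
        simpa using this
      exact htQ ((QuotientGroup.eq_one_iff t).mp this)
    have := key _ _ hxs hxs1 hyt hyt1
    have h2 : e (QuotientGroup.mk (s * (t * s * t⁻¹))) = 1 := by
      simpa [map_mul, map_inv] using this
    have := congrArg e.symm h2
    simpa using this
  exact ⟨⟨s, t, hs3, hsQ, hsfpf, htQ, ht2, hts⟩⟩

end aux

section fpf
variable (hG : IsBiextraspecial G Q m) (A : Aux G Q)
include hG

theorem finiteZ : Finite (centerOf G Q) := by
  apply Nat.finite_of_card_ne_zero
  rw [hG.card_center]; norm_num

include A

theorem fpf_modZ {q : G} (hq : q ∈ Q) (h : A.s * q * A.s⁻¹ * q⁻¹ ∈ centerOf G Q) :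
    q ∈ centerOf G Q := by
  haveI := finiteZ hG
  set Z := centerOf G Q with hZ
  have hZn : Z.Normal := znormal hG.normal
  set φ : Z → Z := fun z => ⟨A.s * z * A.s⁻¹ * (z : G)⁻¹,
    mul_mem (hZn.conj_mem z z.2 A.s) (inv_mem z.2)⟩ with hφ
  have hinj : Function.Injective φ := by
    intro z1 z2 h12
    have h12' : A.s * z1 * A.s⁻¹ * (z1 : G)⁻¹ = A.s * z2 * A.s⁻¹ * (z2 : G)⁻¹ :=
      congrArg Subtype.val h12
    have key : A.s * ((z1 : G) * (z2 : G)⁻¹) * A.s⁻¹ = (z1 : G) * (z2 : G)⁻¹ := by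
      have hc : (z1 : G) * (z2:G)⁻¹ = (z2:G)⁻¹ * (z1:G) := zcomm (inv_mem z2.2) (zle z1.2)
      calc A.s * ((z1 : G) * (z2 : G)⁻¹) * A.s⁻¹
          = (A.s * z1 * A.s⁻¹ * (z1 : G)⁻¹) * ((z1:G) * (A.s * (z2:G)⁻¹ * A.s⁻¹)) := by group
        _ = (A.s * z2 * A.s⁻¹ * (z2 : G)⁻¹) * ((z1:G) * (A.s * (z2:G)⁻¹ * A.s⁻¹)) := by rw [h12']
        _ = (A.s * z2 * A.s⁻¹) * ((z2:G)⁻¹ * (z1:G)) * (A.s * z2 * A.s⁻¹)⁻¹ := by group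
        _ = (z2:G)⁻¹ * (z1:G) := zconj2 (hZn.conj_mem z2 z2.2 A.s)
              (mul_mem (zle (inv_mem z2.2)) (zle z1.2))
        _ = (z1 : G) * (z2 : G)⁻¹ := hc.symm
    have := A.hsfpf _ (mul_mem (zle z1.2) (inv_mem (zle z2.2))) key
    have : (z1 : G) = (z2 : G) := by
      rw [← mul_one (z1 : G), ← inv_mul_cancel (z2 : G), ← mul_assoc, this, one_mul]
    exact Subtype.ext this
  have hsurj : Function.Surjective φ := Finite.injective_iff_surjective.mp hinj
  obtain ⟨z, hz⟩ := hsurj ⟨(A.s * q * A.s⁻¹ * q⁻¹)⁻¹, inv_mem h⟩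
  have hz' : A.s * z * A.s⁻¹ * (z:G)⁻¹ = (A.s * q * A.s⁻¹ * q⁻¹)⁻¹ := congrArg Subtype.val hz
  -- z * q is fixed by conjugation by s
  have hfix : A.s * ((z:G) * q) * A.s⁻¹ = (z:G) * q := by
    have hcomm : q⁻¹ * (z:G)⁻¹ * q = (z:G)⁻¹ := zconj' (inv_mem z.2) hq
    calc A.s * ((z:G) * q) * A.s⁻¹
        = (A.s * z * A.s⁻¹ * (z:G)⁻¹) * ((z:G) * (A.s * q * A.s⁻¹ * q⁻¹) * q) := by group
      _ = (A.s * q * A.s⁻¹ * q⁻¹)⁻¹ * ((z:G) * (A.s * q * A.s⁻¹ * q⁻¹) * q) := by rw [hz']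
      _ = (A.s * q * A.s⁻¹ * q⁻¹)⁻¹ * ((A.s * q * A.s⁻¹ * q⁻¹) * (z:G) * q) := by
            rw [zcomm h (zle z.2)]
      _ = (z:G) * q := by group
  have := A.hsfpf _ (mul_mem (zle z.2) hq) hfix
  have hqz : q = (z:G)⁻¹ := by
    rw [← mul_one (z:G)⁻¹, ← this]; group
  rw [hqz]; exact inv_mem z.2

theorem fpf_triple {q : G} (hq : q ∈ Q) :
    q * (A.s * q * A.s⁻¹) * (A.s * (A.s * q * A.s⁻¹) * A.s⁻¹) ∈ centerOf G Q := by
  set q' := A.s * q * A.s⁻¹ with hq'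
  set q'' := A.s * q' * A.s⁻¹ with hq''
  have hq'Q : q' ∈ Q := by simpa [hq'] using hG.normal.conj_mem q hq A.s
  have hq''Q : q'' ∈ Q := by simpa [hq''] using hG.normal.conj_mem q' hq'Q A.s
  set w := q * q' * q'' with hw
  have hwQ : w ∈ Q := mul_mem (mul_mem hq hq'Q) hq''Q
  apply fpf_modZ hG A hwQ
  have hss : A.s * A.s * A.s = 1 := by
    have := A.hs3
    rwa [pow_succ, pow_succ, pow_one] at this
  have hs3 : A.s * q'' * A.s⁻¹ = q := by
    have h0 : A.s * q'' * A.s⁻¹ = (A.s*A.s*A.s) * q * (A.s*A.s*A.s)⁻¹ := by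
      rw [hq'', hq']; group
    rw [h0, hss]; group
  have h1 : A.s * w * A.s⁻¹ = q' * q'' * q := by
    rw [hw]
    calc A.s * (q * q' * q'') * A.s⁻¹
        = (A.s * q * A.s⁻¹) * (A.s * q' * A.s⁻¹) * (A.s * q'' * A.s⁻¹) := by group
      _ = q' * q'' * q := by rw [← hq', ← hq'', hs3]
  have h2 : q' * q'' * q = ⁅q' * q'', q⁆ * w := by
    rw [hw]; simp only [commutatorElement_def]; group
  rw [h1, h2, hw]
  have : ⁅q' * q'', q⁆ * (q * q' * q'') * (q * q' * q'')⁻¹ = ⁅q' * q'', q⁆ := by group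
  rw [this]
  exact hG.comm_mem_center _ (mul_mem hq'Q hq''Q) _ hq

end fpf

section dents
variable (hG : IsBiextraspecial G Q m)
include hG

theorem dent_zle {D : Subgroup G} (hD : IsDent G Q D) : centerOf G Q ≤ D :=
  le_of_lt hD.center_lt

theorem dent_leQ {D : Subgroup G} (hD : IsDent G Q D) : D ≤ Q := le_of_lt hD.lt_Q

omit hG

theorem inf_normal {H K : Subgroup G} (hH : H.Normal) (hK : K.Normal) : (H ⊓ K).Normal :=
  ⟨fun n hn g => ⟨hH.conj_mem n hn.1 g, hK.conj_mem n hn.2 g⟩⟩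

theorem sup_normal {H K : Subgroup G} (hH : H.Normal) (hK : K.Normal) : (H ⊔ K).Normal := by
  haveI := hH; haveI := hK; infer_instance

include hG

theorem dents_inter {D E : Subgroup G} (hD : IsDent G Q D) (hE : IsDent G Q E)
    (hne : D ≠ E) {x : G} (hxD : x ∈ D) (hxE : x ∈ E) : x ∈ centerOf G Q := by
  by_contra hx
  have hlt : centerOf G Q < D ⊓ E := by
    refine lt_of_le_of_ne (le_inf (dent_zle hG hD) (dent_zle hG hE)) ?_
    intro h
    exact hx (h ▸ (⟨hxD, hxE⟩ : x ∈ D ⊓ E))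
  have h1 : D ⊓ E = D := hD.minimal _ (inf_normal hD.normal hE.normal) hlt inf_le_left
  have h2 : D ≤ E := h1 ▸ inf_le_right
  exact hne (hE.minimal D hD.normal hD.center_lt h2)

theorem mem_sup_decomp {D E : Subgroup G} (hE : E.Normal) {x : G} (hx : x ∈ D ⊔ E) :
    ∃ a ∈ D, ∃ b ∈ E, x = a * b := by
  haveI := hE
  have : x ∈ ((D ⊔ E : Subgroup G) : Set G) := hx
  rw [Subgroup.mul_normal D E] at this
  obtain ⟨a, ha, b, hb, hab⟩ := this
  exact ⟨a, ha, b, hb, hab.symm⟩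

/-- Symmetry of the diagonal configuration. -/
theorem diag_sym {D₁ D₂ D₃ : Subgroup G} (h1 : IsDent G Q D₁) (h2 : IsDent G Q D₂)
    (h3 : IsDent G Q D₃) (h12 : D₁ ≠ D₂) (h31 : D₃ ≠ D₁) (h32 : D₃ ≠ D₂)
    (hle : D₃ ≤ D₁ ⊔ D₂) : D₂ ≤ D₁ ⊔ D₃ := by
  obtain ⟨x, hx3, hxZ⟩ := SetLike.exists_of_lt h3.center_lt
  have hx1 : x ∉ D₁ := fun h => hxZ (dents_inter hG h3 h1 h31 hx3 h)
  obtain ⟨a, ha, b, hb, hab⟩ := mem_sup_decomp hG h2.normal (hle hx3)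
  have hbZ : b ∉ centerOf G Q := by
    intro h
    exact hx1 (hab ▸ mul_mem ha (dent_zle hG h1 h))
  have hbmem : b ∈ (D₁ ⊔ D₃) ⊓ D₂ := by
    refine ⟨?_, hb⟩
    have : b = a⁻¹ * x := by rw [hab]; group
    rw [this]
    exact mul_mem (Subgroup.mem_sup_left (inv_mem ha)) (Subgroup.mem_sup_right hx3)
  have hlt : centerOf G Q < (D₁ ⊔ D₃) ⊓ D₂ := by
    refine lt_of_le_of_ne (le_inf (le_trans (dent_zle hG h1) le_sup_left) (dent_zle hG h2)) ?_
    intro h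
    exact hbZ (h ▸ hbmem)
  have := h2.minimal _ (inf_normal (sup_normal h1.normal h3.normal) h2.normal) hlt inf_le_right
  exact this ▸ inf_le_left

omit hG

/-- A subgroup of `Q` containing no... normality from closure under `Q`, `s`, `t` conjugation. -/
theorem normal_of_conj (hG : IsBiextraspecial G Q m) (A : Aux G Q) {E : Subgroup G}
    (hEQ : E ≤ Q)
    (hQc : ∀ q ∈ Q, ∀ x ∈ E, q * x * q⁻¹ ∈ E)
    (hsc : ∀ x ∈ E, A.s * x * A.s⁻¹ ∈ E)
    (htc : ∀ x ∈ E, A.t * x * A.t⁻¹ ∈ E) : E.Normal := by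
  haveI := hG.normal
  have hss : A.s * A.s * A.s = 1 := by
    have := A.hs3; rwa [pow_succ, pow_succ, pow_one] at this
  rw [← Subgroup.normalizer_eq_top_iff]
  have hQN : Q ≤ Subgroup.normalizer (E : Set G) := by
    intro q hq
    rw [Subgroup.mem_normalizer_iff]
    intro h
    constructor
    · intro hh; exact hQc q hq h hh
    · intro hh
      have := hQc q⁻¹ (inv_mem hq) _ hh
      simpa [mul_assoc] using this
  have hsN : A.s ∈ Subgroup.normalizer (E : Set G) := by
    rw [Subgroup.mem_normalizer_iff]
    intro h
    constructor
    · intro hh; exact hsc h hh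
    · intro hh
      have h2 := hsc _ (hsc _ hh)
      have : A.s * (A.s * (A.s * h * A.s⁻¹) * A.s⁻¹) * A.s⁻¹ =
          (A.s * A.s * A.s) * h * (A.s * A.s * A.s)⁻¹ := by group
      rw [this, hss] at h2
      simpa using h2
  have htN : A.t ∈ Subgroup.normalizer (E : Set G) := by
    rw [Subgroup.mem_normalizer_iff]
    intro h
    constructor
    · intro hh; exact htc h hh
    · intro hh
      have h2 := htc _ hh
      have h3 := hQc (A.t^2)⁻¹ (inv_mem A.ht2) _ h2
      have : (A.t^2)⁻¹ * (A.t * (A.t * h * A.t⁻¹) * A.t⁻¹) * ((A.t^2)⁻¹)⁻¹ = h := by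
        rw [pow_two]; group
      rwa [this] at h3
  -- now show the normalizer is everything
  set N := Subgroup.normalizer (E : Set G) with hN
  have hfin : Finite G := finiteG hG
  haveI : Finite (G ⧸ Q) := Quotient.finite _
  set P : Subgroup (G ⧸ Q) := N.map (QuotientGroup.mk' Q) with hP
  haveI : Fact (Nat.Prime 3) := ⟨by norm_num⟩
  haveI : Fact (Nat.Prime 2) := ⟨by norm_num⟩
  have hsmem : (QuotientGroup.mk A.s : G ⧸ Q) ∈ P := ⟨A.s, hsN, rfl⟩
  have htmem : (QuotientGroup.mk A.t : G ⧸ Q) ∈ P := ⟨A.t, htN, rfl⟩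
  have hos : orderOf (QuotientGroup.mk A.s : G ⧸ Q) = 3 := by
    apply orderOf_eq_prime
    · rw [← QuotientGroup.mk_pow, A.hs3, QuotientGroup.mk_one]
    · intro h
      exact A.hsQ ((QuotientGroup.eq_one_iff A.s).mp h)
  have hot : orderOf (QuotientGroup.mk A.t : G ⧸ Q) = 2 := by
    apply orderOf_eq_prime
    · rw [← QuotientGroup.mk_pow]
      exact (QuotientGroup.eq_one_iff _).mpr A.ht2
    · intro h
      exact A.htQ ((QuotientGroup.eq_one_iff A.t).mp h)
  have hcard6 : Nat.card (G ⧸ Q) = 6 := by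
    obtain ⟨e⟩ := hG.quot_iso
    rw [Nat.card_congr e.toEquiv, Nat.card_eq_fintype_card, Fintype.card_perm]
    decide
  have h3P : 3 ∣ Nat.card P := by
    have := orderOf_dvd_natCard (⟨_, hsmem⟩ : P)
    rwa [Subgroup.orderOf_mk, hos] at this
  have h2P : 2 ∣ Nat.card P := by
    have := orderOf_dvd_natCard (⟨_, htmem⟩ : P)
    rwa [Subgroup.orderOf_mk, hot] at this
  have h6P : 6 ∣ Nat.card P := Nat.Coprime.mul_dvd_of_dvd_of_dvd (by norm_num) h2P h3P
  have hPle : Nat.card P ∣ 6 := hcard6 ▸ Subgroup.card_subgroup_dvd_card P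
  have hPcard : Nat.card P = 6 := Nat.dvd_antisymm hPle h6P
  have hPtop : P = ⊤ := Subgroup.eq_top_of_card_eq P (by rw [hPcard, hcard6])
  rw [eq_top_iff]
  intro g _
  have : (QuotientGroup.mk g : G ⧸ Q) ∈ P := hPtop ▸ Subgroup.mem_top _
  obtain ⟨n, hn, hng⟩ := this
  have : n⁻¹ * g ∈ Q := by
    rw [← QuotientGroup.eq_one_iff]
    have : (QuotientGroup.mk n : G ⧸ Q) = QuotientGroup.mk g := hng
    rw [QuotientGroup.mk_mul, QuotientGroup.mk_inv, this]
    group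
  have : n⁻¹ * g ∈ N := hQN this
  have := mul_mem hn this
  simpa using this

end dents

section gen
variable (hG : IsBiextraspecial G Q m)
include hG

theorem pow_mod2 {x : G} (hx : x ∈ Q) (i : ℕ) :
    ∃ z ∈ centerOf G Q, x ^ i = z * x ^ (i % 2) := by
  refine ⟨(x^2)^(i/2), pow_mem (by rw [pow_two]; exact hG.sq_mem_center x hx) _, ?_⟩
  rw [← pow_mul, ← pow_add]
  rw [Nat.div_add_mod i 2]

theorem mul_pow_shuffle {x y : G} (hx : x ∈ Q) (hy : y ∈ Q) (i : ℕ) :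
    ∃ c ∈ centerOf G Q, (x * y) ^ i = c * x ^ i * y ^ i := by
  induction i with
  | zero => exact ⟨1, one_mem _, by simp⟩
  | succ n ih =>
    obtain ⟨c, hc, hcn⟩ := ih
    have hcz : ⁅y^n, x⁆ ∈ centerOf G Q := hG.comm_mem_center _ (pow_mem hy n) _ hx
    refine ⟨c * ⁅y^n, x⁆, mul_mem hc hcz, ?_⟩
    have hfree : ⁅y^n, x⁆ * (x * y^n) = y^n * x := by group
    calc (x*y)^(n+1) = (x*y)^n * (x*y) := by rw [pow_succ]
      _ = c * x^n * ((y^n * x) * y) := by rw [hcn]; group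
      _ = c * x^n * ((⁅y^n, x⁆ * (x * y^n)) * y) := by rw [hfree]
      _ = c * (x^n * ⁅y^n, x⁆) * (x * (y^n * y)) := by group
      _ = c * (⁅y^n, x⁆ * x^n) * (x * (y^n * y)) := by rw [zcomm hcz (pow_mem hx n)]
      _ = c * ⁅y^n, x⁆ * x^(n+1) * y^(n+1) := by rw [pow_succ, pow_succ]; group

/-- The subgroup of all `z * x^i * y^j`. -/
def pairSubgroup (hG : IsBiextraspecial G Q m) {x y : G} (hx : x ∈ Q) (hy : y ∈ Q) :
    Subgroup G where
  carrier := {g | ∃ z ∈ centerOf G Q, ∃ i j : ℕ, g = z * x ^ i * y ^ j}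
  one_mem' := ⟨1, one_mem _, 0, 0, by simp⟩
  mul_mem' := by
    rintro g h ⟨z, hz, i, j, rfl⟩ ⟨w, hw, k, l, rfl⟩
    have hcz : ⁅y^j, x^k⁆ ∈ centerOf G Q :=
      hG.comm_mem_center _ (pow_mem hy j) _ (pow_mem hx k)
    refine ⟨z * w * ⁅y^j, x^k⁆, mul_mem (mul_mem hz hw) hcz, i + k, j + l, ?_⟩
    have hfree : ⁅y^j, x^k⁆ * (x^k * y^j) = y^j * x^k := by group
    calc (z*x^i*y^j) * (w*x^k*y^l)
        = z * x^i * (y^j * w) * (x^k * y^l) := by group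
      _ = z * x^i * (w * y^j) * (x^k * y^l) := by rw [zcomm hw (pow_mem hy j)]
      _ = z * (x^i * w) * ((y^j * x^k) * y^l) := by group
      _ = z * (x^i * w) * ((⁅y^j, x^k⁆ * (x^k * y^j)) * y^l) := by rw [hfree]
      _ = z * (w * x^i) * ((⁅y^j, x^k⁆ * (x^k * y^j)) * y^l) := by
            rw [zcomm hw (pow_mem hx i)]
      _ = z * w * ((x^i * ⁅y^j, x^k⁆) * (x^k * (y^j * y^l))) := by group
      _ = z * w * ((⁅y^j, x^k⁆ * x^i) * (x^k * (y^j * y^l))) := by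
            rw [zcomm hcz (pow_mem hx i)]
      _ = z * w * ⁅y^j, x^k⁆ * x^(i+k) * y^(j+l) := by rw [pow_add, pow_add]; group
  inv_mem' := by
    rintro g ⟨z, hz, i, j, rfl⟩
    have hX : x^i ∈ Q := pow_mem hx i
    have hY : y^j ∈ Q := pow_mem hy j
    have hu : x^i * x^i ∈ centerOf G Q := hG.sq_mem_center _ hX
    have hv : y^j * y^j ∈ centerOf G Q := hG.sq_mem_center _ hY
    have hcz : ⁅y^j, x^i⁆ ∈ centerOf G Q := hG.comm_mem_center _ hY _ hX
    refine ⟨(y^j*y^j)⁻¹ * (x^i*x^i)⁻¹ * ⁅y^j, x^i⁆⁻¹ * z⁻¹,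
      mul_mem (mul_mem (mul_mem (inv_mem hv) (inv_mem hu)) (inv_mem hcz)) (inv_mem hz),
      i, j, ?_⟩
    have hfree : ⁅y^j, x^i⁆ * (x^i * y^j) = y^j * x^i := by group
    apply (eq_inv_of_mul_eq_one_left ?_).symm
    calc ((y^j*y^j)⁻¹ * (x^i*x^i)⁻¹ * ⁅y^j, x^i⁆⁻¹ * z⁻¹ * x^i * y^j) * (z * x^i * y^j)
        = (y^j*y^j)⁻¹ * (x^i*x^i)⁻¹ * ⁅y^j, x^i⁆⁻¹ * z⁻¹ * (x^i * (y^j * z) * x^i) * y^j := by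
          group
      _ = (y^j*y^j)⁻¹ * (x^i*x^i)⁻¹ * ⁅y^j, x^i⁆⁻¹ * z⁻¹ * (x^i * (z * y^j) * x^i) * y^j := by
          rw [zcomm hz hY]
      _ = (y^j*y^j)⁻¹ * (x^i*x^i)⁻¹ * ⁅y^j, x^i⁆⁻¹ * z⁻¹ * ((x^i * z) * (y^j * x^i)) * y^j := by
          group
      _ = (y^j*y^j)⁻¹ * (x^i*x^i)⁻¹ * ⁅y^j, x^i⁆⁻¹ * z⁻¹ * ((z * x^i) * (y^j * x^i)) * y^j := by
          rw [zcomm hz hX]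
      _ = (y^j*y^j)⁻¹ * (x^i*x^i)⁻¹ * ⁅y^j, x^i⁆⁻¹ * z⁻¹ *
            ((z * x^i) * (⁅y^j, x^i⁆ * (x^i * y^j))) * y^j := by rw [hfree]
      _ = (y^j*y^j)⁻¹ * (x^i*x^i)⁻¹ * ⁅y^j, x^i⁆⁻¹ *
            ((x^i * ⁅y^j, x^i⁆) * (x^i * (y^j * y^j))) := by group
      _ = (y^j*y^j)⁻¹ * (x^i*x^i)⁻¹ * ⁅y^j, x^i⁆⁻¹ *
            ((⁅y^j, x^i⁆ * x^i) * (x^i * (y^j * y^j))) := by rw [zcomm hcz hX]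
      _ = 1 := by group

omit hG in
theorem conjpow (g x : G) (i : ℕ) : (g*x*g⁻¹)^i = g*x^i*g⁻¹ := by
  induction i with
  | zero => simp
  | succ n ih => rw [pow_succ, ih, pow_succ]; group

omit hG in
theorem conj_zij (g z x y : G) (i j : ℕ) :
    g*(z*x^i*y^j)*g⁻¹ = (g*z*g⁻¹)*(g*x*g⁻¹)^i*(g*y*g⁻¹)^j := by
  rw [conjpow, conjpow]; group

/-- Every dent has a `t`-fixed (mod `Z`) element outside `Z`. -/
theorem dent_tfix (A : Aux G Q) {D : Subgroup G} (hD : IsDent G Q D) :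
    ∃ a, a ∈ D ∧ a ∉ centerOf G Q ∧ A.t * a * A.t⁻¹ * a⁻¹ ∈ centerOf G Q := by
  obtain ⟨a₁, ha₁D, ha₁Z⟩ := SetLike.exists_of_lt hD.center_lt
  have ha₁Q : a₁ ∈ Q := dent_leQ hG hD ha₁D
  set u := A.t * a₁ * A.t⁻¹ with hu
  have huD : u ∈ D := hD.normal.conj_mem a₁ ha₁D A.t
  have huQ : u ∈ Q := dent_leQ hG hD huD
  by_cases hfix : u * a₁⁻¹ ∈ centerOf G Q
  · exact ⟨a₁, ha₁D, ha₁Z, by rw [← hu]; exact hfix⟩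
  · refine ⟨a₁ * u, mul_mem ha₁D huD, ?_, ?_⟩
    · intro h
      apply hfix
      have e1 : u * a₁⁻¹ = ⁅u, a₁⁻¹⁆ * ((a₁*a₁)⁻¹ * (a₁ * u)) := by group
      rw [e1]
      exact mul_mem (hG.comm_mem_center _ huQ _ (inv_mem ha₁Q))
        (mul_mem (inv_mem (hG.sq_mem_center _ ha₁Q)) h)
    · have hc : ⁅A.t*A.t, a₁⁆ ∈ centerOf G Q :=
        hG.comm_mem_center _ (by rw [← pow_two]; exact A.ht2) _ ha₁Q
      have e1 : A.t*(a₁*u)*A.t⁻¹*(a₁*u)⁻¹ =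
          u * ((A.t*A.t) * a₁ * (A.t*A.t)⁻¹) * u⁻¹ * a₁⁻¹ := by rw [hu]; group
      have e2 : (A.t*A.t) * a₁ * (A.t*A.t)⁻¹ = ⁅A.t*A.t, a₁⁆ * a₁ := by group
      rw [e1, e2]
      have e3 : u * (⁅A.t*A.t, a₁⁆ * a₁) * u⁻¹ * a₁⁻¹ =
          (u * ⁅A.t*A.t, a₁⁆) * a₁ * u⁻¹ * a₁⁻¹ := by group
      rw [e3, zcomm hc huQ]
      have e4 : ⁅A.t*A.t, a₁⁆ * u * a₁ * u⁻¹ * a₁⁻¹ = ⁅A.t*A.t, a₁⁆ * ⁅u, a₁⁆ := by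
        simp only [commutatorElement_def]; group
      rw [e4]
      exact mul_mem hc (hG.comm_mem_center _ huQ _ ha₁Q)

/-- Structure of a dent: with a `t`-fixed generator `a`, every element of `D` is
`z * a^i * (s a s⁻¹)^j`. -/
theorem dent_struct (A : Aux G Q) {D : Subgroup G} (hD : IsDent G Q D) :
    ∃ a, a ∈ D ∧ a ∉ centerOf G Q ∧ A.t * a * A.t⁻¹ * a⁻¹ ∈ centerOf G Q ∧
      ∀ x ∈ D, ∃ z ∈ centerOf G Q, ∃ i j : ℕ, x = z * a^i * (A.s*a*A.s⁻¹)^j := by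
  classical
  obtain ⟨a, haD, haZ, hafix⟩ := dent_tfix hG A hD
  have haQ : a ∈ Q := dent_leQ hG hD haD
  set b := A.s*a*A.s⁻¹ with hb
  have hbD : b ∈ D := hD.normal.conj_mem a haD A.s
  have hbQ : b ∈ Q := dent_leQ hG hD hbD
  set E := pairSubgroup hG haQ hbQ with hE
  have hZE : centerOf G Q ≤ E := fun z hz => ⟨z, hz, 0, 0, by simp⟩
  have haE : a ∈ E := ⟨1, one_mem _, 1, 0, by simp⟩
  have hbE : b ∈ E := ⟨1, one_mem _, 0, 1, by simp⟩
  have hED : E ≤ D := by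
    rintro g ⟨z, hz, i, j, rfl⟩
    exact mul_mem (mul_mem (dent_zle hG hD hz) (pow_mem haD i)) (pow_mem hbD j)
  have hEQ : E ≤ Q := le_trans hED (dent_leQ hG hD)
  have hZn : (centerOf G Q).Normal := znormal hG.normal
  have hss : A.s * A.s * A.s = 1 := by
    have := A.hs3; rwa [pow_succ, pow_succ, pow_one] at this
  have hsinv : A.s⁻¹ = A.s * A.s := by
    have h0 : (A.s*A.s)*A.s = 1 := by rw [← hss]
    exact (eq_inv_of_mul_eq_one_left h0).symm
  -- the third conjugate is in E
  have hw : a * b * (A.s*b*A.s⁻¹) ∈ centerOf G Q := by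
    have := fpf_triple hG A haQ
    rwa [← hb] at this
  have ha''E : A.s*b*A.s⁻¹ ∈ E := by
    have e1 : A.s*b*A.s⁻¹ = (a*b)⁻¹ * (a * b * (A.s*b*A.s⁻¹)) := by group
    rw [e1]
    exact mul_mem (inv_mem (mul_mem haE hbE)) (hZE hw)
  -- normality of E
  have hEnormal : E.Normal := by
    apply normal_of_conj hG A hEQ
    · intro q hq x hx
      have e1 : q*x*q⁻¹ = ⁅q, x⁆ * x := by group
      rw [e1]
      exact mul_mem (hZE (hG.comm_mem_center _ hq _ (hEQ hx))) hx
    · rintro x ⟨z, hz, i, j, rfl⟩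
      have e1 := conj_zij A.s z a b i j
      rw [e1]
      exact mul_mem (mul_mem (hZE (hZn.conj_mem z hz A.s)) (pow_mem (by rw [← hb]; exact hbE) i))
        (pow_mem ha''E j)
    · rintro x ⟨z, hz, i, j, rfl⟩
      have e1 := conj_zij A.t z a b i j
      rw [e1]
      have htaE : A.t*a*A.t⁻¹ ∈ E := by
        have e2 : A.t*a*A.t⁻¹ = (A.t*a*A.t⁻¹*a⁻¹) * a := by group
        rw [e2]
        exact mul_mem (hZE hafix) haE
      have htbE : A.t*b*A.t⁻¹ ∈ E := by
        have hq₁ : A.s*(A.t*A.s*A.t⁻¹) ∈ Q := A.hts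
        -- t b t⁻¹ = s⁻¹ * (q₁ * (t a t⁻¹) * q₁⁻¹) * s
        have e2 : A.t*b*A.t⁻¹ =
            A.s⁻¹ * ((A.s*(A.t*A.s*A.t⁻¹)) * (A.t*a*A.t⁻¹) * (A.s*(A.t*A.s*A.t⁻¹))⁻¹) * A.s := by
          rw [hb]; group
        have e3 : (A.s*(A.t*A.s*A.t⁻¹)) * (A.t*a*A.t⁻¹) * (A.s*(A.t*A.s*A.t⁻¹))⁻¹ =
            ⁅A.s*(A.t*A.s*A.t⁻¹), A.t*a*A.t⁻¹⁆ * (A.t*a*A.t⁻¹) := by group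
        have htaQ : A.t*a*A.t⁻¹ ∈ Q := hEQ htaE
        have hcz : ⁅A.s*(A.t*A.s*A.t⁻¹), A.t*a*A.t⁻¹⁆ ∈ centerOf G Q :=
          hG.comm_mem_center _ hq₁ _ htaQ
        rw [e2, e3]
        have e5 : A.s⁻¹ * (⁅A.s*(A.t*A.s*A.t⁻¹), A.t*a*A.t⁻¹⁆ * (A.t*a*A.t⁻¹)) * A.s =
            (A.s⁻¹ * (⁅A.s*(A.t*A.s*A.t⁻¹), A.t*a*A.t⁻¹⁆ * (A.t*a*A.t⁻¹*a⁻¹)) * A.s) *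
              (A.s⁻¹ * a * A.s) := by group
        rw [e5]
        have hmem1 : A.s⁻¹ * (⁅A.s*(A.t*A.s*A.t⁻¹), A.t*a*A.t⁻¹⁆ * (A.t*a*A.t⁻¹*a⁻¹)) * A.s ∈
            centerOf G Q := by
          have := hZn.conj_mem _ (mul_mem hcz hafix) A.s⁻¹
          simpa using this
        have e6 : A.s⁻¹ * a * A.s = A.s * b * A.s⁻¹ := by
          rw [hb]
          have h9 : A.s*(A.s*a*A.s⁻¹)*A.s⁻¹ =
              A.s⁻¹ * ((A.s*A.s*A.s) * a * (A.s*A.s*A.s)⁻¹) * A.s := by group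
          rw [h9, hss]; group
        rw [e6]
        exact mul_mem (hZE hmem1) ha''E
      exact mul_mem (mul_mem (hZE (hZn.conj_mem z hz A.t)) (pow_mem htaE i))
        (pow_mem htbE j)
  -- minimality gives E = D
  have hZltE : centerOf G Q < E := lt_of_le_of_ne hZE (fun h => haZ (h ▸ haE))
  have hedeq : E = D := hD.minimal E hEnormal hZltE hED
  exact ⟨a, haD, haZ, hafix, fun x hx => by
    have : x ∈ E := hedeq ▸ hx
    exact this⟩

/-- Every element of a dent decomposes over ANY element `b ∈ D \ Z`. -/
theorem dent_cover (A : Aux G Q) {D : Subgroup G} (hD : IsDent G Q D) {b : G}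
    (hbD : b ∈ D) (hbZ : b ∉ centerOf G Q) :
    ∀ x ∈ D, ∃ z ∈ centerOf G Q, ∃ i j : ℕ, x = z * b^i * (A.s*b*A.s⁻¹)^j := by
  obtain ⟨a, haD, haZ, hafix, hdec⟩ := dent_struct hG A hD
  have haQ : a ∈ Q := dent_leQ hG hD haD
  have hbQ : b ∈ Q := dent_leQ hG hD hbD
  have ha'Q : A.s*a*A.s⁻¹ ∈ Q := hG.normal.conj_mem a haQ A.s
  have hb'Q : A.s*b*A.s⁻¹ ∈ Q := hG.normal.conj_mem b hbQ A.s
  have hZn : (centerOf G Q).Normal := znormal hG.normal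
  set S := pairSubgroup hG hbQ hb'Q with hS
  have hZS : centerOf G Q ≤ S := fun z hz => ⟨z, hz, 0, 0, by simp⟩
  have hbS : b ∈ S := ⟨1, one_mem _, 1, 0, by simp⟩
  have hb'S : A.s*b*A.s⁻¹ ∈ S := ⟨1, one_mem _, 0, 1, by simp⟩
  -- the triple product for a
  have hw₀ : a * (A.s*a*A.s⁻¹) * (A.s*(A.s*a*A.s⁻¹)*A.s⁻¹) ∈ centerOf G Q :=
    fpf_triple hG A haQ
  -- decompose b over a and reduce exponents mod 2
  obtain ⟨z, hz, i, j, hb0⟩ := hdec b hbD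
  obtain ⟨z₁, hz₁, e₁⟩ := pow_mod2 hG haQ i
  obtain ⟨z₂, hz₂, e₂⟩ := pow_mod2 hG ha'Q j
  have hbw : b = (z * z₁ * z₂) * a^(i % 2) * (A.s*a*A.s⁻¹)^(j % 2) := by
    calc b = z * a^i * (A.s*a*A.s⁻¹)^j := hb0
      _ = z * (z₁ * a^(i%2)) * (z₂ * (A.s*a*A.s⁻¹)^(j%2)) := by rw [← e₁, ← e₂]
      _ = z * z₁ * (a^(i%2) * z₂) * (A.s*a*A.s⁻¹)^(j%2) := by group
      _ = z * z₁ * (z₂ * a^(i%2)) * (A.s*a*A.s⁻¹)^(j%2) := by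
            rw [zcomm hz₂ (pow_mem haQ (i%2))]
      _ = (z * z₁ * z₂) * a^(i % 2) * (A.s*a*A.s⁻¹)^(j % 2) := by group
  set w := z * z₁ * z₂ with hwdef
  have hwZ : w ∈ centerOf G Q := mul_mem (mul_mem hz hz₁) hz₂
  have hwsZ : A.s*w*A.s⁻¹ ∈ centerOf G Q := hZn.conj_mem w hwZ A.s
  -- main claim: a and a' lie in S
  have key : a ∈ S ∧ A.s*a*A.s⁻¹ ∈ S := by
    rcases Nat.mod_two_eq_zero_or_one i with hi | hi <;>
      rcases Nat.mod_two_eq_zero_or_one j with hj | hj <;>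
      rw [hi, hj] at hbw <;>
      simp only [pow_zero, pow_one, mul_one] at hbw
    · -- (0,0): contradiction, b ∈ Z
      exact absurd (hbw ▸ hwZ) hbZ
    · -- (0,1): b = w * a'
      have ha'S : A.s*a*A.s⁻¹ ∈ S := by
        have e : A.s*a*A.s⁻¹ = w⁻¹ * b := by rw [hbw]; group
        rw [e]; exact mul_mem (hZS (inv_mem hwZ)) hbS
      have hb' : A.s*b*A.s⁻¹ = (A.s*w*A.s⁻¹) * (A.s*(A.s*a*A.s⁻¹)*A.s⁻¹) := by
        rw [hbw]; group
      have ha''S : A.s*(A.s*a*A.s⁻¹)*A.s⁻¹ ∈ S := by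
        have e : A.s*(A.s*a*A.s⁻¹)*A.s⁻¹ = (A.s*w*A.s⁻¹)⁻¹ * (A.s*b*A.s⁻¹) := by
          rw [hb']; group
        rw [e]; exact mul_mem (hZS (inv_mem hwsZ)) hb'S
      have haS : a ∈ S := by
        have e : a = (a * (A.s*a*A.s⁻¹) * (A.s*(A.s*a*A.s⁻¹)*A.s⁻¹)) *
            (A.s*(A.s*a*A.s⁻¹)*A.s⁻¹)⁻¹ * (A.s*a*A.s⁻¹)⁻¹ := by group
        rw [e]
        exact mul_mem (mul_mem (hZS hw₀) (inv_mem ha''S)) (inv_mem ha'S)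
      exact ⟨haS, ha'S⟩
    · -- (1,0): b = w * a
      have haS : a ∈ S := by
        have e : a = w⁻¹ * b := by rw [hbw]; group
        rw [e]; exact mul_mem (hZS (inv_mem hwZ)) hbS
      have ha'S : A.s*a*A.s⁻¹ ∈ S := by
        have e : A.s*a*A.s⁻¹ = (A.s*w*A.s⁻¹)⁻¹ * (A.s*b*A.s⁻¹) := by
          rw [hbw]; group
        rw [e]; exact mul_mem (hZS (inv_mem hwsZ)) hb'S
      exact ⟨haS, ha'S⟩
    · -- (1,1): b = w * a * a'
      have hb' : A.s*b*A.s⁻¹ =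
          (A.s*w*A.s⁻¹) * (A.s*a*A.s⁻¹) * (A.s*(A.s*a*A.s⁻¹)*A.s⁻¹) := by
        rw [hbw]; group
      have haS : a ∈ S := by
        have e : a = (a * (A.s*a*A.s⁻¹) * (A.s*(A.s*a*A.s⁻¹)*A.s⁻¹)) *
            ((A.s*w*A.s⁻¹) * (A.s*a*A.s⁻¹) * (A.s*(A.s*a*A.s⁻¹)*A.s⁻¹))⁻¹ *
            (A.s*w*A.s⁻¹) := by group
        rw [e, ← hb']
        exact mul_mem (mul_mem (hZS hw₀) (inv_mem hb'S)) (hZS hwsZ)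
      have ha'S : A.s*a*A.s⁻¹ ∈ S := by
        have e : A.s*a*A.s⁻¹ = a⁻¹ * w⁻¹ * b := by rw [hbw]; group
        rw [e]
        exact mul_mem (mul_mem (inv_mem haS) (hZS (inv_mem hwZ))) hbS
      exact ⟨haS, ha'S⟩
  -- conclude
  intro x hx
  obtain ⟨z', hz', i', j', hx0⟩ := hdec x hx
  have : x ∈ S := by
    rw [hx0]
    exact mul_mem (mul_mem (hZS hz') (pow_mem key.1 i')) (pow_mem key.2 j')
  exact this

/-- Nondegeneracy: if two dents fail to commute, then no pair of elements
outside `Z` commutes. -/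
theorem nondeg (A : Aux G Q) {D E : Subgroup G} (hD : IsDent G Q D) (hE : IsDent G Q E)
    (hnc : ¬DentsCommute G D E) :
    ∀ d ∈ D, d ∉ centerOf G Q → ∀ e ∈ E, e ∉ centerOf G Q → ⁅d, e⁆ ≠ 1 := by
  intro a haD haZ b hbE hbZ hab
  apply hnc
  have haQ : a ∈ Q := dent_leQ hG hD haD
  have hbQ : b ∈ Q := dent_leQ hG hE hbE
  have hss : A.s * A.s * A.s = 1 := by
    have := A.hs3; rwa [pow_succ, pow_succ, pow_one] at this
  have hZn : (centerOf G Q).Normal := znormal hG.normal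
  have ha'Q : A.s*a*A.s⁻¹ ∈ Q := hG.normal.conj_mem a haQ A.s
  have hb'Q : A.s*b*A.s⁻¹ ∈ Q := hG.normal.conj_mem b hbQ A.s
  have ha''Q : A.s*(A.s*a*A.s⁻¹)*A.s⁻¹ ∈ Q := hG.normal.conj_mem _ ha'Q A.s
  have hb''Q : A.s*(A.s*b*A.s⁻¹)*A.s⁻¹ ∈ Q := hG.normal.conj_mem _ hb'Q A.s
  have hwa : a * (A.s*a*A.s⁻¹) * (A.s*(A.s*a*A.s⁻¹)*A.s⁻¹) ∈ centerOf G Q :=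
    fpf_triple hG A haQ
  have hwb : b * (A.s*b*A.s⁻¹) * (A.s*(A.s*b*A.s⁻¹)*A.s⁻¹) ∈ centerOf G Q :=
    fpf_triple hG A hbQ
  -- conjugates of the basic commutator
  have h11 : ⁅A.s*a*A.s⁻¹, A.s*b*A.s⁻¹⁆ = 1 := by
    rw [← comm_conj, hab]; group
  set x := ⁅a, A.s*b*A.s⁻¹⁆ with hx
  have hxZ : x ∈ centerOf G Q := hG.comm_mem_center _ haQ _ hb'Q
  have h2 : ⁅A.s*a*A.s⁻¹, A.s*(A.s*b*A.s⁻¹)*A.s⁻¹⁆ = A.s*x*A.s⁻¹ := by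
    rw [hx, ← comm_conj]
  -- ⁅a', b⁆ = s x s⁻¹  via b = w_b * b''⁻¹ * b'⁻¹
  have hbexp : b = (b * (A.s*b*A.s⁻¹) * (A.s*(A.s*b*A.s⁻¹)*A.s⁻¹)) *
      (A.s*(A.s*b*A.s⁻¹)*A.s⁻¹)⁻¹ * (A.s*b*A.s⁻¹)⁻¹ := by group
  have h3 : ⁅A.s*a*A.s⁻¹, b⁆ = A.s*x*A.s⁻¹ := by
    conv_lhs => rw [hbexp]
    rw [comm_mul_right hG ha'Q (mul_mem (zle hwb) (inv_mem hb''Q)) (inv_mem hb'Q)]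
    rw [comm_mul_right hG ha'Q (zle hwb) (inv_mem hb''Q)]
    rw [comm_z_right hG ha'Q hwb]
    rw [comm_inv_right hG ha'Q hb''Q, comm_inv_right hG ha'Q hb'Q]
    rw [h2, h11]
    group
  -- ⁅a'', b⁆ two ways
  have haexp : A.s*(A.s*a*A.s⁻¹)*A.s⁻¹ = (A.s*a*A.s⁻¹)⁻¹ * a⁻¹ *
      (a * (A.s*a*A.s⁻¹) * (A.s*(A.s*a*A.s⁻¹)*A.s⁻¹)) := by group
  have h4 : ⁅A.s*(A.s*a*A.s⁻¹)*A.s⁻¹, b⁆ = A.s*x*A.s⁻¹ := by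
    conv_lhs => rw [haexp]
    rw [comm_mul_left hG (mul_mem (inv_mem ha'Q) (inv_mem haQ)) (zle hwa) hbQ]
    rw [comm_z_left hG hbQ hwa]
    rw [comm_mul_left hG (inv_mem ha'Q) (inv_mem haQ) hbQ]
    rw [comm_inv_left hG ha'Q hbQ, comm_inv_left hG haQ hbQ]
    rw [h3, hab]
    group
  have h5 : ⁅A.s*(A.s*a*A.s⁻¹)*A.s⁻¹, b⁆ = A.s*(A.s*x*A.s⁻¹)*A.s⁻¹ := by
    have e1 : b = A.s*(A.s*(A.s*b*A.s⁻¹)*A.s⁻¹)*A.s⁻¹ := by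
      have : A.s*(A.s*(A.s*b*A.s⁻¹)*A.s⁻¹)*A.s⁻¹ =
          (A.s*A.s*A.s) * b * (A.s*A.s*A.s)⁻¹ := by group
      rw [this, hss]; group
    conv_lhs => rw [e1]
    rw [← comm_conj, h2]
  -- conclude x = 1
  have hfix : A.s * (A.s*x*A.s⁻¹) * A.s⁻¹ = A.s*x*A.s⁻¹ := by rw [← h5, h4]
  have hx1 : A.s*x*A.s⁻¹ = 1 := A.hsfpf _ (zle (hZn.conj_mem x hxZ A.s)) hfix
  have hx0 : x = 1 := by
    have := congrArg (fun g => A.s⁻¹ * g * A.s) hx1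
    simpa [mul_assoc] using this
  -- the four basic commutation relations
  have c_ab : Commute a b := comm_eq_one_iff.mp hab
  have c_ab' : Commute a (A.s*b*A.s⁻¹) := comm_eq_one_iff.mp (hx ▸ hx0)
  have c_a'b : Commute (A.s*a*A.s⁻¹) b := by
    apply comm_eq_one_iff.mp
    rw [h3, hx0]; group
  have c_a'b' : Commute (A.s*a*A.s⁻¹) (A.s*b*A.s⁻¹) := comm_eq_one_iff.mp h11
  -- now all of D commutes with all of E
  intro p hp q hq
  obtain ⟨z, hz, i, j, rfl⟩ := dent_cover hG A hD haD haZ p hp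
  obtain ⟨y, hy, k, l, rfl⟩ := dent_cover hG A hE hbE hbZ q hq
  have hcz : ∀ u ∈ Q, ∀ v ∈ centerOf G Q, Commute u v := fun u hu v hv => zcomm hv hu
  have hyQ : y ∈ Q := zle hy
  have hzQ : z ∈ Q := zle hz
  have c1 : Commute z (y * b^k * (A.s*b*A.s⁻¹)^l) :=
    (((hcz _ hyQ _ hz).symm.mul_right (hcz _ (pow_mem hbQ k) _ hz).symm).mul_right
      (hcz _ (pow_mem hb'Q l) _ hz).symm)
  have c2 : Commute (a^i) (y * b^k * (A.s*b*A.s⁻¹)^l) :=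
    (((hcz _ (pow_mem haQ i) _ hy).mul_right (c_ab.pow_pow i k)).mul_right
      (c_ab'.pow_pow i l))
  have c3 : Commute ((A.s*a*A.s⁻¹)^j) (y * b^k * (A.s*b*A.s⁻¹)^l) :=
    (((hcz _ (pow_mem ha'Q j) _ hy).mul_right (c_a'b.pow_pow j k)).mul_right
      (c_a'b'.pow_pow j l))
  exact ((c1.mul_left c2).mul_left c3)

end gen

section main
variable (hG : IsBiextraspecial G Q m)

omit hG in
theorem commute_iff_le {D E : Subgroup G} :
    DentsCommute G D E ↔ E ≤ Subgroup.centralizer (D : Set G) := by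
  constructor
  · intro h e he
    rw [Subgroup.mem_centralizer_iff]
    intro d hd
    exact h d hd e he
  · intro h d hd e he
    exact Subgroup.mem_centralizer_iff.mp (h he) d hd

omit hG in
theorem commute_of_le {D X Y W : Subgroup G} (hX : DentsCommute G D X)
    (hY : DentsCommute G D Y) (hW : W ≤ X ⊔ Y) : DentsCommute G D W := by
  rw [commute_iff_le] at hX hY ⊢
  exact le_trans hW (sup_le hX hY)

include hG

/-- The hard case: a dent cannot fail to commute with all three of `D₁,D₂,D₃`. -/
theorem hard_case {D₁ D₂ D₃ D : Subgroup G} (hdiag : IsDiagonal G Q D₁ D₂ D₃)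
    (hD : IsDent G Q D) (hnc₁ : ¬DentsCommute G D D₁) (hnc₂ : ¬DentsCommute G D D₂)
    (hnc₃ : ¬DentsCommute G D D₃) : False := by
  obtain ⟨h₁, h₂, h₃, h12, h31, h32, hle⟩ := hdiag
  obtain ⟨A⟩ := existsAux hG
  haveI hZfin : Finite (centerOf G Q) := finiteZ hG
  have hZn : (centerOf G Q).Normal := znormal hG.normal
  obtain ⟨d, hdD, hdZ, hdfix⟩ := dent_tfix hG A hD
  obtain ⟨e, heD, heZ, hefix⟩ := dent_tfix hG A h₃
  have hdQ : d ∈ Q := dent_leQ hG hD hdD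
  have heQ : e ∈ Q := dent_leQ hG h₃ heD
  obtain ⟨f₁, hf₁, f₂, hf₂, hef⟩ := mem_sup_decomp hG h₂.normal (hle heD)
  have hf₁Q : f₁ ∈ Q := dent_leQ hG h₁ hf₁
  have hf₂Q : f₂ ∈ Q := dent_leQ hG h₂ hf₂
  have hf₁Z : f₁ ∉ centerOf G Q := by
    intro h
    apply heZ
    have : e ∈ D₂ := hef ▸ mul_mem (dent_zle hG h₂ h) hf₂
    exact dents_inter hG h₃ h₂ h32 heD this
  have hf₂Z : f₂ ∉ centerOf G Q := by
    intro h
    apply heZ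
    have : e ∈ D₁ := hef ▸ mul_mem hf₁ (dent_zle hG h₁ h)
    exact dents_inter hG h₃ h₁ h31 heD this
  -- τ-fixedness of f₁ and f₂ mod Z
  have hg : (A.t*f₁*A.t⁻¹) * (A.t*f₂*A.t⁻¹) = (A.t*e*A.t⁻¹*e⁻¹) * (f₁ * f₂) := by
    rw [hef]; group
  have hf₁fix : A.t*f₁*A.t⁻¹*f₁⁻¹ ∈ centerOf G Q := by
    have hmem : f₁⁻¹ * (A.t*f₁*A.t⁻¹) ∈ centerOf G Q := by
      apply dents_inter hG h₁ h₂ h12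
      · exact mul_mem (inv_mem hf₁) (h₁.normal.conj_mem f₁ hf₁ A.t)
      · have e1 : f₁⁻¹ * (A.t*f₁*A.t⁻¹) =
            (f₁⁻¹ * (A.t*e*A.t⁻¹*e⁻¹) * f₁) * (f₂ * (A.t*f₂*A.t⁻¹)⁻¹) := by
          have e0 : A.t*f₁*A.t⁻¹ =
              ((A.t*e*A.t⁻¹*e⁻¹) * (f₁ * f₂)) * (A.t*f₂*A.t⁻¹)⁻¹ := by
            rw [← hg]; group
          rw [e0]; group
        rw [e1, zconj' hefix hf₁Q]
        exact mul_mem (dent_zle hG h₂ hefix)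
          (mul_mem hf₂ (inv_mem (h₂.normal.conj_mem f₂ hf₂ A.t)))
    have e2 : A.t*f₁*A.t⁻¹*f₁⁻¹ = f₁ * (f₁⁻¹ * (A.t*f₁*A.t⁻¹)) * f₁⁻¹ := by group
    rw [e2, zconj hmem hf₁Q]
    exact hmem
  -- the three commutator values
  have hγeq : ⁅d, e⁆ = ⁅d, f₁⁆ * ⁅d, f₂⁆ := by
    rw [hef]; exact comm_mul_right hG hdQ hf₁Q hf₂Q
  have hα1 : ⁅d, f₁⁆ ≠ 1 := nondeg hG A hD h₁ hnc₁ d hdD hdZ f₁ hf₁ hf₁Z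
  have hβ1 : ⁅d, f₂⁆ ≠ 1 := nondeg hG A hD h₂ hnc₂ d hdD hdZ f₂ hf₂ hf₂Z
  have hγ1 : ⁅d, e⁆ ≠ 1 := nondeg hG A hD h₃ hnc₃ d hdD hdZ e heD heZ
  have hαZ : ⁅d, f₁⁆ ∈ centerOf G Q := hG.comm_mem_center _ hdQ _ hf₁Q
  have hβZ : ⁅d, f₂⁆ ∈ centerOf G Q := hG.comm_mem_center _ hdQ _ hf₂Q
  -- τ-fixedness of the commutator values
  have hdt : A.t*d*A.t⁻¹ = (A.t*d*A.t⁻¹*d⁻¹) * d := by group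
  have hconjfix : ∀ f : G, f ∈ Q → A.t*f*A.t⁻¹*f⁻¹ ∈ centerOf G Q →
      A.t * ⁅d, f⁆ * A.t⁻¹ = ⁅d, f⁆ := by
    intro f hfQ hffix
    rw [comm_conj A.t d f]
    have hft : A.t*f*A.t⁻¹ = (A.t*f*A.t⁻¹*f⁻¹) * f := by group
    rw [hdt, hft]
    rw [comm_mul_left hG (zle hdfix) hdQ (mul_mem (zle hffix) hfQ)]
    rw [comm_z_left hG (mul_mem (zle hffix) hfQ) hdfix]
    rw [comm_mul_right hG hdQ (zle hffix) hfQ]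
    rw [comm_z_right hG hdQ hffix]
    group
  have hαfix : A.t * ⁅d, f₁⁆ * A.t⁻¹ = ⁅d, f₁⁆ := hconjfix f₁ hf₁Q hf₁fix
  have hγfix : A.t * ⁅d, e⁆ * A.t⁻¹ = ⁅d, e⁆ := hconjfix e heQ hefix
  have hβexp : ⁅d, f₂⁆ = ⁅d, f₁⁆⁻¹ * ⁅d, e⁆ := by rw [hγeq]; group
  have hβfix : A.t * ⁅d, f₂⁆ * A.t⁻¹ = ⁅d, f₂⁆ := by
    rw [hβexp]
    have e1 : A.t * (⁅d, f₁⁆⁻¹ * ⁅d, e⁆) * A.t⁻¹ =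
        (A.t * ⁅d, f₁⁆ * A.t⁻¹)⁻¹ * (A.t * ⁅d, e⁆ * A.t⁻¹) := by group
    rw [e1, hαfix, hγfix]
  -- final contradiction
  by_cases hab : ⁅d, f₁⁆ = ⁅d, f₂⁆
  · apply hγ1
    rw [hγeq, ← hab]
    exact hG.center_exponent _ hαZ
  · -- Z = {1, α, β, αβ} and t centralizes it
    have habm : ⁅d, f₁⁆ * ⁅d, f₂⁆ ≠ 1 := by
      intro h
      apply hab
      rw [← zinv hG hβZ]
      exact eq_inv_of_mul_eq_one_left h
    set S : Set G := {1, ⁅d, f₁⁆, ⁅d, f₂⁆, ⁅d, f₁⁆ * ⁅d, f₂⁆} with hSdef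
    have hsub : S ⊆ (centerOf G Q : Set G) := by
      rintro x (rfl | rfl | rfl | rfl)
      · exact one_mem _
      · exact hαZ
      · exact hβZ
      · exact mul_mem hαZ hβZ
    have hScard : S.ncard = 4 := by
      have d1 : (1:G) ∉ ({⁅d, f₂⁆, ⁅d, f₁⁆ * ⁅d, f₂⁆} : Set G) := by
        simp only [Set.mem_insert_iff, Set.mem_singleton_iff, not_or]
        exact ⟨fun h => hβ1 h.symm, fun h => habm h.symm⟩
      have d0 : (1:G) ∉ ({⁅d, f₁⁆, ⁅d, f₂⁆, ⁅d, f₁⁆ * ⁅d, f₂⁆} : Set G) := by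
        simp only [Set.mem_insert_iff, Set.mem_singleton_iff, not_or]
        exact ⟨fun h => hα1 h.symm, fun h => hβ1 h.symm, fun h => habm h.symm⟩
      have d2 : ⁅d, f₁⁆ ∉ ({⁅d, f₂⁆, ⁅d, f₁⁆ * ⁅d, f₂⁆} : Set G) := by
        simp only [Set.mem_insert_iff, Set.mem_singleton_iff, not_or]
        exact ⟨hab, fun h => hβ1 (left_eq_mul.mp h)⟩
      have d3 : ⁅d, f₂⁆ ∉ ({⁅d, f₁⁆ * ⁅d, f₂⁆} : Set G) := by
        simp only [Set.mem_singleton_iff]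
        exact fun h => hα1 (right_eq_mul.mp h)
      rw [hSdef]
      rw [Set.ncard_insert_of_notMem d0 (Set.toFinite _),
        Set.ncard_insert_of_notMem d2 (Set.toFinite _),
        Set.ncard_insert_of_notMem d3 (Set.toFinite _),
        Set.ncard_singleton]
    have hZcard : (centerOf G Q : Set G).ncard = 4 := by
      rw [← Nat.card_coe_set_eq, SetLike.coe_sort_coe]
      exact hG.card_center
    have heq : S = (centerOf G Q : Set G) :=
      Set.eq_of_subset_of_ncard_le hsub (by rw [hScard, hZcard]) (Set.toFinite _)
    apply A.htQ
    apply hG.center_faithful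
    intro z hz
    have hzS : z ∈ S := by
      rw [heq]
      exact hz
    rcases hzS with rfl | rfl | rfl | rfl
    · group
    · exact hαfix
    · exact hβfix
    · have e1 : A.t * (⁅d, f₁⁆ * ⁅d, f₂⁆) * A.t⁻¹ =
          (A.t * ⁅d, f₁⁆ * A.t⁻¹) * (A.t * ⁅d, f₂⁆ * A.t⁻¹) := by group
      rw [e1, hαfix, hβfix]

end main
end S6

/-- for distinct dents `D₁, D₂` with diagonal dent `D₃`, any dent `D`
commutes with all three of them or with exactly one of them. -/
theorem stmt6 (G : Type*) [Group G] (Q : Subgroup G) (m : ℕ)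
    (hG : IsBiextraspecial G Q m)
    (D₁ D₂ D₃ : Subgroup G) (hdiag : IsDiagonal G Q D₁ D₂ D₃)
    (D : Subgroup G) (hD : IsDent G Q D) :
    (DentsCommute G D D₁ ∧ DentsCommute G D D₂ ∧ DentsCommute G D D₃) ∨
      (DentsCommute G D D₁ ∧ ¬DentsCommute G D D₂ ∧ ¬DentsCommute G D D₃) ∨
      (¬DentsCommute G D D₁ ∧ DentsCommute G D D₂ ∧ ¬DentsCommute G D D₃) ∨
      (¬DentsCommute G D D₁ ∧ ¬DentsCommute G D D₂ ∧ DentsCommute G D D₃) := by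
  obtain ⟨h₁, h₂, h₃, h12, h31, h32, hle⟩ := hdiag
  have hle2 : D₂ ≤ D₁ ⊔ D₃ := S6.diag_sym hG h₁ h₂ h₃ h12 h31 h32 hle
  have hle1 : D₁ ≤ D₂ ⊔ D₃ :=
    S6.diag_sym hG h₂ h₁ h₃ (Ne.symm h12) h32 h31 (hle.trans (le_of_eq (sup_comm _ _)))
  by_cases hc1 : DentsCommute G D D₁ <;> by_cases hc2 : DentsCommute G D D₂
  · exact Or.inl ⟨hc1, hc2, S6.commute_of_le hc1 hc2 hle⟩
  · exact Or.inr (Or.inl ⟨hc1, hc2, fun hc3 => hc2 (S6.commute_of_le hc1 hc3 hle2)⟩)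
  · exact Or.inr (Or.inr (Or.inl ⟨hc1, hc2, fun hc3 => hc1 (S6.commute_of_le hc2 hc3 hle1)⟩))
  · refine Or.inr (Or.inr (Or.inr ⟨hc1, hc2, ?_⟩))
    by_contra hc3
    exact S6.hard_case hG ⟨h₁, h₂, h₃, h12, h31, h32, hle⟩ hD hc1 hc2 hc3
end

section
/- Let G be a biextraspecial group, D₁ ≠ D₂ dents, and D₃ their diagonal dent. If [D₁,D₂] = 1 then the number of singular dents among {D₁,D₂,D₃} is odd (1 or 3); if [D₁,D₂] ≠ 1 then the number of non-singular dents among {D₁,D₂,D₃} is odd (1 or 3). -/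
open Pointwise


open scoped commutatorElement

namespace Bx

variable {G : Type*} [Group G] {Q : Subgroup G} {m : ℕ}

theorem Zle : centerOf G Q ≤ Q := inf_le_right

theorem Zcomm {z q : G} (hz : z ∈ centerOf G Q) (hq : q ∈ Q) : z * q = q * z := by
  have h1 : z ∈ Subgroup.centralizer (Q : Set G) := hz.1
  rw [Subgroup.mem_centralizer_iff] at h1
  exact (h1 q hq).symm

/-- elements of the centre commute with each other -/
theorem ZcommZ {z w : G} (hz : z ∈ centerOf G Q) (hw : w ∈ centerOf G Q) : z * w = w * z :=
  Zcomm hz (Zle hw)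

theorem Znormal (hG : IsBiextraspecial G Q m) : (centerOf G Q).Normal := by
  constructor
  intro z hz γ
  have hcen : γ * z * γ⁻¹ ∈ Subgroup.centralizer (Q : Set G) := by
    rw [Subgroup.mem_centralizer_iff]
    intro q hq
    have h1 : γ⁻¹ * q * γ ∈ Q := by
      have := hG.normal.conj_mem q hq γ⁻¹
      simpa using this
    have h2 := Zcomm hz h1
    calc q * (γ * z * γ⁻¹) = γ * ((γ⁻¹ * q * γ) * z) * γ⁻¹ := by group
      _ = γ * (z * (γ⁻¹ * q * γ)) * γ⁻¹ := by rw [← h2]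
      _ = γ * z * γ⁻¹ * q := by group
  exact Subgroup.mem_inf.mpr ⟨hcen, hG.normal.conj_mem z (Zle hz) γ⟩


theorem finiteQ (hG : IsBiextraspecial G Q m) : Finite Q :=
  Nat.finite_of_card_ne_zero (by rw [hG.card_Q]; positivity)

theorem finiteG (hG : IsBiextraspecial G Q m) : Finite G := by
  haveI := hG.normal
  haveI := finiteQ hG
  haveI : Finite (G ⧸ Q) := by
    obtain ⟨e⟩ := hG.quot_iso
    exact Finite.of_equiv _ e.symm.toEquiv
  exact Finite.of_subgroup_quotient (H := Q)

theorem cardG (hG : IsBiextraspecial G Q m) : Nat.card G = 3 * 2 ^ (3 + 2 * m) := by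
  haveI := hG.normal
  obtain ⟨e⟩ := hG.quot_iso
  have h1 : Nat.card (G ⧸ Q) = 6 := by
    rw [Nat.card_congr e.toEquiv]
    simp [Nat.card_eq_fintype_card, Fintype.card_perm]
    rfl
  rw [Subgroup.card_eq_card_quotient_mul_card_subgroup Q, h1, hG.card_Q]
  ring

/-- auxiliary data: a chosen order-3 element `g` and "reflection" `t`. -/
structure Aux (G : Type*) [Group G] (Q : Subgroup G) (g t : G) : Prop where
  hg3 : g ^ 3 = 1
  hord : orderOf g = 3
  hgQ : g ∉ Q
  htQ : t ∉ Q
  ht2 : t * t ∈ Q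
  htgtg : t * g * t⁻¹ * g ∈ Q
  hgen : ∀ γ : G, ∃ q ∈ Q, ∃ i j : ℕ, γ = q * g ^ i * t ^ j

theorem perm_key : ∀ d : Equiv.Perm (Fin 3), d^3 = 1 → d ≠ 1 →
    ∃ τ : Equiv.Perm (Fin 3), τ^2 = 1 ∧ τ * d * τ⁻¹ = d⁻¹ ∧ τ ≠ 1 ∧
      ∀ x : Equiv.Perm (Fin 3), x = 1 ∨ x = d ∨ x = d^2 ∨ x = τ ∨ x = d*τ ∨ x = d^2*τ := by
  decide

theorem aux_exists (hG : IsBiextraspecial G Q m) : ∃ g t : G, Aux G Q g t := by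
  haveI := hG.normal
  haveI hfin := finiteG hG
  obtain ⟨e⟩ := hG.quot_iso
  obtain ⟨g₀, hg₀⟩ := QuotientGroup.mk_surjective (s := Q) (e.symm (finRotate 3))
  set M : ℕ := 2 ^ (3 + 2 * m) with hM
  set g : G := g₀ ^ M with hgdef
  have hg3 : g ^ 3 = 1 := by
    rw [hgdef, ← pow_mul, mul_comm, ← cardG hG]
    exact pow_card_eq_one'
  have hmk : ∀ x : G, (QuotientGroup.mk x : G ⧸ Q) = 1 ↔ x ∈ Q :=
    fun x => QuotientGroup.eq_one_iff x
  have hgbar : (QuotientGroup.mk g : G ⧸ Q) = (QuotientGroup.mk g₀ : G ⧸ Q) ^ M := by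
    rw [hgdef]; rfl
  have hgQ : g ∉ Q := by
    intro hg
    have h1 : ((QuotientGroup.mk g₀ : G ⧸ Q)) ^ M = 1 := by rw [← hgbar, hmk]; exact hg
    rw [hg₀] at h1
    have h2 : (finRotate 3) ^ M = 1 := by
      have := congrArg e h1
      simpa using this
    have h3 : orderOf (finRotate 3) ∣ M := orderOf_dvd_of_pow_eq_one h2
    have h4 : orderOf (finRotate 3) = 3 := by
      haveI : Fact (Nat.Prime 3) := ⟨by norm_num⟩
      exact orderOf_eq_prime (by decide) (by decide)
    rw [h4, hM] at h3
    have h5 : (3 : ℕ) ∣ 2 := (Nat.Prime.dvd_of_dvd_pow (by norm_num) h3)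
    omega
  have hgne : g ≠ 1 := fun h => hgQ (h ▸ Q.one_mem)
  haveI : Fact (Nat.Prime 3) := ⟨by norm_num⟩
  have hord : orderOf g = 3 := orderOf_eq_prime hg3 hgne
  -- now pick t
  set d : Equiv.Perm (Fin 3) := e (QuotientGroup.mk g) with hd
  have hd3 : d ^ 3 = 1 := by
    rw [hd, ← map_pow, ← QuotientGroup.mk_pow, hg3]
    simp
  have hdne : d ≠ 1 := by
    intro h
    apply hgQ
    rw [← hmk]
    exact e.injective (by simpa [← hd] using h)
  obtain ⟨τ, hτ2, hτd, hτne, hτgen⟩ := perm_key d hd3 hdne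
  obtain ⟨t, ht⟩ := QuotientGroup.mk_surjective (s := Q) (e.symm τ)
  have htbar : e (QuotientGroup.mk t) = τ := by rw [ht]; simp
  refine ⟨g, t, hg3, hord, hgQ, ?_, ?_, ?_, ?_⟩
  · intro hin
    apply hτne
    rw [← htbar, (hmk t).2 hin]
    simp
  · rw [← hmk, ← sq]
    apply e.injective
    simp only [QuotientGroup.mk_pow, map_pow, map_one, htbar]
    simpa using hτ2
  · rw [← hmk]
    apply e.injective
    have : (QuotientGroup.mk (t * g * t⁻¹ * g) : G ⧸ Q)
        = (QuotientGroup.mk t) * (QuotientGroup.mk g) * (QuotientGroup.mk t)⁻¹ * QuotientGroup.mk g := by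
      rfl
    rw [this]
    simp only [map_mul, map_inv, htbar, map_one]
    rw [hτd]
    exact inv_mul_cancel d
  · intro γ
    rcases hτgen (e (QuotientGroup.mk γ)) with h | h | h | h | h | h
    · refine ⟨γ * (g ^ 0 * t ^ 0)⁻¹, ?_, 0, 0, by group⟩
      rw [← hmk]
      apply e.injective
      simp only [QuotientGroup.mk_mul, QuotientGroup.mk_inv, QuotientGroup.mk_pow,
        map_mul, map_inv, map_pow, map_one, htbar, ← hd, h]
      group
    · refine ⟨γ * (g ^ 1 * t ^ 0)⁻¹, ?_, 1, 0, by group⟩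
      rw [← hmk]
      apply e.injective
      simp only [QuotientGroup.mk_mul, QuotientGroup.mk_inv, QuotientGroup.mk_pow,
        map_mul, map_inv, map_pow, map_one, htbar, ← hd, h]
      group
    · refine ⟨γ * (g ^ 2 * t ^ 0)⁻¹, ?_, 2, 0, by group⟩
      rw [← hmk]
      apply e.injective
      simp only [QuotientGroup.mk_mul, QuotientGroup.mk_inv, QuotientGroup.mk_pow,
        map_mul, map_inv, map_pow, map_one, htbar, ← hd, h]
      group
    · refine ⟨γ * (g ^ 0 * t ^ 1)⁻¹, ?_, 0, 1, by group⟩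
      rw [← hmk]
      apply e.injective
      simp only [QuotientGroup.mk_mul, QuotientGroup.mk_inv, QuotientGroup.mk_pow,
        map_mul, map_inv, map_pow, map_one, htbar, ← hd, h]
      group
    · refine ⟨γ * (g ^ 1 * t ^ 1)⁻¹, ?_, 1, 1, by group⟩
      rw [← hmk]
      apply e.injective
      simp only [QuotientGroup.mk_mul, QuotientGroup.mk_inv, QuotientGroup.mk_pow,
        map_mul, map_inv, map_pow, map_one, htbar, ← hd, h]
      group
    · refine ⟨γ * (g ^ 2 * t ^ 1)⁻¹, ?_, 2, 1, by group⟩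
      rw [← hmk]
      apply e.injective
      simp only [QuotientGroup.mk_mul, QuotientGroup.mk_inv, QuotientGroup.mk_pow,
        map_mul, map_inv, map_pow, map_one, htbar, ← hd, h]
      group

section
variable {G : Type*} [Group G] {Q : Subgroup G} {m : ℕ} {g t : G}

/-- a Klein four group: two distinct nontrivial elements and their product, with 1, exhaust it -/
theorem Zfour (hG : IsBiextraspecial G Q m) {u v : G} (hu : u ∈ centerOf G Q)
    (hv : v ∈ centerOf G Q) (hu1 : u ≠ 1) (hv1 : v ≠ 1) (huv : u ≠ v) :
    ∀ w ∈ centerOf G Q, w = 1 ∨ w = u ∨ w = v ∨ w = u * v := by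
  intro w hw
  haveI : Finite (centerOf G Q) := Nat.finite_of_card_ne_zero (by rw [hG.card_center]; norm_num)
  haveI := Fintype.ofFinite (centerOf G Q)
  classical
  set u' : centerOf G Q := ⟨u, hu⟩
  set v' : centerOf G Q := ⟨v, hv⟩
  set p' : centerOf G Q := ⟨u * v, mul_mem hu hv⟩
  have hsq : u * u = 1 := hG.center_exponent u hu
  have hp1 : u * v ≠ 1 := by
    intro h
    apply huv
    calc u = u * (u * v) := by rw [h]; group
      _ = v := by rw [← mul_assoc, hsq]; group
  have hpu : u * v ≠ u := fun h => hv1 (by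
    have := congrArg (fun x => u⁻¹ * x) h; simpa using this)
  have hpv : u * v ≠ v := fun h => hu1 (by
    have := congrArg (fun x => x * v⁻¹) h; simpa using this)
  have hcard : Fintype.card (centerOf G Q) = 4 := by
    rw [← Nat.card_eq_fintype_card, hG.card_center]
  have hs : ({1, u', v', p'} : Finset (centerOf G Q)).card = 4 := by
    rw [Finset.card_insert_of_notMem, Finset.card_insert_of_notMem,
      Finset.card_insert_of_notMem, Finset.card_singleton]
    · simp only [Finset.mem_singleton]
      intro h; exact hpv (by simpa [v', p', Subtype.ext_iff] using h)
    · simp only [Finset.mem_insert, Finset.mem_singleton]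
      push_neg
      constructor
      · intro h; exact huv (by simpa [u', v', Subtype.ext_iff] using h)
      · intro h; exact hpu (by simpa [u', p', Subtype.ext_iff] using h.symm)
    · simp only [Finset.mem_insert, Finset.mem_singleton]
      push_neg
      refine ⟨?_, ?_, ?_⟩
      · intro h; exact hu1 (by simpa [u', Subtype.ext_iff] using h.symm)
      · intro h; exact hv1 (by simpa [v', Subtype.ext_iff] using h.symm)
      · intro h; exact hp1 (by simpa [p', Subtype.ext_iff] using h.symm)
  have huniv : ({1, u', v', p'} : Finset (centerOf G Q)) = Finset.univ := by
    apply Finset.eq_univ_of_card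
    rw [hs, hcard]
  have hwmem : (⟨w, hw⟩ : centerOf G Q) ∈ ({1, u', v', p'} : Finset (centerOf G Q)) := by
    rw [huniv]; exact Finset.mem_univ _
  simp only [Finset.mem_insert, Finset.mem_singleton, Subtype.ext_iff] at hwmem
  simpa [u', v', p'] using hwmem

theorem fpfQ (hG : IsBiextraspecial G Q m) (ha : Aux G Q g t) :
    ∀ q ∈ Q, g * q * g⁻¹ = q → q = 1 :=
  hG.order_three_fpf g ha.hord

theorem conjZ (hG : IsBiextraspecial G Q m) {z : G} (hz : z ∈ centerOf G Q) (γ : G) :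
    γ * z * γ⁻¹ ∈ centerOf G Q :=
  (Znormal hG).conj_mem z hz γ

/-- the norm of `g` on the centre is trivial -/
theorem normZ (hG : IsBiextraspecial G Q m) (ha : Aux G Q g t) {z : G}
    (hz : z ∈ centerOf G Q) :
    z * (g * z * g⁻¹) * (g * (g * z * g⁻¹) * g⁻¹) = 1 := by
  by_cases h1 : z = 1
  · simp [h1]
  set u : G := g * z * g⁻¹ with hu
  set w : G := g * u * g⁻¹ with hw
  have hum : u ∈ centerOf G Q := conjZ hG hz g
  have hwm : w ∈ centerOf G Q := conjZ hG hum g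
  have hcu : g * z * g⁻¹ = u := rfl
  have hcw : g * u * g⁻¹ = w := rfl
  have hcz : g * w * g⁻¹ = z := by
    rw [hw, hu]
    have h3 : g * g * g = 1 := by
      have := ha.hg3; rwa [pow_succ, pow_succ, pow_one] at this
    calc g * (g * (g * z * g⁻¹) * g⁻¹) * g⁻¹
        = (g * g * g) * z * ((g * g * g))⁻¹ := by group
      _ = z := by rw [h3]; group
  have hune : u ≠ 1 := by
    intro h; rw [hu] at h
    apply h1
    have h2 := congrArg (fun x => g⁻¹ * x * g) h
    calc z = g⁻¹ * (g * z * g⁻¹) * g := by group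
      _ = g⁻¹ * 1 * g := h2
      _ = 1 := by group
  have huz : u ≠ z := by
    intro h
    exact h1 (fpfQ hG ha z (Zle hz) (hu ▸ h))
  have hwu : w ≠ u := by
    intro h
    exact (hune (fpfQ hG ha u (Zle hum) (hw ▸ h)))
  have hwz : w ≠ z := by
    intro h
    have h2 := congrArg (fun x => g * x * g⁻¹) h
    rw [hcz, hcu] at h2
    exact huz h2.symm
  have hw1 : w ≠ 1 := by
    intro h; rw [hw] at h
    apply hune
    have h2 := congrArg (fun x => g⁻¹ * x * g) h
    calc u = g⁻¹ * (g * u * g⁻¹) * g := by group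
      _ = g⁻¹ * 1 * g := h2
      _ = 1 := by group
  rcases Zfour hG hz hum h1 hune (fun h => huz h.symm) w hwm with h | h | h | h
  · exact absurd h hw1
  · exact absurd h hwz
  · exact absurd h hwu
  · rw [h]
    have : z * u ∈ centerOf G Q := mul_mem hz hum
    calc z * u * (z * u) = 1 := hG.center_exponent _ this
end

section
variable {G : Type*} [Group G] {Q : Subgroup G} {m : ℕ} {g t : G}

theorem c_mem (hG : IsBiextraspecial G Q m) {a b : G} (ha : a ∈ Q) (hb : b ∈ Q) :
    a * b * a⁻¹ * b⁻¹ ∈ centerOf G Q := by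
  have := hG.comm_mem_center a ha b hb
  rwa [commutatorElement_def] at this

theorem Zinv (hG : IsBiextraspecial G Q m) {z : G} (hz : z ∈ centerOf G Q) : z⁻¹ = z := by
  have := inv_eq_of_mul_eq_one_right (hG.center_exponent z hz)
  exact this.symm ▸ rfl

/-- the inverted commutator identity -/
theorem comm_inv_id {a b z : G} (hz : z = a * b * a⁻¹ * b⁻¹)
    (hza : z * a = a * z) (hzb : z * b = b * z) :
    a⁻¹ * b⁻¹ * a * b = z := by
  have h1 : a * b = z * (b * a) := by rw [hz]; group
  have h2 : a * b = (b * a) * z := by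
    rw [h1]
    calc z * (b * a) = (z * b) * a := by group
      _ = (b * z) * a := by rw [hzb]
      _ = b * (z * a) := by group
      _ = b * (a * z) := by rw [hza]
      _ = (b * a) * z := by group
  calc a⁻¹ * b⁻¹ * a * b = (b * a)⁻¹ * (a * b) := by group
    _ = (b * a)⁻¹ * ((b * a) * z) := by rw [← h2]
    _ = z := by group

theorem fpf_modZ (hG : IsBiextraspecial G Q m) (ha : Aux G Q g t) {q : G} (hq : q ∈ Q)
    (hcm : g * q * g⁻¹ * q⁻¹ ∈ centerOf G Q) : q ∈ centerOf G Q := by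
  set z := g * q * g⁻¹ * q⁻¹ with hz
  set u := g * z * g⁻¹ with hu
  have hum : u ∈ centerOf G Q := conjZ hG hcm g
  have hnorm := normZ hG ha hcm
  rw [← hu] at hnorm
  have hcu : g * u * g⁻¹ = u * z := by
    have h1 : (z * u) * (g * u * g⁻¹) = 1 := by rw [← hnorm]
    have h2 : g * u * g⁻¹ = (z * u)⁻¹ := (inv_eq_of_mul_eq_one_right h1).symm
    rw [h2, mul_inv_rev, Zinv hG hum, Zinv hG hcm]
  set w := q * u with hw
  have hwQ : w ∈ Q := mul_mem hq (Zle hum)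
  have hfix : g * w * g⁻¹ = w := by
    have hgq : g * q * g⁻¹ = z * q := by rw [hz]; group
    have hzq := Zcomm hcm hq
    have hzu := ZcommZ hcm hum
    calc g * w * g⁻¹ = (g * q * g⁻¹) * (g * u * g⁻¹) := by rw [hw]; group
      _ = (z * q) * (u * z) := by rw [hgq, hcu]
      _ = (q * z) * (u * z) := by rw [hzq]
      _ = q * (z * u) * z := by group
      _ = q * (u * z) * z := by rw [hzu]
      _ = q * u * (z * z) := by group
      _ = w := by rw [hG.center_exponent z hcm, hw]; group
  have hw1 : w = 1 := fpfQ hG ha w hwQ hfix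
  have hq' : q⁻¹ = u := inv_eq_of_mul_eq_one_right hw1
  have hqu : q = u⁻¹ := by rw [← hq', inv_inv]
  rw [hqu]
  exact inv_mem hum

theorem norm_modZ (hG : IsBiextraspecial G Q m) (ha : Aux G Q g t) {q : G} (hq : q ∈ Q) :
    q * (g * q * g⁻¹) * (g * (g * q * g⁻¹) * g⁻¹) ∈ centerOf G Q := by
  set b := g * q * g⁻¹ with hb
  set c := g * b * g⁻¹ with hc
  have hbQ : b ∈ Q := hG.normal.conj_mem q hq g
  have hcQ : c ∈ Q := hG.normal.conj_mem b hbQ g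
  have hg3 : g * g * g = 1 := by
    have := ha.hg3; rwa [pow_succ, pow_succ, pow_one] at this
  have hcqc : g * c * g⁻¹ = q := by
    rw [hc, hb]
    calc g * (g * (g * q * g⁻¹) * g⁻¹) * g⁻¹ = (g*g*g) * q * (g*g*g)⁻¹ := by group
      _ = q := by rw [hg3]; group
  have hA : b * c ∈ Q := mul_mem hbQ hcQ
  have hu : q * b * c ∈ Q := mul_mem (mul_mem hq hbQ) hcQ
  have key : g * (q * b * c) * g⁻¹ * (q * b * c)⁻¹ ∈ centerOf G Q := by
    have h1 : g * (q * b * c) * g⁻¹ = b * c * q := by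
      calc g * (q * b * c) * g⁻¹ = (g*q*g⁻¹) * (g*b*g⁻¹) * (g*c*g⁻¹) := by group
        _ = b * c * q := by rw [← hb, ← hc, hcqc]
    rw [h1]
    have h2 : b * c * q * (q * b * c)⁻¹ = (b*c) * q * (b*c)⁻¹ * q⁻¹ := by group
    rw [h2]
    exact c_mem hG hA hq
  exact fpf_modZ hG ha hu key

theorem commg_self (hG : IsBiextraspecial G Q m) (ha : Aux G Q g t) {a : G} (haQ : a ∈ Q) :
    a * (g * a * g⁻¹) = (g * a * g⁻¹) * a := by
  set b := g * a * g⁻¹ with hb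
  have hbQ : b ∈ Q := hG.normal.conj_mem a haQ g
  set z := a * b * a⁻¹ * b⁻¹ with hz
  have hzm : z ∈ centerOf G Q := c_mem hG haQ hbQ
  set ζ := a * b * (g * b * g⁻¹) with hζ
  have hζm : ζ ∈ centerOf G Q := by
    have := norm_modZ hG ha haQ
    rwa [← hb, ← hζ] at this
  have hcb : g * b * g⁻¹ = b⁻¹ * a⁻¹ * ζ := by
    rw [hζ]; group
  have hfix : g * z * g⁻¹ = z := by
    have h1 : g * z * g⁻¹ = b * (g*b*g⁻¹) * b⁻¹ * (g*b*g⁻¹)⁻¹ := by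
      have h1a : g * z * g⁻¹
          = (g*a*g⁻¹) * (g*b*g⁻¹) * (g*a*g⁻¹)⁻¹ * (g*b*g⁻¹)⁻¹ := by rw [hz]; group
      rwa [← hb] at h1a
    have h2 : b * (b⁻¹ * a⁻¹ * ζ) * b⁻¹ * (b⁻¹ * a⁻¹ * ζ)⁻¹ = a⁻¹ * (ζ * b⁻¹) * ζ⁻¹ * a * b := by
      group
    have hζb : ζ * b⁻¹ = b⁻¹ * ζ := Zcomm hζm (inv_mem hbQ)
    have h3 : a⁻¹ * (b⁻¹ * ζ) * ζ⁻¹ * a * b = a⁻¹ * b⁻¹ * a * b := by group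
    have h4 : a⁻¹ * b⁻¹ * a * b = z :=
      comm_inv_id hz (Zcomm hzm haQ) (Zcomm hzm hbQ)
    rw [h1, hcb, h2, hζb, h3, h4]
  have hz1 : z = 1 := fpfQ hG ha z (Zle hzm) hfix
  have : a * b = z * (b * a) := by rw [hz]; group
  rw [hz1] at this
  simpa using this

end

section
variable {G : Type*} [Group G] {Q : Subgroup G} {m : ℕ} {g t : G}

/-- the subgroup `Z⟨x,y⟩` (for commuting `x,y` with central squares). -/
def genSub (G : Type*) [Group G] (Q : Subgroup G) (x y : G) (hxQ : x ∈ Q) (hyQ : y ∈ Q)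
    (hxy : x * y = y * x) (hx2 : x * x ∈ centerOf G Q) (hy2 : y * y ∈ centerOf G Q) :
    Subgroup G where
  carrier := {w | ∃ z ∈ centerOf G Q, ∃ i j : ℕ, w = z * x ^ i * y ^ j}
  one_mem' := ⟨1, one_mem _, 0, 0, by simp⟩
  mul_mem' := by
    rintro w w' ⟨z, hz, i, j, rfl⟩ ⟨z', hz', k, l, rfl⟩
    refine ⟨z * z', mul_mem hz hz', i + k, j + l, ?_⟩
    have hcxy : Commute x y := hxy
    have h1 : y ^ j * z' = z' * y ^ j := (Zcomm hz' (pow_mem hyQ j)).symm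
    have h2 : x ^ i * z' = z' * x ^ i := (Zcomm hz' (pow_mem hxQ i)).symm
    have h3 : y ^ j * x ^ k = x ^ k * y ^ j := (hcxy.symm.pow_pow j k).eq
    calc z * x ^ i * y ^ j * (z' * x ^ k * y ^ l)
        = z * x ^ i * (y ^ j * z') * x ^ k * y ^ l := by group
      _ = z * x ^ i * (z' * y ^ j) * x ^ k * y ^ l := by rw [h1]
      _ = z * (x ^ i * z') * (y ^ j * x ^ k) * y ^ l := by group
      _ = z * (z' * x ^ i) * (x ^ k * y ^ j) * y ^ l := by rw [h2, h3]
      _ = (z * z') * (x ^ i * x ^ k) * (y ^ j * y ^ l) := by group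
      _ = z * z' * x ^ (i + k) * y ^ (j + l) := by rw [pow_add, pow_add]
  inv_mem' := by
    rintro w ⟨z, hz, i, j, rfl⟩
    have hx2i : (x * x) ^ i ∈ centerOf G Q := pow_mem hx2 i
    have hy2j : (y * y) ^ j ∈ centerOf G Q := pow_mem hy2 j
    set z'' : G := z⁻¹ * ((x * x) ^ i)⁻¹ * ((y * y) ^ j)⁻¹ with hz''
    have hz''m : z'' ∈ centerOf G Q := mul_mem (mul_mem (inv_mem hz) (inv_mem hx2i)) (inv_mem hy2j)
    refine ⟨z'', hz''m, i, j, ?_⟩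
    have hcxy : Commute x y := hxy
    have h3 : y ^ j * x ^ i = x ^ i * y ^ j := (hcxy.symm.pow_pow j i).eq
    have hxx : x ^ i * x ^ i = (x * x) ^ i := ((Commute.refl x).mul_pow i).symm
    have hyy : y ^ j * y ^ j = (y * y) ^ j := ((Commute.refl y).mul_pow j).symm
    have key : (z * x ^ i * y ^ j) * (z'' * x ^ i * y ^ j) = 1 := by
      calc (z * x ^ i * y ^ j) * (z'' * x ^ i * y ^ j)
          = z * x ^ i * (y ^ j * z'') * x ^ i * y ^ j := by group
        _ = z * x ^ i * (z'' * y ^ j) * x ^ i * y ^ j := by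
            rw [show y ^ j * z'' = z'' * y ^ j from (Zcomm hz''m (pow_mem hyQ j)).symm]
        _ = z * (x ^ i * z'') * (y ^ j * x ^ i) * y ^ j := by group
        _ = z * (z'' * x ^ i) * (x ^ i * y ^ j) * y ^ j := by
            rw [show x ^ i * z'' = z'' * x ^ i from (Zcomm hz''m (pow_mem hxQ i)).symm, h3]
        _ = (z * z'') * (x ^ i * x ^ i) * (y ^ j * y ^ j) := by group
        _ = z * z'' * ((x * x) ^ i * (y * y) ^ j) := by rw [hxx, hyy]; group
        _ = ((x * x) ^ i)⁻¹ * (((y * y) ^ j)⁻¹ * (x * x) ^ i) * (y * y) ^ j := by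
            rw [hz'']; group
        _ = ((x * x) ^ i)⁻¹ * ((x * x) ^ i * ((y * y) ^ j)⁻¹) * (y * y) ^ j := by
            rw [ZcommZ (inv_mem hy2j) hx2i]
        _ = 1 := by group
    exact (inv_eq_of_mul_eq_one_right key).symm ▸ rfl
end

theorem pow_reduce (hG : IsBiextraspecial G Q m) {x : G} (hx2 : x * x ∈ centerOf G Q) :
    ∀ i : ℕ, ∃ z ∈ centerOf G Q, x ^ i = z * x ^ (i % 2) := by
  intro i
  induction i with
  | zero => exact ⟨1, one_mem _, by simp⟩
  | succ n ih =>
    obtain ⟨z, hz, hrep⟩ := ih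
    rcases Nat.mod_two_eq_zero_or_one n with h | h
    · refine ⟨z, hz, ?_⟩
      have h2 : (n + 1) % 2 = 1 := by omega
      rw [pow_succ, hrep, h, h2, pow_zero, pow_one, mul_one]
    · refine ⟨z * (x * x), mul_mem hz hx2, ?_⟩
      have h2 : (n + 1) % 2 = 0 := by omega
      rw [pow_succ, hrep, h, h2, pow_zero, pow_one, mul_one]
      group

/-- y ∉ Z when x ∉ Z -/
theorem y_notinZ (hG : IsBiextraspecial G Q m) {x : G}
    (hxZ : x ∉ centerOf G Q) : g * x * g⁻¹ ∉ centerOf G Q := by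
  intro h
  apply hxZ
  have := conjZ hG h g⁻¹
  simpa [mul_assoc] using this

theorem xy_notinZ (hG : IsBiextraspecial G Q m) (ha : Aux G Q g t) {x : G} (hxQ : x ∈ Q)
    (hxZ : x ∉ centerOf G Q) : x * (g * x * g⁻¹) ∉ centerOf G Q := by
  intro h
  apply hxZ
  apply fpf_modZ hG ha hxQ
  have hx2 : x * x ∈ centerOf G Q := hG.sq_mem_center x hxQ
  have key : g * x * g⁻¹ * x⁻¹
      = (x⁻¹ * (x * (g * x * g⁻¹)) * (x⁻¹)⁻¹) * (x * x)⁻¹ := by group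
  rw [key]
  exact mul_mem (conjZ hG h x⁻¹) (inv_mem hx2)

theorem coset_inj (hG : IsBiextraspecial G Q m) (ha : Aux G Q g t) {x : G} (hxQ : x ∈ Q)
    (hxZ : x ∉ centerOf G Q) {z z' : G} (hz : z ∈ centerOf G Q) (hz' : z' ∈ centerOf G Q)
    (b c b' c' : Bool)
    (heq : z * (cond b x 1) * (cond c (g * x * g⁻¹) 1)
      = z' * (cond b' x 1) * (cond c' (g * x * g⁻¹) 1)) :
    b = b' ∧ c = c' ∧ z = z' := by
  have hyQ : g * x * g⁻¹ ∈ Q := hG.normal.conj_mem x hxQ g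
  have hy2 : (g * x * g⁻¹) * (g * x * g⁻¹) ∈ centerOf G Q := hG.sq_mem_center _ hyQ
  have hyZ : (g * x * g⁻¹) ∉ centerOf G Q := y_notinZ hG hxZ
  have hxyZ : x * (g * x * g⁻¹) ∉ centerOf G Q := xy_notinZ hG ha hxQ hxZ
  set y : G := g * x * g⁻¹ with hy
  cases b <;> cases c <;> cases b' <;> cases c' <;>
    simp only [Bool.cond_true, Bool.cond_false] at heq
  -- 1 (F,F,F,F)
  · refine ⟨rfl, rfl, ?_⟩
    have h2 : z = (z * 1 * 1) := by group
    rw [heq] at h2; rw [h2]; group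
  -- 2 (F,F,F,T)
  · exfalso; apply hyZ
    have h2 : y = z'⁻¹ * (z' * 1 * y) * 1 := by group
    rw [← heq] at h2; rw [h2]
    rw [show z'⁻¹ * (z * 1 * 1) * 1 = z'⁻¹ * z from by group]
    exact mul_mem (inv_mem hz') hz
  -- 3 (F,F,T,F)
  · exfalso; apply hxZ
    have h2 : x = z'⁻¹ * (z' * x * 1) * 1 := by group
    rw [← heq] at h2; rw [h2]
    rw [show z'⁻¹ * (z * 1 * 1) * 1 = z'⁻¹ * z from by group]
    exact mul_mem (inv_mem hz') hz
  -- 4 (F,F,T,T)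
  · exfalso; apply hxyZ
    have h2 : x * y = z'⁻¹ * (z' * x * y) * 1 := by group
    rw [← heq] at h2; rw [h2]
    rw [show z'⁻¹ * (z * 1 * 1) * 1 = z'⁻¹ * z from by group]
    exact mul_mem (inv_mem hz') hz
  -- 5 (F,T,F,F)
  · exfalso; apply hyZ
    have h2 : y = z⁻¹ * (z * 1 * y) * 1 := by group
    rw [heq] at h2; rw [h2]
    rw [show z⁻¹ * (z' * 1 * 1) * 1 = z⁻¹ * z' from by group]
    exact mul_mem (inv_mem hz) hz'
  -- 6 (F,T,F,T)
  · refine ⟨rfl, rfl, ?_⟩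
    have h2 : z = (z * 1 * y) * y⁻¹ := by group
    rw [heq] at h2; rw [h2]
    group
  -- 7 (F,T,T,F)
  · exfalso; apply hxyZ
    have h2 : x * y = z'⁻¹ * (z' * x * 1) * y := by group
    rw [← heq] at h2; rw [h2]
    rw [show z'⁻¹ * (z * 1 * y) * y = z'⁻¹ * z * (y * y) from by group]
    exact mul_mem (mul_mem (inv_mem hz') hz) hy2
  -- 8 (F,T,T,T)
  · exfalso; apply hxZ
    have h2 : x = z'⁻¹ * (z' * x * y) * y⁻¹ := by group
    rw [← heq] at h2; rw [h2]
    rw [show z'⁻¹ * (z * 1 * y) * y⁻¹ = z'⁻¹ * z from by group]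
    exact mul_mem (inv_mem hz') hz
  -- 9 (T,F,F,F)
  · exfalso; apply hxZ
    have h2 : x = z⁻¹ * (z * x * 1) * 1 := by group
    rw [heq] at h2; rw [h2]
    rw [show z⁻¹ * (z' * 1 * 1) * 1 = z⁻¹ * z' from by group]
    exact mul_mem (inv_mem hz) hz'
  -- 10 (T,F,F,T)
  · exfalso; apply hxyZ
    have h2 : x * y = z⁻¹ * (z * x * 1) * y := by group
    rw [heq] at h2; rw [h2]
    rw [show z⁻¹ * (z' * 1 * y) * y = z⁻¹ * z' * (y * y) from by group]
    exact mul_mem (mul_mem (inv_mem hz) hz') hy2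
  -- 11 (T,F,T,F)
  · refine ⟨rfl, rfl, ?_⟩
    have h2 : z = (z * x * 1) * x⁻¹ := by group
    rw [heq] at h2; rw [h2]
    group
  -- 12 (T,F,T,T)
  · exfalso; apply hyZ
    have h2 : y = x⁻¹ * z'⁻¹ * (z' * x * y) * 1 := by group
    rw [← heq] at h2; rw [h2]
    rw [show x⁻¹ * z'⁻¹ * (z * x * 1) * 1 = x⁻¹ * (z'⁻¹ * z) * (x⁻¹)⁻¹ from by group]
    exact conjZ hG (mul_mem (inv_mem hz') hz) x⁻¹
  -- 13 (T,T,F,F)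
  · exfalso; apply hxyZ
    have h2 : x * y = z⁻¹ * (z * x * y) * 1 := by group
    rw [heq] at h2; rw [h2]
    rw [show z⁻¹ * (z' * 1 * 1) * 1 = z⁻¹ * z' from by group]
    exact mul_mem (inv_mem hz) hz'
  -- 14 (T,T,F,T)
  · exfalso; apply hxZ
    have h2 : x = z⁻¹ * (z * x * y) * y⁻¹ := by group
    rw [heq] at h2; rw [h2]
    rw [show z⁻¹ * (z' * 1 * y) * y⁻¹ = z⁻¹ * z' from by group]
    exact mul_mem (inv_mem hz) hz'
  -- 15 (T,T,T,F)
  · exfalso; apply hyZ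
    have h2 : y = x⁻¹ * z⁻¹ * (z * x * y) * 1 := by group
    rw [heq] at h2; rw [h2]
    rw [show x⁻¹ * z⁻¹ * (z' * x * 1) * 1 = x⁻¹ * (z⁻¹ * z') * (x⁻¹)⁻¹ from by group]
    exact conjZ hG (mul_mem (inv_mem hz) hz') x⁻¹
  -- 16 (T,T,T,T)
  · refine ⟨rfl, rfl, ?_⟩
    have h2 : z = (z * x * y) * (y⁻¹ * x⁻¹) := by group
    rw [heq] at h2; rw [h2]
    group

theorem genSub_mem_bool (hG : IsBiextraspecial G Q m) {x y : G} (hxQ : x ∈ Q) (hyQ : y ∈ Q)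
    (hxy : x * y = y * x) (hx2 : x * x ∈ centerOf G Q) (hy2 : y * y ∈ centerOf G Q) (w : G) :
    w ∈ genSub G Q x y hxQ hyQ hxy hx2 hy2 ↔
      ∃ z ∈ centerOf G Q, ∃ b c : Bool, w = z * (cond b x 1) * (cond c y 1) := by
  constructor
  · rintro ⟨z, hz, i, j, rfl⟩
    obtain ⟨zx, hzx, hix⟩ := pow_reduce hG hx2 i
    obtain ⟨zy, hzy, hjy⟩ := pow_reduce hG hy2 j
    have hmem : z * zx * zy ∈ centerOf G Q := mul_mem (mul_mem hz hzx) hzy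
    rcases Nat.mod_two_eq_zero_or_one i with hi | hi <;>
      rcases Nat.mod_two_eq_zero_or_one j with hj | hj
    · exact ⟨z * zx * zy, hmem, false, false, by
        rw [hix, hjy, hi, hj]; simp only [pow_zero, Bool.cond_false]; group⟩
    · exact ⟨z * zx * zy, hmem, false, true, by
        rw [hix, hjy, hi, hj]; simp only [pow_zero, pow_one, Bool.cond_false, Bool.cond_true]
        group⟩
    · refine ⟨z * zx * zy, hmem, true, false, by
        rw [hix, hjy, hi, hj]; simp only [pow_zero, pow_one, Bool.cond_false, Bool.cond_true]
        rw [show z * (zx * x) * (zy * 1) = z * zx * (x * zy) from by group,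
          show x * zy = zy * x from (Zcomm hzy hxQ).symm]
        group⟩
    · refine ⟨z * zx * zy, hmem, true, true, by
        rw [hix, hjy, hi, hj]; simp only [pow_one, Bool.cond_true]
        rw [show z * (zx * x) * (zy * y) = z * zx * (x * zy) * y from by group,
          show x * zy = zy * x from (Zcomm hzy hxQ).symm]
        group⟩
  · rintro ⟨z, hz, b, c, rfl⟩
    refine ⟨z, hz, cond b 1 0, cond c 1 0, ?_⟩
    cases b <;> cases c <;> simp
theorem genSub_card (hG : IsBiextraspecial G Q m) (ha : Aux G Q g t) {x : G} (hxQ : x ∈ Q)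
    (hxZ : x ∉ centerOf G Q) (hyQ : g * x * g⁻¹ ∈ Q) (hxy : x * (g * x * g⁻¹) = (g * x * g⁻¹) * x)
    (hx2 : x * x ∈ centerOf G Q) (hy2 : (g * x * g⁻¹) * (g * x * g⁻¹) ∈ centerOf G Q) :
    Nat.card (genSub G Q x (g * x * g⁻¹) hxQ hyQ hxy hx2 hy2) = 16 := by
  set P := genSub G Q x (g * x * g⁻¹) hxQ hyQ hxy hx2 hy2 with hP
  set f : (↥(centerOf G Q) × Bool × Bool) → ↥P :=
    fun p => ⟨(p.1 : G) * (cond p.2.1 x 1) * (cond p.2.2 (g * x * g⁻¹) 1),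
      (genSub_mem_bool hG hxQ hyQ hxy hx2 hy2 _).mpr ⟨p.1, p.1.2, p.2.1, p.2.2, rfl⟩⟩ with hf
  have hbij : Function.Bijective f := by
    constructor
    · rintro ⟨z, b, c⟩ ⟨z', b', c'⟩ h
      have h2 := congrArg (Subtype.val) h
      simp only [hf] at h2
      obtain ⟨hb, hc, hzz⟩ := coset_inj hG ha hxQ hxZ z.2 z'.2 b c b' c' h2
      simp only [Prod.mk.injEq]
      exact ⟨Subtype.ext hzz, hb, hc⟩
    · rintro ⟨w, hw⟩
      obtain ⟨z, hz, b, c, hrep⟩ := (genSub_mem_bool hG hxQ hyQ hxy hx2 hy2 w).mp hw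
      exact ⟨⟨⟨z, hz⟩, b, c⟩, Subtype.ext hrep.symm⟩
  have h3 := Nat.card_congr (Equiv.ofBijective f hbij)
  rw [← h3, Nat.card_prod, Nat.card_prod, hG.card_center]
  simp [Nat.card_eq_fintype_card]

theorem conj_pow' (a u : G) (n : ℕ) : a * u ^ n * a⁻¹ = (a * u * a⁻¹) ^ n := by
  induction n with
  | zero => simp
  | succ k ih => rw [pow_succ, pow_succ, ← ih]; group

theorem dent_spec (hG : IsBiextraspecial G Q m) (ha : Aux G Q g t) {D : Subgroup G}
    (hD : IsDent G Q D) :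
    ∃ x ∈ D, x ∉ centerOf G Q ∧ ∃ ζ ∈ centerOf G Q, t * x * t⁻¹ = x * ζ := by
  obtain ⟨d, hdD, hdZ⟩ := SetLike.exists_of_lt hD.center_lt
  have hdQ : d ∈ Q := hD.lt_Q.le hdD
  by_cases h : t * d * t⁻¹ * d⁻¹ ∈ centerOf G Q
  · refine ⟨d, hdD, hdZ, d⁻¹ * (t * d * t⁻¹ * d⁻¹) * (d⁻¹)⁻¹, conjZ hG h d⁻¹, by group⟩
  · set w : G := t * d * t⁻¹ with hw
    have hwD : w ∈ D := hD.normal.conj_mem d hdD t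
    have hwQ : w ∈ Q := hD.lt_Q.le hwD
    have hxD : d * w ∈ D := mul_mem hdD hwD
    have hxZ : d * w ∉ centerOf G Q := by
      intro hmem
      apply h
      have h1 : w * d ∈ centerOf G Q := by
        rw [show w * d = d⁻¹ * (d * w) * (d⁻¹)⁻¹ from by group]
        exact conjZ hG hmem d⁻¹
      rw [show t * d * t⁻¹ * d⁻¹ = (w * d) * (d * d)⁻¹ from by rw [hw]; group]
      exact mul_mem h1 (inv_mem (hG.sq_mem_center d hdQ))
    have hu : t * t ∈ Q := ha.ht2
    have hz2 : (t * t) * d * (t * t)⁻¹ * d⁻¹ ∈ centerOf G Q := c_mem hG hu hdQ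
    have hc3 : w * d * w⁻¹ * d⁻¹ ∈ centerOf G Q := c_mem hG hwQ hdQ
    refine ⟨d * w, hxD, hxZ,
      (w * d * w⁻¹ * d⁻¹) * ((t * t) * d * (t * t)⁻¹ * d⁻¹), mul_mem hc3 hz2, ?_⟩
    calc t * (d * w) * t⁻¹ = w * ((t * t) * d * (t * t)⁻¹) := by rw [hw]; group
      _ = w * (((t * t) * d * (t * t)⁻¹ * d⁻¹) * d) := by group
      _ = w * (d * ((t * t) * d * (t * t)⁻¹ * d⁻¹)) := by rw [Zcomm hz2 hdQ]
      _ = ((w * d * w⁻¹ * d⁻¹) * (d * w)) * ((t * t) * d * (t * t)⁻¹ * d⁻¹) := by group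
      _ = ((d * w) * (w * d * w⁻¹ * d⁻¹)) * ((t * t) * d * (t * t)⁻¹ * d⁻¹) := by
          rw [Zcomm hc3 (mul_mem hdQ hwQ)]
      _ = (d * w) * ((w * d * w⁻¹ * d⁻¹) * ((t * t) * d * (t * t)⁻¹ * d⁻¹)) := by group

theorem dent_eq (hG : IsBiextraspecial G Q m) (ha : Aux G Q g t) {D : Subgroup G}
    (hD : IsDent G Q D) {x : G} (hxD : x ∈ D) (hxZ : x ∉ centerOf G Q)
    {ζt : G} (hζt : ζt ∈ centerOf G Q) (hxt : t * x * t⁻¹ = x * ζt)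
    (hxQ : x ∈ Q) (hyQ : g * x * g⁻¹ ∈ Q) (hxy : x * (g * x * g⁻¹) = (g * x * g⁻¹) * x)
    (hx2 : x * x ∈ centerOf G Q) (hy2 : (g * x * g⁻¹) * (g * x * g⁻¹) ∈ centerOf G Q) :
    genSub G Q x (g * x * g⁻¹) hxQ hyQ hxy hx2 hy2 = D := by
  set y : G := g * x * g⁻¹ with hy
  set P := genSub G Q x y hxQ hyQ hxy hx2 hy2 with hP
  have hZP : centerOf G Q ≤ P := fun z hz => ⟨z, hz, 0, 0, by simp⟩
  have hxP : x ∈ P := ⟨1, one_mem _, 1, 0, by simp⟩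
  have hyP : y ∈ P := ⟨1, one_mem _, 0, 1, by simp⟩
  have hPQ : P ≤ Q := by
    rintro w ⟨z, hz, i, j, rfl⟩
    exact mul_mem (mul_mem (Zle hz) (pow_mem hxQ i)) (pow_mem hyQ j)
  have hgy : g * y * g⁻¹ ∈ P := by
    have hn := norm_modZ hG ha hxQ
    rw [← hy] at hn
    have : g * y * g⁻¹ = y⁻¹ * x⁻¹ * (x * y * (g * y * g⁻¹)) := by group
    rw [this]
    exact mul_mem (mul_mem (inv_mem hyP) (inv_mem hxP)) (hZP hn)
  have hcg : ∀ w ∈ P, g * w * g⁻¹ ∈ P := by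
    rintro w ⟨z, hz, i, j, rfl⟩
    have hid : g * (z * x ^ i * y ^ j) * g⁻¹
        = (g * z * g⁻¹) * (g * x ^ i * g⁻¹) * (g * y ^ j * g⁻¹) := by group
    rw [hid, conj_pow', conj_pow', ← hy]
    exact mul_mem (mul_mem (hZP (conjZ hG hz g)) (pow_mem hyP i)) (pow_mem hgy j)
  have hct : ∀ w ∈ P, t * w * t⁻¹ ∈ P := by
    rintro w ⟨z, hz, i, j, rfl⟩
    have hid : t * (z * x ^ i * y ^ j) * t⁻¹
        = (t * z * t⁻¹) * (t * x ^ i * t⁻¹) * (t * y ^ j * t⁻¹) := by group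
    rw [hid, conj_pow', conj_pow', hxt]
    have hty : t * y * t⁻¹ ∈ P := by
      have hr : t * g * t⁻¹ * g ∈ Q := ha.htgtg
      have hg3 : g * g * g = 1 := by
        have := ha.hg3; rwa [pow_succ, pow_succ, pow_one] at this
      have hid2 : t * y * t⁻¹
          = (t * g * t⁻¹ * g) * (g⁻¹ * (t * x * t⁻¹) * g) * (t * g * t⁻¹ * g)⁻¹ *
            ((t * g * t⁻¹ * g) * (t * g * t⁻¹ * g)⁻¹) := by rw [hy]; group
      rw [show (t * g * t⁻¹ * g) * (g⁻¹ * (t * x * t⁻¹) * g) * (t * g * t⁻¹ * g)⁻¹ *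
            ((t * g * t⁻¹ * g) * (t * g * t⁻¹ * g)⁻¹)
          = (t * g * t⁻¹ * g) * (g⁻¹ * (t * x * t⁻¹) * g) * (t * g * t⁻¹ * g)⁻¹ from by group]
        at hid2
      rw [hxt] at hid2
      have hxconj : g⁻¹ * x * g = g * y * g⁻¹ := by
        rw [hy]
        calc g⁻¹ * x * g = g⁻¹ * ((g*g*g) * x * (g*g*g)⁻¹) * g := by rw [hg3]; group
          _ = g * (g * x * g⁻¹) * g⁻¹ := by group
      have hgxg : g⁻¹ * (x * ζt) * g = (g * y * g⁻¹) * (g⁻¹ * ζt * g) := by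
        rw [← hxconj]; group
      rw [hgxg] at hid2
      rw [hid2]
      have hin : (g * y * g⁻¹) * (g⁻¹ * ζt * g) ∈ P := by
        apply mul_mem hgy
        apply hZP
        have := conjZ hG hζt g⁻¹
        simpa using this
      have := c_mem hG hr (hPQ hin)
      rw [show (t * g * t⁻¹ * g) * ((g * y * g⁻¹) * (g⁻¹ * ζt * g)) * (t * g * t⁻¹ * g)⁻¹
          = ((t * g * t⁻¹ * g) * ((g * y * g⁻¹) * (g⁻¹ * ζt * g)) * (t * g * t⁻¹ * g)⁻¹ *
            ((g * y * g⁻¹) * (g⁻¹ * ζt * g))⁻¹) * ((g * y * g⁻¹) * (g⁻¹ * ζt * g)) from by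
          group]
      exact mul_mem (hZP this) hin
    exact mul_mem (mul_mem (hZP (conjZ hG hz t)) (pow_mem (mul_mem hxP (hZP hζt)) i))
      (pow_mem hty j)
  have hcq : ∀ q ∈ Q, ∀ w ∈ P, q * w * q⁻¹ ∈ P := by
    intro q hq w hw
    rw [show q * w * q⁻¹ = (q * w * q⁻¹ * w⁻¹) * w from by group]
    exact mul_mem (hZP (c_mem hG hq (hPQ hw))) hw
  have hcgi : ∀ i : ℕ, ∀ w ∈ P, g ^ i * w * (g ^ i)⁻¹ ∈ P := by
    intro i
    induction i with
    | zero => intro w hw; simpa using hw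
    | succ k ih =>
      intro w hw
      have hid : g ^ (k+1) * w * (g ^ (k+1))⁻¹
          = g * (g ^ k * w * (g ^ k)⁻¹) * g⁻¹ := by
        rw [pow_succ']; group
      rw [hid]
      exact hcg _ (ih w hw)
  have hcti : ∀ j : ℕ, ∀ w ∈ P, t ^ j * w * (t ^ j)⁻¹ ∈ P := by
    intro j
    induction j with
    | zero => intro w hw; simpa using hw
    | succ k ih =>
      intro w hw
      have hid : t ^ (k+1) * w * (t ^ (k+1))⁻¹
          = t * (t ^ k * w * (t ^ k)⁻¹) * t⁻¹ := by
        rw [pow_succ']; group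
      rw [hid]
      exact hct _ (ih w hw)
  have hnormal : P.Normal := by
    constructor
    intro w hw γ
    obtain ⟨q, hq, i, j, rfl⟩ := ha.hgen γ
    have hid : (q * g ^ i * t ^ j) * w * (q * g ^ i * t ^ j)⁻¹
        = q * (g ^ i * (t ^ j * w * (t ^ j)⁻¹) * (g ^ i)⁻¹) * q⁻¹ := by group
    rw [hid]
    exact hcq q hq _ (hcgi i _ (hcti j w hw))
  have hPD : P ≤ D := by
    rintro w ⟨z, hz, i, j, rfl⟩
    exact mul_mem (mul_mem (hD.center_lt.le hz) (pow_mem hxD i))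
      (pow_mem (hD.normal.conj_mem x hxD g) j)
  have hlt : centerOf G Q < P := SetLike.lt_iff_le_and_exists.mpr ⟨hZP, x, hxP, hxZ⟩
  exact hD.minimal P hnormal hlt hPD

theorem genSub_comm {x y : G} (hxQ : x ∈ Q) (hyQ : y ∈ Q)
    (hxy : x * y = y * x) (hx2 : x * x ∈ centerOf G Q) (hy2 : y * y ∈ centerOf G Q) :
    ∀ d ∈ genSub G Q x y hxQ hyQ hxy hx2 hy2, ∀ e ∈ genSub G Q x y hxQ hyQ hxy hx2 hy2,
      d * e = e * d := by
  rintro d ⟨z, hz, i, j, rfl⟩ e ⟨z', hz', k, l, rfl⟩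
  have hc : Commute x y := hxy
  have h1 : Commute (z * x ^ i * y ^ j) z' :=
    Commute.mul_left (Commute.mul_left (ZcommZ hz hz')
      ((Zcomm hz' (pow_mem hxQ i)).symm)) ((Zcomm hz' (pow_mem hyQ j)).symm)
  have h2 : Commute (z * x ^ i * y ^ j) (x ^ k) :=
    Commute.mul_left (Commute.mul_left (Zcomm hz (pow_mem hxQ k))
      ((Commute.refl x).pow_pow i k)) (hc.symm.pow_pow j k)
  have h3 : Commute (z * x ^ i * y ^ j) (y ^ l) :=
    Commute.mul_left (Commute.mul_left (Zcomm hz (pow_mem hyQ l))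
      (hc.pow_pow i l)) ((Commute.refl y).pow_pow j l)
  exact ((h1.mul_right h2).mul_right h3).eq

theorem dent_card (hG : IsBiextraspecial G Q m) (ha : Aux G Q g t) {D : Subgroup G}
    (hD : IsDent G Q D) : Nat.card D = 16 := by
  obtain ⟨x, hxD, hxZ, ζt, hζt, hxt⟩ := dent_spec hG ha hD
  have hxQ : x ∈ Q := hD.lt_Q.le hxD
  have hyQ : g * x * g⁻¹ ∈ Q := hG.normal.conj_mem x hxQ g
  have hxy : x * (g * x * g⁻¹) = (g * x * g⁻¹) * x := commg_self hG ha hxQ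
  have hx2 : x * x ∈ centerOf G Q := hG.sq_mem_center x hxQ
  have hy2 : (g * x * g⁻¹) * (g * x * g⁻¹) ∈ centerOf G Q := hG.sq_mem_center _ hyQ
  rw [← dent_eq hG ha hD hxD hxZ hζt hxt hxQ hyQ hxy hx2 hy2]
  exact genSub_card hG ha hxQ hxZ hyQ hxy hx2 hy2

theorem dent_repr (hG : IsBiextraspecial G Q m) (ha : Aux G Q g t) {D : Subgroup G}
    (hD : IsDent G Q D) {a : G} (haD : a ∈ D) (haZ : a ∉ centerOf G Q) :
    ∀ d ∈ D, ∃ z ∈ centerOf G Q, ∃ b c : Bool,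
      d = z * (cond b a 1) * (cond c (g * a * g⁻¹) 1) := by
  haveI : Finite G := finiteG hG
  have haQ : a ∈ Q := hD.lt_Q.le haD
  have hyQ : g * a * g⁻¹ ∈ Q := hG.normal.conj_mem a haQ g
  have hxy : a * (g * a * g⁻¹) = (g * a * g⁻¹) * a := commg_self hG ha haQ
  have hx2 : a * a ∈ centerOf G Q := hG.sq_mem_center a haQ
  have hy2 : (g * a * g⁻¹) * (g * a * g⁻¹) ∈ centerOf G Q := hG.sq_mem_center _ hyQ
  set P := genSub G Q a (g * a * g⁻¹) haQ hyQ hxy hx2 hy2 with hP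
  have hPD : P ≤ D := by
    rintro w ⟨z, hz, i, j, rfl⟩
    exact mul_mem (mul_mem (hD.center_lt.le hz) (pow_mem haD i))
      (pow_mem (hD.normal.conj_mem a haD g) j)
  have hcard : Nat.card P = 16 := genSub_card hG ha haQ haZ hyQ hxy hx2 hy2
  have hPeq : P = D := by
    apply Subgroup.eq_of_le_of_card_ge hPD
    rw [hcard, dent_card hG ha hD]
  intro d hd
  rw [← hPeq] at hd
  exact (genSub_mem_bool hG haQ hyQ hxy hx2 hy2 d).mp hd

theorem dent_ab (hG : IsBiextraspecial G Q m) (ha : Aux G Q g t) {D : Subgroup G}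
    (hD : IsDent G Q D) : ∀ d ∈ D, ∀ e ∈ D, d * e = e * d := by
  obtain ⟨x, hxD, hxZ, ζt, hζt, hxt⟩ := dent_spec hG ha hD
  have hxQ : x ∈ Q := hD.lt_Q.le hxD
  have hyQ : g * x * g⁻¹ ∈ Q := hG.normal.conj_mem x hxQ g
  have hxy : x * (g * x * g⁻¹) = (g * x * g⁻¹) * x := commg_self hG ha hxQ
  have hx2 : x * x ∈ centerOf G Q := hG.sq_mem_center x hxQ
  have hy2 : (g * x * g⁻¹) * (g * x * g⁻¹) ∈ centerOf G Q := hG.sq_mem_center _ hyQ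
  have heq := dent_eq hG ha hD hxD hxZ hζt hxt hxQ hyQ hxy hx2 hy2
  intro d hd e he
  rw [← heq] at hd he
  exact genSub_comm hxQ hyQ hxy hx2 hy2 d hd e he

theorem dent_dichotomy (hG : IsBiextraspecial G Q m) (ha : Aux G Q g t) {D : Subgroup G}
    (hD : IsDent G Q D) (hex : ∃ a ∈ D, a ∉ centerOf G Q ∧ a * a = 1) :
    IsSingularDent G D := by
  obtain ⟨a, haD, haZ, ha2⟩ := hex
  have hab := dent_ab hG ha hD
  set S : Subgroup G := {
    carrier := {w | w ∈ D ∧ w * w = 1}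
    one_mem' := ⟨one_mem D, by simp⟩
    mul_mem' := by
      rintro d e ⟨hdD, hd2⟩ ⟨heD, he2⟩
      refine ⟨mul_mem hdD heD, ?_⟩
      calc d * e * (d * e) = d * (e * d) * e := by group
        _ = d * (d * e) * e := by rw [hab e heD d hdD]
        _ = (d * d) * (e * e) := by group
        _ = 1 := by rw [hd2, he2]; group
    inv_mem' := by
      rintro d ⟨hdD, hd2⟩
      refine ⟨inv_mem hdD, ?_⟩
      rw [show d⁻¹ * d⁻¹ = (d * d)⁻¹ from by group, hd2]
      group } with hS
  have hnormal : S.Normal := by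
    constructor
    rintro w ⟨hwD, hw2⟩ γ
    refine ⟨hD.normal.conj_mem w hwD γ, ?_⟩
    calc γ * w * γ⁻¹ * (γ * w * γ⁻¹) = γ * (w * w) * γ⁻¹ := by group
      _ = 1 := by rw [hw2]; group
  have hZS : centerOf G Q ≤ S := fun z hz =>
    ⟨hD.center_lt.le hz, hG.center_exponent z hz⟩
  have hlt : centerOf G Q < S := SetLike.lt_iff_le_and_exists.mpr ⟨hZS, a, (⟨haD, ha2⟩ : a ∈ D ∧ a * a = 1), haZ⟩
  have hSD : S ≤ D := fun w hw => hw.1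
  have hfin := hD.minimal S hnormal hlt hSD
  intro d hd
  rw [← hfin] at hd
  exact hd.2

end Bx

/-- the commutator -/
def Bx.cc {G : Type*} [Group G] (p q : G) : G := p * q * p⁻¹ * q⁻¹

namespace Bx
section
variable {G : Type*} [Group G] {Q : Subgroup G} {m : ℕ} {g t : G}

theorem cc_mem (hG : IsBiextraspecial G Q m) {p q : G} (hp : p ∈ Q) (hq : q ∈ Q) :
    cc p q ∈ centerOf G Q := c_mem hG hp hq

theorem cc_eq_one_iff {p q : G} : cc p q = 1 ↔ p * q = q * p := by
  unfold cc
  constructor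
  · intro h
    calc p * q = (p * q * p⁻¹ * q⁻¹) * (q * p) := by group
      _ = q * p := by rw [h]; group
  · intro h; rw [h]; group

theorem cc_conj (γ p q : G) : γ * cc p q * γ⁻¹ = cc (γ * p * γ⁻¹) (γ * q * γ⁻¹) := by
  unfold cc; group

theorem cc_symm (hG : IsBiextraspecial G Q m) {p q : G} (hp : p ∈ Q) (hq : q ∈ Q) :
    cc q p = cc p q := by
  have h1 : cc q p = (cc p q)⁻¹ := by unfold cc; group
  rw [h1, Zinv hG (cc_mem hG hp hq)]

theorem cc_mul_right (hG : IsBiextraspecial G Q m) {p q r : G} (hp : p ∈ Q) (hq : q ∈ Q)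
    (hr : r ∈ Q) : cc p (q * r) = cc p q * cc p r := by
  have hcr : cc p r ∈ centerOf G Q := cc_mem hG hp hr
  have h1 : cc p (q * r) = (cc p q) * (q * (cc p r) * q⁻¹) := by unfold cc; group
  rw [h1, show q * cc p r * q⁻¹ = cc p r from by rw [← Zcomm hcr hq]; group]

theorem cc_mul_left (hG : IsBiextraspecial G Q m) {p q r : G} (hp : p ∈ Q) (hr : r ∈ Q)
    (hq : q ∈ Q) : cc (p * r) q = cc p q * cc r q := by
  have hcr : cc r q ∈ centerOf G Q := cc_mem hG hr hq
  have h1 : cc (p * r) q = (p * (cc r q) * p⁻¹) * cc p q := by unfold cc; group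
  rw [h1, show p * cc r q * p⁻¹ = cc r q from by rw [← Zcomm hcr hp]; group]
  exact ZcommZ hcr (cc_mem hG hp hq)

theorem cc_one_right (p : G) : cc p 1 = 1 := by unfold cc; group

theorem cc_one_left (q : G) : cc 1 q = 1 := by unfold cc; group

theorem cc_inv_right (hG : IsBiextraspecial G Q m) {p q : G} (hp : p ∈ Q) (hq : q ∈ Q) :
    cc p q⁻¹ = cc p q := by
  have h1 := cc_mul_right hG hp hq (inv_mem hq)
  rw [mul_inv_cancel, cc_one_right] at h1
  have h2 : cc p q⁻¹ = (cc p q)⁻¹ := by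
    rw [eq_inv_iff_mul_eq_one, ZcommZ (cc_mem hG hp (inv_mem hq)) (cc_mem hG hp hq)]
    exact h1.symm
  rw [h2, Zinv hG (cc_mem hG hp hq)]

theorem cc_inv_left (hG : IsBiextraspecial G Q m) {p q : G} (hp : p ∈ Q) (hq : q ∈ Q) :
    cc p⁻¹ q = cc p q := by
  have h1 := cc_mul_left hG hp (inv_mem hp) hq
  rw [mul_inv_cancel, cc_one_left] at h1
  have h2 : cc p⁻¹ q = (cc p q)⁻¹ := by
    rw [eq_inv_iff_mul_eq_one, ZcommZ (cc_mem hG (inv_mem hp) hq) (cc_mem hG hp hq)]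
    exact h1.symm
  rw [h2, Zinv hG (cc_mem hG hp hq)]

theorem cc_Zright (hG : IsBiextraspecial G Q m) {p q z : G} (hp : p ∈ Q) (hq : q ∈ Q)
    (hz : z ∈ centerOf G Q) : cc p (q * z) = cc p q := by
  rw [cc_mul_right hG hp hq (Zle hz),
    show cc p z = 1 from by unfold cc; rw [show p * z = z * p from (Zcomm hz hp).symm]; group,
    mul_one]

theorem cc_Zleft (hG : IsBiextraspecial G Q m) {p q z : G} (hp : p ∈ Q) (hq : q ∈ Q)
    (hz : z ∈ centerOf G Q) : cc (p * z) q = cc p q := by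
  rw [cc_mul_left hG hp (Zle hz) hq,
    show cc z q = 1 from by unfold cc; rw [show z * q = q * z from Zcomm hz hq]; group,
    mul_one]

/-- commuting propagates through the `g`-action -/
theorem comm_propagate (hG : IsBiextraspecial G Q m) (ha : Aux G Q g t) {a b : G}
    (haQ : a ∈ Q) (hbQ : b ∈ Q) (hab : a * b = b * a) :
    a * (g * b * g⁻¹) = (g * b * g⁻¹) * a ∧ (g * a * g⁻¹) * b = b * (g * a * g⁻¹) ∧
      (g * a * g⁻¹) * (g * b * g⁻¹) = (g * b * g⁻¹) * (g * a * g⁻¹) := by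
  set A : G := g * a * g⁻¹ with hA
  set B : G := g * b * g⁻¹ with hB
  have hAQ : A ∈ Q := hG.normal.conj_mem a haQ g
  have hBQ : B ∈ Q := hG.normal.conj_mem b hbQ g
  have hA2Q : g * A * g⁻¹ ∈ Q := hG.normal.conj_mem A hAQ g
  have hB2Q : g * B * g⁻¹ ∈ Q := hG.normal.conj_mem B hBQ g
  have hcab : cc a b = 1 := cc_eq_one_iff.mpr hab
  have hcAB : cc A B = 1 := by
    rw [hA, hB, ← cc_conj, hcab]; group
  have hζa : a * A * (g * A * g⁻¹) ∈ centerOf G Q := by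
    have := norm_modZ hG ha haQ; rwa [← hA] at this
  have hζb : b * B * (g * B * g⁻¹) ∈ centerOf G Q := by
    have := norm_modZ hG ha hbQ; rwa [← hB] at this
  have hA2 : g * A * g⁻¹ = A⁻¹ * a⁻¹ * (a * A * (g * A * g⁻¹)) := by group
  have hB2 : g * B * g⁻¹ = B⁻¹ * b⁻¹ * (b * B * (g * B * g⁻¹)) := by group
  -- key: cc (g*A*g⁻¹) (g*B*g⁻¹) = cc A b * cc a B  (after dropping centre factors)
  have hstep2 : cc (g * A * g⁻¹) (g * B * g⁻¹) = cc A b * cc a B := by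
    rw [hA2, hB2]
    rw [show A⁻¹ * a⁻¹ * (a * A * (g * A * g⁻¹)) = (A⁻¹ * a⁻¹) * (a * A * (g * A * g⁻¹))
      from by group]
    rw [show B⁻¹ * b⁻¹ * (b * B * (g * B * g⁻¹)) = (B⁻¹ * b⁻¹) * (b * B * (g * B * g⁻¹))
      from by group]
    rw [cc_Zleft hG (mul_mem (inv_mem hAQ) (inv_mem haQ)) _ hζa]
    · rw [cc_Zright hG (mul_mem (inv_mem hAQ) (inv_mem haQ))
        (mul_mem (inv_mem hBQ) (inv_mem hbQ)) hζb]
      rw [cc_mul_left hG (inv_mem hAQ) (inv_mem haQ) (mul_mem (inv_mem hBQ) (inv_mem hbQ))]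
      rw [cc_mul_right hG (inv_mem hAQ) (inv_mem hBQ) (inv_mem hbQ)]
      rw [cc_mul_right hG (inv_mem haQ) (inv_mem hBQ) (inv_mem hbQ)]
      rw [cc_inv_left hG hAQ (inv_mem hBQ), cc_inv_right hG hAQ hBQ,
        cc_inv_left hG hAQ (inv_mem hbQ), cc_inv_right hG hAQ hbQ,
        cc_inv_left hG haQ (inv_mem hBQ), cc_inv_right hG haQ hBQ,
        cc_inv_left hG haQ (inv_mem hbQ), cc_inv_right hG haQ hbQ]
      rw [hcAB, hcab, one_mul, mul_one]
    · exact mul_mem (mul_mem (inv_mem hBQ) (inv_mem hbQ)) (Zle hζb)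
  have hstep2' : cc A b * cc a B = 1 := by
    rw [← hstep2]
    have h0 : cc (g * A * g⁻¹) (g * B * g⁻¹) = g * cc A B * g⁻¹ := (cc_conj g A B).symm
    rw [h0, hcAB]; group
  have hAb_eq : cc A b = cc a B := by
    have h1 : cc A b = (cc a B)⁻¹ := by
      rw [eq_inv_iff_mul_eq_one]; exact hstep2'
    rw [h1, Zinv hG (cc_mem hG haQ hBQ)]
  -- now show cc a B is g-fixed
  have hstep3 : g * cc a B * g⁻¹ = cc a B := by
    have h1 : g * cc a B * g⁻¹ = cc A (g * B * g⁻¹) := by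
      rw [cc_conj g a B, ← hA]
    have h2 : cc A (g * B * g⁻¹) = cc A (B⁻¹ * b⁻¹) := by
      rw [hB2, show B⁻¹ * b⁻¹ * (b * B * (g * B * g⁻¹)) = (B⁻¹ * b⁻¹) * (b * B * (g * B * g⁻¹))
        from by group]
      exact cc_Zright hG hAQ (mul_mem (inv_mem hBQ) (inv_mem hbQ)) hζb
    have h3 : cc A (B⁻¹ * b⁻¹) = cc A b := by
      rw [cc_mul_right hG hAQ (inv_mem hBQ) (inv_mem hbQ), cc_inv_right hG hAQ hBQ,
        cc_inv_right hG hAQ hbQ, hcAB, one_mul]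
    rw [h1, h2, h3, hAb_eq]
  have hfix : cc a B = 1 :=
    fpfQ hG ha _ (Zle (cc_mem hG haQ hBQ)) hstep3
  have hAb : cc A b = 1 := by rw [hAb_eq, hfix]
  refine ⟨cc_eq_one_iff.mp hfix, cc_eq_one_iff.mp hAb, cc_eq_one_iff.mp hcAB⟩

/-- two nontrivial `t`-fixed elements of the centre are equal -/
theorem t_fix_unique (hG : IsBiextraspecial G Q m) (ha : Aux G Q g t) {u v : G}
    (hu : u ∈ centerOf G Q) (hv : v ∈ centerOf G Q) (hut : t * u * t⁻¹ = u)
    (hvt : t * v * t⁻¹ = v) (hu1 : u ≠ 1) (hv1 : v ≠ 1) : u = v := by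
  by_contra hne
  apply ha.htQ
  apply hG.center_faithful
  intro z hz
  rcases Zfour hG hu hv hu1 hv1 hne z hz with rfl | rfl | rfl | rfl
  · group
  · exact hut
  · exact hvt
  · calc t * (u * v) * t⁻¹ = (t * u * t⁻¹) * (t * v * t⁻¹) := by group
      _ = u * v := by rw [hut, hvt]

/-- if one non-central pair commutes then the dents commute -/
theorem commute_of_pair (hG : IsBiextraspecial G Q m) (ha : Aux G Q g t)
    {D₁ D₂ : Subgroup G} (hD1 : IsDent G Q D₁) (hD2 : IsDent G Q D₂) {a b : G}
    (haD : a ∈ D₁) (haZ : a ∉ centerOf G Q) (hbD : b ∈ D₂) (hbZ : b ∉ centerOf G Q)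
    (hab : a * b = b * a) : DentsCommute G D₁ D₂ := by
  have haQ : a ∈ Q := hD1.lt_Q.le haD
  have hbQ : b ∈ Q := hD2.lt_Q.le hbD
  obtain ⟨h1, h2, h3⟩ := comm_propagate hG ha haQ hbQ hab
  have hAQ : g * a * g⁻¹ ∈ Q := hG.normal.conj_mem a haQ g
  have hBQ : g * b * g⁻¹ ∈ Q := hG.normal.conj_mem b hbQ g
  intro d₁ hd₁ d₂ hd₂
  obtain ⟨z, hz, i, j, hrep₁⟩ := dent_repr hG ha hD1 haD haZ d₁ hd₁
  obtain ⟨z', hz', k, l, hrep₂⟩ := dent_repr hG ha hD2 hbD hbZ d₂ hd₂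
  have hcond : ∀ (u : G), u ∈ Q → ∀ i : Bool, cond i u 1 ∈ Q := by
    intro u hu i; cases i
    · exact Q.one_mem
    · exact hu
  have hAtom1 : ∀ i k : Bool, Commute (cond i a 1) (cond k b 1) := by
    intro i k
    cases i <;> cases k <;>
      first | exact Commute.one_left _ | exact Commute.one_right _ | exact hab
  have hAtom2 : ∀ i l : Bool, Commute (cond i a 1) (cond l (g * b * g⁻¹) 1) := by
    intro i l
    cases i <;> cases l <;>
      first | exact Commute.one_left _ | exact Commute.one_right _ | exact h1
  have hAtom3 : ∀ j k : Bool, Commute (cond j (g * a * g⁻¹) 1) (cond k b 1) := by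
    intro j k
    cases j <;> cases k <;>
      first | exact Commute.one_left _ | exact Commute.one_right _ | exact h2
  have hAtom4 : ∀ j l : Bool, Commute (cond j (g * a * g⁻¹) 1) (cond l (g * b * g⁻¹) 1) := by
    intro j l
    cases j <;> cases l <;>
      first | exact Commute.one_left _ | exact Commute.one_right _ | exact h3
  rw [hrep₁, hrep₂]
  have c1 : Commute (z * cond i a 1 * cond j (g * a * g⁻¹) 1) z' :=
    Commute.mul_left (Commute.mul_left (ZcommZ hz hz')
      ((Zcomm hz' (hcond a haQ i)).symm)) ((Zcomm hz' (hcond _ hAQ j)).symm)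
  have c2 : Commute (z * cond i a 1 * cond j (g * a * g⁻¹) 1) (cond k b 1) :=
    Commute.mul_left (Commute.mul_left (Zcomm hz (hcond b hbQ k))
      (hAtom1 i k)) (hAtom3 j k)
  have c3 : Commute (z * cond i a 1 * cond j (g * a * g⁻¹) 1) (cond l (g * b * g⁻¹) 1) :=
    Commute.mul_left (Commute.mul_left (Zcomm hz (hcond _ hBQ l))
      (hAtom2 i l)) (hAtom4 j l)
  exact ((c1.mul_right c2).mul_right c3).eq

end

end Bx

/-- for distinct dents `D₁ ≠ D₂` with diagonal dent `D₃`: if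
`[D₁,D₂] = 1` then the number of singular dents among the three is odd, and if
`[D₁,D₂] ≠ 1` then the number of non-singular dents among the three is odd. -/
theorem stmt7 (G : Type*) [Group G] (Q : Subgroup G) (m : ℕ)
    (hG : IsBiextraspecial G Q m)
    (D₁ D₂ D₃ : Subgroup G) (hdiag : IsDiagonal G Q D₁ D₂ D₃) :
    (DentsCommute G D₁ D₂ →
      ((IsSingularDent G D₁ ∧ IsSingularDent G D₂ ∧ IsSingularDent G D₃) ∨
        (IsSingularDent G D₁ ∧ ¬IsSingularDent G D₂ ∧ ¬IsSingularDent G D₃) ∨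
        (¬IsSingularDent G D₁ ∧ IsSingularDent G D₂ ∧ ¬IsSingularDent G D₃) ∨
        (¬IsSingularDent G D₁ ∧ ¬IsSingularDent G D₂ ∧ IsSingularDent G D₃))) ∧
    (¬DentsCommute G D₁ D₂ →
      ((¬IsSingularDent G D₁ ∧ ¬IsSingularDent G D₂ ∧ ¬IsSingularDent G D₃) ∨
        (¬IsSingularDent G D₁ ∧ IsSingularDent G D₂ ∧ IsSingularDent G D₃) ∨
        (IsSingularDent G D₁ ∧ ¬IsSingularDent G D₂ ∧ IsSingularDent G D₃) ∨
        (IsSingularDent G D₁ ∧ IsSingularDent G D₂ ∧ ¬IsSingularDent G D₃))) := by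
  obtain ⟨hD1, hD2, hD3, h12, h31, h32, hle⟩ := hdiag
  obtain ⟨g, t, ha⟩ := Bx.aux_exists hG
  haveI := hG.normal
  -- distinct dents intersect inside the centre
  have hdistinct : ∀ {Di Dj : Subgroup G}, IsDent G Q Di → IsDent G Q Dj → Di ≠ Dj →
      ∀ {d : G}, d ∈ Di → d ∈ Dj → d ∉ centerOf G Q → False := by
    intro Di Dj hDi hDj hne d hdi hdj hdZ
    have hNi : (Di ⊓ Dj).Normal := by
      constructor
      intro n hn γ
      exact ⟨hDi.normal.conj_mem n hn.1 γ, hDj.normal.conj_mem n hn.2 γ⟩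
    have hZle : centerOf G Q ≤ Di ⊓ Dj := le_inf hDi.center_lt.le hDj.center_lt.le
    have hlt : centerOf G Q < Di ⊓ Dj :=
      SetLike.lt_iff_le_and_exists.mpr ⟨hZle, d, Subgroup.mem_inf.mpr ⟨hdi, hdj⟩, hdZ⟩
    have e1 := hDi.minimal _ hNi hlt inf_le_left
    have e2 := hDj.minimal _ hNi hlt inf_le_right
    exact hne (e1.symm.trans e2)
  -- the special generator of D₃ and its decomposition
  obtain ⟨x, hxD3, hxZ, ζt, hζt, hxt⟩ := Bx.dent_spec hG ha hD3
  have hx12 : x ∈ D₁ ⊔ D₂ := hle hxD3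
  obtain ⟨a, haD1, b, hbD2, hab⟩ : ∃ a ∈ D₁, ∃ b ∈ D₂, a * b = x := by
    haveI := hD2.normal
    have hset : x ∈ (D₁ : Set G) * (D₂ : Set G) := by
      rw [← Subgroup.mul_normal D₁ D₂]
      exact hx12
    rw [Set.mem_mul] at hset
    obtain ⟨a, ha', b, hb', hab⟩ := hset
    exact ⟨a, ha', b, hb', hab⟩
  have haZ : a ∉ centerOf G Q := by
    intro h
    exact hdistinct hD3 hD2 h32 hxD3
      (by rw [← hab]; exact mul_mem (hD2.center_lt.le h) hbD2) hxZ
  have hbZ : b ∉ centerOf G Q := by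
    intro h
    exact hdistinct hD3 hD1 h31 hxD3
      (by rw [← hab]; exact mul_mem haD1 (hD1.center_lt.le h)) hxZ
  have haQ : a ∈ Q := hD1.lt_Q.le haD1
  have hbQ : b ∈ Q := hD2.lt_Q.le hbD2
  have hxQ : x ∈ Q := hD3.lt_Q.le hxD3
  -- t fixes the parts modulo Z
  have hxt' : t * (a * b) * t⁻¹ = (a * b) * ζt := by rw [hab]; exact hxt
  have h1 : (t * a * t⁻¹) * (t * b * t⁻¹) = (a * b) * ζt := by
    rw [show (t*a*t⁻¹)*(t*b*t⁻¹) = t*(a*b)*t⁻¹ from by group, hxt']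
  have heq : a⁻¹ * (t * a * t⁻¹) = b * ζt * (t * b * t⁻¹)⁻¹ := by
    calc a⁻¹ * (t*a*t⁻¹) = a⁻¹ * ((t*a*t⁻¹)*(t*b*t⁻¹)) * (t*b*t⁻¹)⁻¹ := by group
      _ = a⁻¹ * ((a*b)*ζt) * (t*b*t⁻¹)⁻¹ := by rw [h1]
      _ = b * ζt * (t*b*t⁻¹)⁻¹ := by group
  have hza : a⁻¹ * (t * a * t⁻¹) ∈ centerOf G Q := by
    by_contra hmem
    have hin1 : a⁻¹ * (t * a * t⁻¹) ∈ D₁ :=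
      mul_mem (inv_mem haD1) (hD1.normal.conj_mem a haD1 t)
    have hin2 : a⁻¹ * (t * a * t⁻¹) ∈ D₂ := by
      rw [heq]
      exact mul_mem (mul_mem hbD2 (hD2.center_lt.le hζt))
        (inv_mem (hD2.normal.conj_mem b hbD2 t))
    exact hdistinct hD1 hD2 h12 hin1 hin2 hmem
  have hta : t * a * t⁻¹ = a * (a⁻¹ * (t * a * t⁻¹)) := by group
  have hzb : b⁻¹ * (t * b * t⁻¹) ∈ centerOf G Q := by
    have h2 : t * b * t⁻¹ = (b * ζt * (t*b*t⁻¹)⁻¹)⁻¹ * (b * ζt) := by group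
    rw [← heq] at h2
    rw [show b⁻¹ * (t * b * t⁻¹)
        = b⁻¹ * ((a⁻¹ * (t*a*t⁻¹))⁻¹ * (b * ζt)) from by rw [← h2]]
    rw [show b⁻¹ * ((a⁻¹ * (t*a*t⁻¹))⁻¹ * (b * ζt))
        = (b⁻¹ * (a⁻¹ * (t*a*t⁻¹))⁻¹ * (b⁻¹)⁻¹) * ζt from by group]
    exact mul_mem (Bx.conjZ hG (inv_mem hza) b⁻¹) hζt
  have htb : t * b * t⁻¹ = b * (b⁻¹ * (t * b * t⁻¹)) := by group
  -- the four central values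
  have hA : a * a ∈ centerOf G Q := hG.sq_mem_center a haQ
  have hB : b * b ∈ centerOf G Q := hG.sq_mem_center b hbQ
  have hw : x * x ∈ centerOf G Q := hG.sq_mem_center x hxQ
  have hP : Bx.cc b a ∈ centerOf G Q := Bx.cc_mem hG hbQ haQ
  -- the relation  x² = [b,a]·a²·b²
  have hrel : x * x = Bx.cc b a * (a * a) * (b * b) := by
    calc x * x = a * (b * a) * b := by rw [← hab]; group
      _ = a * ((Bx.cc b a) * (a * b)) * b := by
          rw [show b * a = Bx.cc b a * (a * b) from by unfold Bx.cc; group]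
      _ = (a * Bx.cc b a) * (a * b * b) := by group
      _ = ((Bx.cc b a) * a) * (a * b * b) := by rw [← Bx.Zcomm hP haQ]
      _ = Bx.cc b a * (a * a) * (b * b) := by group
  -- t fixes all four values
  have tfix_sq : ∀ (u zu : G), u ∈ Q → zu ∈ centerOf G Q → t * u * t⁻¹ = u * zu →
      t * (u * u) * t⁻¹ = u * u := by
    intro u zu huQ hzu hut
    calc t * (u * u) * t⁻¹ = (t * u * t⁻¹) * (t * u * t⁻¹) := by group
      _ = (u * zu) * (u * zu) := by rw [hut]
      _ = u * (zu * u) * zu := by group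
      _ = u * (u * zu) * zu := by rw [Bx.Zcomm hzu huQ]
      _ = (u * u) * (zu * zu) := by group
      _ = u * u := by rw [hG.center_exponent zu hzu]; group
  have htA : t * (a * a) * t⁻¹ = a * a := tfix_sq a _ haQ hza hta
  have htB : t * (b * b) * t⁻¹ = b * b := tfix_sq b _ hbQ hzb htb
  have htw : t * (x * x) * t⁻¹ = x * x := tfix_sq x ζt hxQ hζt hxt
  have htP : t * (Bx.cc b a) * t⁻¹ = Bx.cc b a := by
    rw [Bx.cc_conj t b a, htb, hta]
    rw [Bx.cc_Zleft hG hbQ (mul_mem haQ (Bx.Zle hza)) hzb,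
      Bx.cc_Zright hG hbQ haQ hza]
  -- singularity criteria
  have hs1 : ¬ IsSingularDent G D₁ ↔ a * a ≠ 1 := by
    constructor
    · intro hn h
      exact hn (Bx.dent_dichotomy hG ha hD1 ⟨a, haD1, haZ, h⟩)
    · intro h hs; exact h (hs a haD1)
  have hs2 : ¬ IsSingularDent G D₂ ↔ b * b ≠ 1 := by
    constructor
    · intro hn h
      exact hn (Bx.dent_dichotomy hG ha hD2 ⟨b, hbD2, hbZ, h⟩)
    · intro h hs; exact h (hs b hbD2)
  have hs3 : ¬ IsSingularDent G D₃ ↔ x * x ≠ 1 := by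
    constructor
    · intro hn h
      exact hn (Bx.dent_dichotomy hG ha hD3 ⟨x, hxD3, hxZ, h⟩)
    · intro h hs; exact h (hs x hxD3)
  have hs1' : IsSingularDent G D₁ ↔ a * a = 1 :=
    ⟨fun hs => hs a haD1, fun h => Bx.dent_dichotomy hG ha hD1 ⟨a, haD1, haZ, h⟩⟩
  have hs2' : IsSingularDent G D₂ ↔ b * b = 1 :=
    ⟨fun hs => hs b hbD2, fun h => Bx.dent_dichotomy hG ha hD2 ⟨b, hbD2, hbZ, h⟩⟩
  have hs3' : IsSingularDent G D₃ ↔ x * x = 1 :=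
    ⟨fun hs => hs x hxD3, fun h => Bx.dent_dichotomy hG ha hD3 ⟨x, hxD3, hxZ, h⟩⟩
  have hcomm_iff : DentsCommute G D₁ D₂ ↔ Bx.cc b a = 1 := by
    constructor
    · intro h
      exact Bx.cc_eq_one_iff.mpr (h a haD1 b hbD2).symm
    · intro h
      exact Bx.commute_of_pair hG ha hD1 hD2 haD1 haZ hbD2 hbZ
        (Bx.cc_eq_one_iff.mp h).symm
  constructor
  · -- commuting case
    intro hcomm
    have hP1 : Bx.cc b a = 1 := hcomm_iff.mp hcomm
    rw [hP1, one_mul] at hrel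
    by_cases hA1 : a * a = 1 <;> by_cases hB1 : b * b = 1
    · left
      refine ⟨hs1'.mpr hA1, hs2'.mpr hB1, hs3'.mpr ?_⟩
      rw [hrel, hA1, hB1]; group
    · right; left
      refine ⟨hs1'.mpr hA1, hs2.mpr hB1, hs3.mpr ?_⟩
      rw [hrel, hA1, one_mul]; exact hB1
    · right; right; left
      refine ⟨hs1.mpr hA1, hs2'.mpr hB1, hs3.mpr ?_⟩
      rw [hrel, hB1, mul_one]; exact hA1
    · right; right; right
      refine ⟨hs1.mpr hA1, hs2.mpr hB1, hs3'.mpr ?_⟩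
      have hABeq : a * a = b * b := Bx.t_fix_unique hG ha hA hB htA htB hA1 hB1
      rw [hrel, hABeq, hG.center_exponent _ hB]
  · -- non-commuting case
    intro hncomm
    have hP1 : Bx.cc b a ≠ 1 := fun h => hncomm (hcomm_iff.mpr h)
    by_cases hA1 : a * a = 1 <;> by_cases hB1 : b * b = 1
    · right; right; right
      refine ⟨hs1'.mpr hA1, hs2'.mpr hB1, hs3.mpr ?_⟩
      rw [hrel, hA1, hB1, mul_one, mul_one]; exact hP1
    · right; right; left
      refine ⟨hs1'.mpr hA1, hs2.mpr hB1, hs3'.mpr ?_⟩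
      have hPB : Bx.cc b a = b * b := Bx.t_fix_unique hG ha hP hB htP htB hP1 hB1
      rw [hrel, hA1, mul_one, hPB, hG.center_exponent _ hB]
    · right; left
      refine ⟨hs1.mpr hA1, hs2'.mpr hB1, hs3'.mpr ?_⟩
      have hPA : Bx.cc b a = a * a := Bx.t_fix_unique hG ha hP hA htP htA hP1 hA1
      rw [hrel, hB1, mul_one, hPA, hG.center_exponent _ hA]
    · left
      refine ⟨hs1.mpr hA1, hs2.mpr hB1, hs3.mpr ?_⟩
      have hABeq : a * a = b * b := Bx.t_fix_unique hG ha hA hB htA htB hA1 hB1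
      rw [hrel, hABeq, show Bx.cc b a * (b*b) * (b*b) = Bx.cc b a * ((b*b)*(b*b)) from by group,
        hG.center_exponent _ hB, mul_one]
      exact hP1
end

section
/- Let G = Q:L be a biextraspecial group of rank m with L = ⟨s,t⟩, t an involution. Then R_t = C_Q(t) has order 2^(m+1). -/
open scoped commutatorElement

/-- conjugation monoid hom on a subgroup preserved by conjugation -/
def conjSub {G : Type*} [Group G] (Q : Subgroup G) (g : G) (h : ∀ x ∈ Q, g*x*g⁻¹ ∈ Q) :
    Q →* Q where
  toFun q := ⟨g * q * g⁻¹, h q q.2⟩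
  map_one' := by ext; simp
  map_mul' a b := by ext; push_cast; group

@[simp] lemma conjSub_coe {G : Type*} [Group G] (Q : Subgroup G) (g : G)
    (h : ∀ x ∈ Q, g*x*g⁻¹ ∈ Q) (q : Q) : (conjSub Q g h q : G) = g * q * g⁻¹ := rfl

lemma centerOf_le {G : Type*} [Group G] (Q : Subgroup G) : centerOf G Q ≤ Q := inf_le_right

lemma centerOf_comm {G : Type*} [Group G] (Q : Subgroup G) {a b : G}
    (ha : a ∈ centerOf G Q) (hb : b ∈ Q) : a * b = b * a :=
  (Subgroup.mem_centralizer_iff.mp ha.1 b hb).symm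

lemma centerOf_conj {G : Type*} [Group G] (Q : Subgroup G) (hQ : Q.Normal) (g : G)
    {z : G} (hz : z ∈ centerOf G Q) : g * z * g⁻¹ ∈ centerOf G Q := by
  refine ⟨Subgroup.mem_centralizer_iff.mpr fun h hh => ?_, hQ.conj_mem z hz.2 g⟩
  have h1 : g⁻¹ * h * g ∈ Q := by
    have := hQ.conj_mem h hh g⁻¹; simpa using this
  have h2 : z * (g⁻¹ * h * g) = (g⁻¹ * h * g) * z := (centerOf_comm Q hz h1).symm ▸ rfl
  have h3 := centerOf_comm Q hz h1
  calc h * (g * z * g⁻¹) = g * ((g⁻¹ * h * g) * z) * g⁻¹ := by group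
    _ = g * (z * (g⁻¹ * h * g)) * g⁻¹ := by rw [h3]
    _ = g * z * g⁻¹ * h := by group

lemma conj_conj {G : Type*} [Group G] (g h x : G) : g*(h*x*h⁻¹)*g⁻¹ = (g*h)*x*(g*h)⁻¹ := by
  simp [mul_assoc]


lemma engine {V : Type*} [Group V] [Finite V]
    (hcomm : ∀ a b : V, a * b = b * a) (hexp : ∀ v : V, v * v = 1)
    (σ τ : V → V) (hσhom : ∀ a b, σ (a*b) = σ a * σ b) (hτhom : ∀ a b, τ (a*b) = τ a * τ b)
    (hσ3 : ∀ v, σ (σ (σ v)) = v) (hτ2 : ∀ v, τ (τ v) = v)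
    (hrel : ∀ v, τ (σ v) = σ (σ (τ v)))
    (hfpf : ∀ v, σ v = v → v = 1) :
    Nat.card {v : V // τ v = v} * Nat.card {v : V // τ v = v} = Nat.card V ∧
      ∀ v, τ v = v → ∃ w, w * τ w = v := by
  have hinv : ∀ v : V, v⁻¹ = v := fun v => by
    rw [inv_eq_iff_mul_eq_one]; exact hexp v
  have hτ1 : τ 1 = 1 := by
    have := hτhom 1 1; simpa using this.symm
  -- norm is 1
  have hnorm : ∀ v : V, v * σ v * σ (σ v) = 1 := by
    intro v
    apply hfpf
    rw [hσhom, hσhom, hσ3]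
    rw [hcomm (σ v * σ (σ v)) v]
    rw [mul_assoc]
  have hfix_range : ∀ v, τ v = v → σ v * τ (σ v) = v := by
    intro v hv
    rw [hrel, hv]
    have h1 := hnorm v
    have : σ v * σ (σ v) = v⁻¹ := by
      rw [eq_inv_iff_mul_eq_one, hcomm, ← mul_assoc]; exact h1
    rw [this, hinv]
  -- the homomorphism f v = v * τ v
  let f : V →* V := {
    toFun := fun v => v * τ v
    map_one' := by simp [hτ1]
    map_mul' := by
      intro a b
      show a * b * τ (a*b) = (a * τ a) * (b * τ b)
      rw [hτhom]
      calc a * b * (τ a * τ b) = a * (b * τ a) * τ b := by group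
        _ = a * (τ a * b) * τ b := by rw [hcomm b (τ a)]
        _ = a * τ a * (b * τ b) := by group }
  have hker : ∀ v, f v = 1 ↔ τ v = v := by
    intro v
    show v * τ v = 1 ↔ _
    rw [mul_eq_one_iff_eq_inv, hinv]
    exact eq_comm
  have hrange : ∀ v, (∃ w, f w = v) ↔ τ v = v := by
    intro v
    constructor
    · rintro ⟨w, rfl⟩
      show τ (w * τ w) = w * τ w
      rw [hτhom, hτ2, hcomm]
    · intro hv
      exact ⟨σ v, hfix_range v hv⟩
  constructor
  · have h1 : Nat.card V = Nat.card (V ⧸ f.ker) * Nat.card f.ker :=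
      Subgroup.card_eq_card_quotient_mul_card_subgroup f.ker
    have h2 : Nat.card (V ⧸ f.ker) = Nat.card f.range :=
      Nat.card_congr (QuotientGroup.quotientKerEquivRange f).toEquiv
    have h3 : Nat.card f.ker = Nat.card {v : V // τ v = v} := by
      apply Nat.card_congr
      exact Equiv.subtypeEquivRight (fun v => by rw [MonoidHom.mem_ker]; exact hker v)
    have h4 : Nat.card f.range = Nat.card {v : V // τ v = v} := by
      apply Nat.card_congr
      exact Equiv.subtypeEquivRight (fun v => by rw [MonoidHom.mem_range]; exact hrange v)
    rw [h1, h2, h3, h4]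
  · intro v hv
    exact ⟨σ v, hfix_range v hv⟩


lemma perm3_rel : ∀ a b : Equiv.Perm (Fin 3), a*a = 1 → a ≠ 1 → b*b*b = 1 → b ≠ 1 →
    a*b*a⁻¹*b = 1 := by decide

lemma perm3_ex : ∃ b : Equiv.Perm (Fin 3), b*b*b = 1 ∧ b ≠ 1 := by decide

lemma setup {G : Type*} [Group G] (Q L : Subgroup G) (hQ : Q.Normal)
    (e : (G ⧸ Q) ≃* Equiv.Perm (Fin 3))
    (hL : Q.IsComplement' L) (t : G) (ht : t ∈ L) (hot : orderOf t = 2) :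
    ∃ s : G, s^3 = 1 ∧ orderOf s = 3 ∧ t*s*t⁻¹ = s⁻¹ ∧ t*t = 1 := by
  have ht2 : t*t = 1 := by
    have := pow_orderOf_eq_one t; rw [hot] at this; rwa [pow_two] at this
  have htne : t ≠ 1 := by
    intro h; rw [h] at hot; simp at hot
  have htQ : t ∉ Q := by
    intro h
    exact htne (Subgroup.disjoint_def.mp hL.disjoint h ht)
  -- properties in the quotient
  have hrelP : ∀ a b : G ⧸ Q, a*a = 1 → a ≠ 1 → b*b*b = 1 → b ≠ 1 → a*b*a⁻¹*b = 1 := by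
    intro a b ha ha1 hb hb1
    have := perm3_rel (e a) (e b) (by rw [← map_mul, ha, map_one])
      (fun h => ha1 (e.injective (by rw [h, map_one])))
      (by rw [← map_mul, ← map_mul, hb, map_one])
      (fun h => hb1 (e.injective (by rw [h, map_one])))
    apply e.injective
    rw [map_mul, map_mul, map_mul, map_inv, this, map_one]
  have hexP : ∃ b : G ⧸ Q, b*b*b = 1 ∧ b ≠ 1 := by
    obtain ⟨b, hb, hb1⟩ := perm3_ex
    exact ⟨e.symm b, by rw [← map_mul, ← map_mul, hb, map_one],
      fun h => hb1 (by rw [← e.apply_symm_apply b, h, map_one])⟩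
  obtain ⟨b, hb3, hb1⟩ := hexP
  -- lift b to L
  obtain ⟨q, hq⟩ := QuotientGroup.mk_surjective b
  obtain ⟨⟨⟨u, hu⟩, ⟨l, hl⟩⟩, hul, -⟩ := hL.existsUnique q
  have hmkl : (l : G ⧸ Q) = b := by
    rw [← hq, ← hul]
    simp only [QuotientGroup.mk_mul]
    rw [QuotientGroup.eq_one_iff u |>.mpr hu, one_mul]
  have hs3 : l^3 = 1 := by
    have h1 : ((l^3 : G) : G ⧸ Q) = 1 := by
      rw [QuotientGroup.mk_pow]
      rw [hmkl, pow_succ, pow_two]; exact hb3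
    have h2 : l^3 ∈ Q := (QuotientGroup.eq_one_iff _).mp h1
    have h3 : l^3 ∈ L := pow_mem hl 3
    exact Subgroup.disjoint_def.mp hL.disjoint h2 h3
  have hs1 : l ≠ 1 := by
    intro h; rw [h] at hmkl; simp at hmkl; exact hb1 hmkl.symm
  refine ⟨l, hs3, orderOf_eq_prime hs3 hs1, ?_, ht2⟩
  -- relation
  have hta : ((t : G) : G ⧸ Q) * t * ((t:G) : G⧸Q)⁻¹ * t = 1 → True := fun _ => trivial
  have hrel := hrelP ((t : G) : G ⧸ Q) b (by rw [← QuotientGroup.mk_mul, ht2]; rfl)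
    (fun h => htQ ((QuotientGroup.eq_one_iff t).mp h)) hb3 hb1
  rw [← hmkl] at hrel
  have : ((t * l * t⁻¹ * l : G) : G ⧸ Q) = 1 := by
    simpa using hrel
  have hmem : t * l * t⁻¹ * l ∈ Q := (QuotientGroup.eq_one_iff _).mp this
  have hmemL : t * l * t⁻¹ * l ∈ L := by
    exact mul_mem (mul_mem (mul_mem ht hl) (inv_mem ht)) hl
  have h0 : t * l * t⁻¹ * l = 1 := Subgroup.disjoint_def.mp hL.disjoint hmem hmemL
  have : t * l * t⁻¹ * l * l⁻¹ = 1 * l⁻¹ := by rw [h0]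
  simpa using this

/-- for an involution `t` of the complement `L`, the centraliser
`R_t = C_Q(t)` has order `2^(m+1)`. -/
theorem stmt9 (G : Type*) [Group G] (Q L : Subgroup G) (m : ℕ)
    (hG : IsBiextraspecial G Q m) (hL : Q.IsComplement' L)
    (t : G) (ht : t ∈ L) (hot : orderOf t = 2) :
    Nat.card (Subgroup.centralizer {t} ⊓ Q : Subgroup G) = 2 ^ (m + 1) := by
  obtain ⟨hQN, hcardQ, ⟨e⟩, hcardZ, hZexp, hZfaith, hsq, hcommQ, hfpf3⟩ := hG
  obtain ⟨s, hs3, hos, hts, ht2⟩ := setup Q L hQN e hL t ht hot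
  set Z := centerOf G Q with hZdef
  have hZle : Z ≤ Q := centerOf_le Q
  have hfinQ : Finite Q := Nat.finite_of_card_ne_zero (by rw [hcardQ]; positivity)
  have hfinZ : Finite Z := Nat.finite_of_card_ne_zero (by rw [hcardZ]; omega)
  -- G-level conjugation identities
  have hs3' : s * (s * s) = 1 := by
    have : s^3 = s * (s * s) := by rw [pow_succ, pow_two]; group
    rwa [this] at hs3
  have hsinv : s⁻¹ = s * s := inv_eq_of_mul_eq_one_right hs3'
  have hts' : t * s = (s * s) * t := by
    have h1 : t * s = s⁻¹ * t := by
      have : (t*s*t⁻¹)*t = s⁻¹*t := by rw [hts]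
      calc t * s = (t*s*t⁻¹)*t := by group
        _ = s⁻¹ * t := this
    rw [h1, hsinv]
  have idA' : ∀ x : G, s*(s*(s*x*s⁻¹)*s⁻¹)*s⁻¹ = x := by
    intro x
    rw [conj_conj s s x, conj_conj s (s*s) x, hs3']
    try simp
  have idB : ∀ x : G, t*(t*x*t⁻¹)*t⁻¹ = x := by
    intro x
    rw [conj_conj t t x, ht2]
    try simp
  have idC : ∀ x : G, t*(s*x*s⁻¹)*t⁻¹ = s*(s*(t*x*t⁻¹)*s⁻¹)*s⁻¹ := by
    intro x
    rw [conj_conj t s x, conj_conj s s (t*x*t⁻¹), conj_conj (s*s) t x, hts']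
    try rw [mul_assoc]
    try rfl
  -- conjugation maps on Z
  have hconjZ : ∀ g : G, ∀ x ∈ Z, g*x*g⁻¹ ∈ Z := fun g x hx => centerOf_conj Q hQN g hx
  let σZ : Z →* Z := conjSub Z s (hconjZ s)
  let τZ : Z →* Z := conjSub Z t (hconjZ t)
  have hZcommS : ∀ a b : Z, a * b = b * a := fun a b =>
    Subtype.ext (centerOf_comm Q a.2 (hZle b.2))
  have hZexpS : ∀ a : Z, a * a = 1 := fun a => Subtype.ext (hZexp a a.2)
  have hfpfZ : ∀ v : Z, σZ v = v → v = 1 := by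
    intro v hv
    exact Subtype.ext (hfpf3 s hos v (hZle v.2) (congrArg Subtype.val hv))
  obtain ⟨hZcard, hZsurj⟩ := engine hZcommS hZexpS σZ τZ (map_mul σZ) (map_mul τZ)
    (fun v => Subtype.ext (idA' v)) (fun v => Subtype.ext (idB v))
    (fun v => Subtype.ext (idC v)) hfpfZ
  have hcardCZ : Nat.card {z : Z // τZ z = z} = 2 := by
    have : Nat.card {z : Z // τZ z = z} * Nat.card {z : Z // τZ z = z} = 2 * 2 := by
      rw [hZcard]; rw [hcardZ]
    exact Nat.mul_self_inj.mp (by omega)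
  -- the quotient V = Q / Z'
  set Z' : Subgroup Q := Z.subgroupOf Q with hZ'def
  have hmemZ' : ∀ q : Q, q ∈ Z' ↔ (q : G) ∈ Z := fun q => Subgroup.mem_subgroupOf
  haveI hZ'N : Z'.Normal := by
    constructor
    intro z hz q
    rw [hmemZ'] at hz ⊢
    have : ((q * z * q⁻¹ : Q) : G) = (q : G) * z * (q : G)⁻¹ := by push_cast; ring_nf
    rw [this]
    exact centerOf_conj Q hQN q hz
  have hconjQ : ∀ g : G, ∀ x ∈ Q, g*x*g⁻¹ ∈ Q := fun g x hx => hQN.conj_mem x hx g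
  let σQ : Q →* Q := conjSub Q s (hconjQ s)
  let τQ : Q →* Q := conjSub Q t (hconjQ t)
  have hσQZ' : Z' ≤ Z'.comap σQ := by
    intro z hz; rw [Subgroup.mem_comap, hmemZ']; exact hconjZ s z ((hmemZ' z).mp hz)
  have hτQZ' : Z' ≤ Z'.comap τQ := by
    intro z hz; rw [Subgroup.mem_comap, hmemZ']; exact hconjZ t z ((hmemZ' z).mp hz)
  let σV := QuotientGroup.map Z' Z' σQ hσQZ'
  let τV := QuotientGroup.map Z' Z' τQ hτQZ'
  have hσVmk : ∀ q : Q, σV (q : Q ⧸ Z') = ((σQ q : Q) : Q ⧸ Z') := fun q =>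
    QuotientGroup.map_mk Z' Z' σQ hσQZ' q
  have hτVmk : ∀ q : Q, τV (q : Q ⧸ Z') = ((τQ q : Q) : Q ⧸ Z') := fun q =>
    QuotientGroup.map_mk Z' Z' τQ hτQZ' q
  -- engine hypotheses on V
  have hcommV : ∀ a b : Q ⧸ Z', a * b = b * a := by
    intro a b
    induction a using QuotientGroup.induction_on with | H q =>
    induction b using QuotientGroup.induction_on with | H r =>
    rw [← QuotientGroup.mk_mul, ← QuotientGroup.mk_mul, QuotientGroup.eq]
    rw [hmemZ']
    have : (((q*r)⁻¹ * (r*q) : Q) : G) = ⁅(r:G)⁻¹, (q:G)⁻¹⁆ := by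
      push_cast; rw [commutatorElement_def]; group
    rw [this]
    exact hcommQ _ (inv_mem r.2) _ (inv_mem q.2)
  have hexpV : ∀ a : Q ⧸ Z', a * a = 1 := by
    intro a
    induction a using QuotientGroup.induction_on with | H q =>
    rw [← QuotientGroup.mk_mul, QuotientGroup.eq_one_iff, hmemZ']
    push_cast
    exact hsq q q.2
  have hσ3V : ∀ v : Q ⧸ Z', σV (σV (σV v)) = v := by
    intro v
    induction v using QuotientGroup.induction_on with | H q =>
    rw [hσVmk, hσVmk, hσVmk]
    congr 1
    exact Subtype.ext (idA' q)
  have hτ2V : ∀ v : Q ⧸ Z', τV (τV v) = v := by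
    intro v
    induction v using QuotientGroup.induction_on with | H q =>
    rw [hτVmk, hτVmk]
    congr 1
    exact Subtype.ext (idB q)
  have hrelV : ∀ v : Q ⧸ Z', τV (σV v) = σV (σV (τV v)) := by
    intro v
    induction v using QuotientGroup.induction_on with | H q =>
    rw [hσVmk, hτVmk, hτVmk, hσVmk, hσVmk]
    congr 1
    exact Subtype.ext (idC q)
  -- fixed-point-freeness on V
  letI : CommGroup Z := { (inferInstance : Group Z) with mul_comm := hZcommS }
  have hfpfV : ∀ v : Q ⧸ Z', σV v = v → v = 1 := by
    intro v hv
    induction v using QuotientGroup.induction_on with | H q =>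
    rw [hσVmk, QuotientGroup.eq] at hv
    rw [hmemZ'] at hv
    have ha : ((s * (q:G) * s⁻¹)⁻¹ * q : G) ∈ Z := by
      have : (((σQ q)⁻¹ * q : Q) : G) = (s * (q:G) * s⁻¹)⁻¹ * q := by
        simp [σQ, conjSub_coe]
      rwa [this] at hv
    -- the injective (hence surjective) map z ↦ σZ z * z⁻¹ on Z
    let kmap : Z →* Z := {
      toFun := fun z => σZ z * z⁻¹
      map_one' := by simp
      map_mul' := by
        intro a b
        show σZ (a*b) * (a*b)⁻¹ = (σZ a * a⁻¹) * (σZ b * b⁻¹)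
        rw [map_mul, mul_inv]
        simp [mul_comm, mul_assoc, mul_left_comm] }
    have hkinj : Function.Injective kmap := by
      rw [injective_iff_map_eq_one]
      intro z hz
      have h : σZ z * z⁻¹ = 1 := hz
      rw [mul_inv_eq_one] at h
      exact hfpfZ z h
    have hksurj : Function.Surjective kmap := Finite.surjective_of_injective hkinj
    obtain ⟨z, hz⟩ := hksurj ⟨_, ha⟩
    have hzG : s * (z:G) * s⁻¹ * (z:G)⁻¹ = (s * (q:G) * s⁻¹)⁻¹ * q := by
      have := congrArg Subtype.val hz
      simpa [kmap, σZ, conjSub_coe] using this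
    have hfix : s * ((q:G) * z) * s⁻¹ = (q:G) * z := by
      have h1 : s * ((q:G) * z) * s⁻¹ = (s * (q:G) * s⁻¹) * (s * (z:G) * s⁻¹) := by group
      rw [h1]
      have h2 : s * (z:G) * s⁻¹ = ((s * (q:G) * s⁻¹)⁻¹ * q) * z := by
        rw [← hzG]; group
      rw [h2]; group
    have hone : (q : G) * z = 1 := hfpf3 s hos _ (mul_mem q.2 (hZle z.2)) hfix
    rw [QuotientGroup.eq_one_iff, hmemZ']
    have : (q : G) = (z : G)⁻¹ := eq_inv_of_mul_eq_one_left hone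
    rw [this]
    exact inv_mem z.2
  haveI hfinV : Finite (Q ⧸ Z') := Quotient.finite _
  obtain ⟨hVcard, -⟩ := engine hcommV hexpV σV τV (map_mul σV) (map_mul τV)
    hσ3V hτ2V hrelV hfpfV
  -- cardinality of V
  have hcardZ' : Nat.card Z' = 4 := by
    rw [Nat.card_congr (Subgroup.subgroupOfEquivOfLe hZle).toEquiv]; exact hcardZ
  have hcardV : Nat.card (Q ⧸ Z') = 2 ^ (2 * m) := by
    have h1 := Subgroup.card_eq_card_quotient_mul_card_subgroup Z'
    rw [hcardQ, hcardZ'] at h1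
    have h2 : 2 ^ (2 + 2*m) = 2^(2*m) * 4 := by rw [pow_add]; ring
    omega
  have hcardCV : Nat.card {v : Q ⧸ Z' // τV v = v} = 2 ^ m := by
    have h1 : Nat.card {v : Q ⧸ Z' // τV v = v} * Nat.card {v : Q ⧸ Z' // τV v = v}
        = 2^m * 2^m := by
      rw [hVcard, hcardV, ← pow_add, two_mul]
    exact Nat.mul_self_inj.mp h1
  -- the fixed subgroup T of Q
  let T : Subgroup Q := {
    carrier := {q : Q | t * (q:G) * t⁻¹ = q}
    one_mem' := by simp
    mul_mem' := by
      intro a b ha hb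
      simp only [Set.mem_setOf_eq] at *
      push_cast
      calc t * ((a:G) * b) * t⁻¹ = (t*(a:G)*t⁻¹) * (t*(b:G)*t⁻¹) := by group
        _ = (a:G) * b := by rw [ha, hb]
    inv_mem' := by
      intro a ha
      simp only [Set.mem_setOf_eq] at *
      push_cast
      have h1 : (t * (a:G) * t⁻¹)⁻¹ = t * ((a:G))⁻¹ * t⁻¹ := by simp [mul_assoc]
      rw [← h1, ha] }
  have hmemT : ∀ q : Q, q ∈ T ↔ t * (q:G) * t⁻¹ = q := fun _ => Iff.rfl
  let φ : T →* Q ⧸ Z' := (QuotientGroup.mk' Z').comp T.subtype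
  have hφ : ∀ x : T, φ x = ((x : Q) : Q ⧸ Z') := fun _ => rfl
  -- range of φ is the fixed points of τV
  have hrangeφ : ∀ v : Q ⧸ Z', v ∈ φ.range ↔ τV v = v := by
    intro v
    constructor
    · rintro ⟨x, rfl⟩
      rw [hφ, hτVmk]
      congr 1
      exact Subtype.ext x.2
    · intro hv
      induction v using QuotientGroup.induction_on with | H q =>
      rw [hτVmk, QuotientGroup.eq, hmemZ'] at hv
      have hzg : ((t * (q:G) * t⁻¹)⁻¹ * q : G) ∈ Z := by
        have : (((τQ q)⁻¹ * q : Q) : G) = (t * (q:G) * t⁻¹)⁻¹ * q := by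
          simp [τQ, conjSub_coe]
        rwa [this] at hv
      set zg : G := (t * (q:G) * t⁻¹)⁻¹ * q with hzgdef
      have hzgfix : τZ ⟨zg, hzg⟩ = ⟨zg, hzg⟩ := by
        apply Subtype.ext
        show t * zg * t⁻¹ = zg
        have h1 : t * zg * t⁻¹ = (t*(t * (q:G) * t⁻¹)*t⁻¹)⁻¹ * (t*(q:G)*t⁻¹) := by
          rw [hzgdef]; simp [mul_assoc]
        have h2 : (q:G)⁻¹ * (t*(q:G)*t⁻¹) = zg⁻¹ := by rw [hzgdef]; simp [mul_assoc]
        rw [h1, idB, h2]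
        exact inv_eq_of_mul_eq_one_right (hZexp zg hzg)
      obtain ⟨w, hw⟩ := hZsurj ⟨zg, hzg⟩ hzgfix
      have hwG : (w:G) * (t * (w:G) * t⁻¹) = zg := congrArg Subtype.val hw
      have hwexp : (w:G) * w = 1 := hZexp w w.2
      -- q' = q * w is fixed by τ and maps to v
      set q' : Q := q * ⟨(w:G), hZle w.2⟩ with hq'def
      have hq'fix : q' ∈ T := by
        rw [hmemT]
        have hc : ((q' : Q) : G) = (q:G) * w := rfl
        rw [hc]
        have h1 : t * ((q:G) * w) * t⁻¹ = (t*(q:G)*t⁻¹) * (t*(w:G)*t⁻¹) := by group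
        rw [h1]
        have h2 : t*(q:G)*t⁻¹ = (q:G) * zg⁻¹ := by rw [hzgdef]; group
        have h3 : t*(w:G)*t⁻¹ = (w:G)⁻¹ * zg := by rw [← hwG]; group
        rw [h2, h3]
        have h4 : zg⁻¹ * (w:G)⁻¹ = (w:G)⁻¹ * zg⁻¹ :=
          centerOf_comm Q (inv_mem hzg) (hZle (inv_mem w.2))
        have h5 : (w:G)⁻¹ = w := by rw [inv_eq_iff_mul_eq_one]; exact hwexp
        calc ((q:G) * zg⁻¹) * ((w:G)⁻¹ * zg) = (q:G) * ((zg⁻¹ * (w:G)⁻¹) * zg) := by group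
          _ = (q:G) * (((w:G)⁻¹ * zg⁻¹) * zg) := by rw [h4]
          _ = (q:G) * (w:G)⁻¹ := by group
          _ = (q:G) * w := by rw [h5]
      refine ⟨⟨q', hq'fix⟩, ?_⟩
      rw [hφ]
      show ((q' : Q) : Q ⧸ Z') = (q : Q ⧸ Z')
      rw [QuotientGroup.eq, hmemZ']
      have : ((q'⁻¹ * q : Q) : G) = (w:G)⁻¹ := by rw [hq'def]; push_cast; group
      rw [this]
      exact inv_mem w.2
  have hcardrange : Nat.card φ.range = 2 ^ m := by
    rw [Nat.card_congr (Equiv.subtypeEquivRight hrangeφ)]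
    exact hcardCV
  -- kernel of φ
  have hcardker : Nat.card φ.ker = 2 := by
    rw [← hcardCZ]
    apply Nat.card_congr
    refine ⟨fun x => ⟨⟨((x : T) : Q), ?_⟩, ?_⟩, fun z => ⟨⟨⟨(z:Z), hZle (z:Z).2⟩, ?_⟩, ?_⟩, ?_, ?_⟩
    · have := x.2
      rw [MonoidHom.mem_ker, hφ, QuotientGroup.eq_one_iff, hmemZ'] at this
      exact this
    · exact Subtype.ext (x.1).2
    · rw [hmemT]
      exact congrArg Subtype.val z.2
    · rw [MonoidHom.mem_ker, hφ, QuotientGroup.eq_one_iff, hmemZ']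
      exact (z:Z).2
    · intro x; ext; rfl
    · intro z; ext; rfl
  -- assemble
  have hcardT : Nat.card T = 2 ^ (m + 1) := by
    have h1 := Subgroup.card_eq_card_quotient_mul_card_subgroup φ.ker
    rw [Nat.card_congr (QuotientGroup.quotientKerEquivRange φ).toEquiv] at h1
    rw [hcardrange, hcardker] at h1
    rw [h1, pow_succ]
  rw [← hcardT]
  apply Nat.card_congr
  have fwd : ∀ g : ↥(Subgroup.centralizer {t} ⊓ Q), (⟨(g:G), g.2.2⟩ : Q) ∈ T := by
    intro g
    rw [hmemT]
    show t * (g:G) * t⁻¹ = (g:G)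
    have hcomm : t * (g:G) = (g:G) * t := Subgroup.mem_centralizer_iff.mp g.2.1 t rfl
    rw [hcomm]
    group
  have bwd : ∀ x : T, ((x:Q):G) ∈ Subgroup.centralizer {t} ⊓ Q := by
    intro x
    refine Subgroup.mem_inf.mpr ⟨Subgroup.mem_centralizer_iff.mpr ?_, (x:Q).2⟩
    intro u hu
    rw [Set.mem_singleton_iff] at hu
    rw [hu]
    have hx := (hmemT _).mp x.2
    calc t * ((x:Q):G) = (t * ((x:Q):G) * t⁻¹) * t := by group
      _ = ((x:Q):G) * t := by rw [hx]
  exact ⟨fun g => ⟨⟨(g:G), g.2.2⟩, fwd g⟩, fun x => ⟨((x:Q):G), bwd x⟩,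
    fun g => by ext; rfl, fun x => by ext; rfl⟩
end

section
/- Let G = Q:L be a biextraspecial group, t ∈ L an involution, and D = ⟨x,y,Z⟩ a dent with standard basis (so xᵗ = x). Then D ∩ C_Q(t) has order 4; it is isomorphic to 2² (generated by a and x) if D is singular, and cyclic of order 4 (generated by x) if D is non-singular. -/
open scoped commutatorElement

/- ------------------  auxiliary lemmas  ------------------ -/

lemma aux_perm3 : ∀ g h : Equiv.Perm (Fin 3), g ≠ 1 → h ≠ 1 → g ^ 3 = 1 → h ^ 2 = 1 →
    h * g * h⁻¹ = g⁻¹ := by decide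

lemma aux_ncard_four {α : Type*} {p q r w : α} (h1 : p ≠ q) (h2 : p ≠ r) (h3 : p ≠ w)
    (h4 : q ≠ r) (h5 : q ≠ w) (h6 : r ≠ w) : ({p, q, r, w} : Set α).ncard = 4 := by
  rw [Set.ncard_insert_of_notMem (by simp [h1, h2, h3]) (Set.toFinite _),
    Set.ncard_insert_of_notMem (by simp [h4, h5]) (Set.toFinite _),
    Set.ncard_pair h6]

lemma aux_ncard_five {α : Type*} {p q r w v : α} (h1 : p ≠ q) (h2 : p ≠ r) (h3 : p ≠ w)
    (h4 : p ≠ v) (h5 : q ≠ r) (h6 : q ≠ w) (h7 : q ≠ v) (h8 : r ≠ w) (h9 : r ≠ v)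
    (h10 : w ≠ v) : ({p, q, r, w, v} : Set α).ncard = 5 := by
  rw [Set.ncard_insert_of_notMem (by simp [h1, h2, h3, h4]) (Set.toFinite _),
    aux_ncard_four h5 h6 h7 h8 h9 h10]

lemma aux_conj_comm {G : Type*} [Group G] {w g : G} (h : w * g * w⁻¹ = g) :
    w * g = g * w := by
  have h2 := congrArg (· * w) h
  simpa [mul_assoc] using h2

/- ------------------  the theorem  ------------------ -/

/-- for a dent `D` with standard basis `{x, y}` (so `xᵗ = x`),
`D ∩ C_Q(t)` has order 4; it equals `⟨a, x⟩ ≅ 2²` if `D` is singular and the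
cyclic group `⟨x⟩` of order 4 if `D` is non-singular. -/
theorem stmt11 (G : Type*) [Group G] (Q L : Subgroup G) (m : ℕ)
    (hG : IsBiextraspecial G Q m) (hL : Q.IsComplement' L)
    (s t : G) (hs : s ∈ L) (ht : t ∈ L) (hos : orderOf s = 3) (hot : orderOf t = 2)
    (a : G) (ha : a ∈ centerOf G Q) (ha1 : a ≠ 1) (hta : t * a * t⁻¹ = a)
    (D : Subgroup G) (x y : G)
    (hD : IsDent G Q D) (hB : StdBasis G Q s t D x y) :
    Nat.card (D ⊓ (Subgroup.centralizer {t} ⊓ Q) : Subgroup G) = 4 ∧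
      (IsSingularDent G D →
        D ⊓ (Subgroup.centralizer {t} ⊓ Q) = Subgroup.closure {a, x}) ∧
      (¬IsSingularDent G D →
        D ⊓ (Subgroup.centralizer {t} ⊓ Q) = Subgroup.closure {x}) := by
  classical
  haveI := hG.normal
  obtain ⟨e⟩ := hG.quot_iso
  set Z := centerOf G Q with hZdef
  -- basic facts about Z
  have hZQ : Z ≤ Q := inf_le_right
  have hcen : ∀ z ∈ Z, ∀ g ∈ Q, z * g = g * z := fun z hz g hg =>
    ((Subgroup.mem_centralizer_iff.mp (Subgroup.mem_inf.mp hz).1) g hg).symm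
  have hZsq : ∀ z ∈ Z, z * z = 1 := hG.center_exponent
  have hZnorm : ∀ (g : G), ∀ z ∈ Z, g * z * g⁻¹ ∈ Z := by
    intro g z hz
    refine Subgroup.mem_inf.mpr ⟨Subgroup.mem_centralizer_iff.mpr ?_,
      hG.normal.conj_mem z (hZQ hz) g⟩
    intro q hq
    have hq' : g⁻¹ * q * g ∈ Q := by
      have := hG.normal.conj_mem q hq g⁻¹
      simpa using this
    have h1 : (g⁻¹ * q * g) * z = z * (g⁻¹ * q * g) := (hcen z hz _ hq').symm
    calc q * (g * z * g⁻¹) = g * ((g⁻¹ * q * g) * z) * g⁻¹ := by group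
      _ = g * (z * (g⁻¹ * q * g)) * g⁻¹ := by rw [h1]
      _ = (g * z * g⁻¹) * q := by group
  -- basic facts about s and t
  have ht2 : t * t = 1 := by
    have h := pow_orderOf_eq_one t; rw [hot, pow_two] at h; exact h
  have hs3 : s * s * s = 1 := by
    have h := pow_orderOf_eq_one s
    rw [hos, pow_succ, pow_two] at h
    exact h
  have ht1 : t ≠ 1 := by
    intro h; rw [h, orderOf_one] at hot; omega
  have hs1 : s ≠ 1 := by
    intro h; rw [h, orderOf_one] at hos; omega
  have htQ : t ∉ Q := fun hQt => ht1 (Subgroup.disjoint_def.mp hL.disjoint hQt ht)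
  have hsQ : s ∉ Q := fun hQs => hs1 (Subgroup.disjoint_def.mp hL.disjoint hQs hs)
  -- t s t⁻¹ = s⁻¹
  have hts : t * s * t⁻¹ = s⁻¹ := by
    set f : G →* Equiv.Perm (Fin 3) := e.toMonoidHom.comp (QuotientGroup.mk' Q) with hf
    have hf1 : ∀ g : G, f g = 1 ↔ g ∈ Q := by
      intro g
      rw [hf, MonoidHom.comp_apply]
      rw [show (QuotientGroup.mk' Q) g = (g : G ⧸ Q) from rfl]
      constructor
      · intro h
        have h2 : e ((g : G ⧸ Q)) = e 1 := by rw [map_one]; exact h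
        exact (QuotientGroup.eq_one_iff g).mp (e.injective h2)
      · intro h
        have h2 : (g : G ⧸ Q) = 1 := (QuotientGroup.eq_one_iff g).mpr h
        show e.toMonoidHom _ = 1
        rw [h2, map_one]
    have hs3' : s ^ 3 = 1 := by rw [← hos]; exact pow_orderOf_eq_one s
    have ht2' : t ^ 2 = 1 := by rw [← hot]; exact pow_orderOf_eq_one t
    have hfs3 : (f s) ^ 3 = 1 := by rw [← map_pow, hs3', map_one]
    have hft2 : (f t) ^ 2 = 1 := by rw [← map_pow, ht2', map_one]
    have hfs1 : f s ≠ 1 := fun h => hsQ ((hf1 s).mp h)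
    have hft1 : f t ≠ 1 := fun h => htQ ((hf1 t).mp h)
    have key := aux_perm3 (f s) (f t) hfs1 hft1 hfs3 hft2
    have hmem : t * s * t⁻¹ * s ∈ Q := by
      apply (hf1 _).mp
      rw [map_mul, map_mul, map_mul, map_inv, key, inv_mul_cancel]
    have hmemL : t * s * t⁻¹ * s ∈ L := mul_mem (mul_mem (mul_mem ht hs) (inv_mem ht)) hs
    have h1 : t * s * t⁻¹ * s = 1 := Subgroup.disjoint_def.mp hL.disjoint hmem hmemL
    exact eq_inv_of_mul_eq_one_left h1
  -- memberships
  have hxD : x ∈ D := hB.x_mem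
  have hxQ : x ∈ Q := hD.lt_Q.le hxD
  have hyD : y ∈ D := hB.s_x ▸ hD.normal.conj_mem x hxD s
  have hyQ : y ∈ Q := hD.lt_Q.le hyD
  have hZD : Z ≤ D := hD.center_lt.le
  have haQ : a ∈ Q := hZQ ha
  have haD : a ∈ D := hZD ha
  have hxZ : x ∉ Z := hB.x_notin
  -- x and y commute
  have hcZ : ⁅x, y⁆ ∈ Z := hG.comm_mem_center x hxQ y hyQ
  have hcQ : ⁅x, y⁆ ∈ Q := hZQ hcZ
  have hxy : x * y = y * x := by
    have hcx : ⁅x, y⁆ * x = x * ⁅x, y⁆ := hcen _ hcZ x hxQ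
    have hscs : s * ⁅x, y⁆ * s⁻¹ = ⁅x, y⁆ := by
      have h1 : s * ⁅x, y⁆ * s⁻¹ = (s * x * s⁻¹) * (s * y * s⁻¹) * (s * x * s⁻¹)⁻¹ *
          (s * y * s⁻¹)⁻¹ := by
        rw [commutatorElement_def]; group
      rcases hB.s_y with h | h
      · rw [h1, hB.s_x, h]
        have h2 : y * (x * y) * y⁻¹ * (x * y)⁻¹ = ⁅x, y⁆⁻¹ := by
          rw [commutatorElement_def]; group
        rw [h2]
        exact inv_eq_of_mul_eq_one_left (hZsq _ hcZ)
      · rw [h1, hB.s_x, h]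
        have hinv : y⁻¹ * x⁻¹ * ⁅x, y⁆ = x⁻¹ * y⁻¹ := by
          rw [commutatorElement_def]; group
        calc y * (x⁻¹ * y⁻¹) * y⁻¹ * (x⁻¹ * y⁻¹)⁻¹ = y * (x⁻¹ * y⁻¹) * x := by group
          _ = y * (y⁻¹ * x⁻¹ * ⁅x, y⁆) * x := by rw [hinv]
          _ = x⁻¹ * ⁅x, y⁆ * x := by group
          _ = x⁻¹ * (x * ⁅x, y⁆) := by rw [mul_assoc, hcx]
          _ = ⁅x, y⁆ := by group
    have := hG.order_three_fpf s hos _ hcQ hscs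
    exact commutatorElement_eq_one_iff_mul_comm.mp this
  -- squares
  have hx2Z : x * x ∈ Z := hG.sq_mem_center x hxQ
  have hy2Z : y * y ∈ Z := hG.sq_mem_center y hyQ
  -- the action of t on y
  have hs2 : s * s = s⁻¹ := eq_inv_of_mul_eq_one_left hs3
  have htyt : t * y * t⁻¹ = s * y * s⁻¹ := by
    have hts' : t * s⁻¹ * t⁻¹ = s := by
      rw [show t * s⁻¹ * t⁻¹ = (t * s * t⁻¹)⁻¹ from by group, hts, inv_inv]
    have h1 : t * y * t⁻¹ = (t * s * t⁻¹) * (t * x * t⁻¹) * (t * s⁻¹ * t⁻¹) := by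
      rw [← hB.s_x]; group
    rw [hts, hB.t_fix, hts'] at h1
    have h2 : s * (s * x * s⁻¹) * s⁻¹ = s⁻¹ * x * s := by
      rw [show s * (s * x * s⁻¹) * s⁻¹ = (s * s) * x * (s * s)⁻¹ from by group, hs2,
        inv_inv]
    rw [h1, ← h2, hB.s_x]
  have hty : ∃ z0 ∈ Z, t * y * t⁻¹ = z0 * (x * y) := by
    rcases hB.s_y with h | h
    · exact ⟨1, one_mem _, by rw [htyt, h, one_mul]⟩
    · refine ⟨(x * x)⁻¹ * (y * y)⁻¹, mul_mem (inv_mem hx2Z) (inv_mem hy2Z), ?_⟩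
      rw [htyt, h]
      have hcomm : (y * y)⁻¹ * x = x * (y * y)⁻¹ := hcen _ (inv_mem hy2Z) x hxQ
      have key : (x * x)⁻¹ * (y * y)⁻¹ * (x * y) = x⁻¹ * y⁻¹ := by
        calc (x * x)⁻¹ * (y * y)⁻¹ * (x * y)
            = (x * x)⁻¹ * ((y * y)⁻¹ * x) * y := by group
          _ = (x * x)⁻¹ * (x * (y * y)⁻¹) * y := by rw [hcomm]
          _ = x⁻¹ * y⁻¹ := by group
      exact key.symm
  -- finiteness of Z and fixed points of t on Z
  have hZfinite : Finite ↥Z := Nat.finite_of_card_ne_zero (by rw [hG.card_center]; omega)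
  have hZsetfin : (Z : Set G).Finite := by
    rw [← Set.finite_coe_iff]; exact hZfinite
  have hZncard : (Z : Set G).ncard = 4 := by
    rw [← Nat.card_coe_set_eq]; exact hG.card_center
  obtain ⟨b, hbZ, hbt⟩ : ∃ b ∈ Z, t * b * t⁻¹ ≠ b := by
    by_contra h; push_neg at h; exact htQ (hG.center_faithful t h)
  have hfix : ∀ z ∈ Z, t * z * t⁻¹ = z → z = 1 ∨ z = a := by
    intro z hz hfz
    by_contra hcon
    push_neg at hcon
    obtain ⟨hz1, hza⟩ := hcon
    have hb1 : b ≠ 1 := by rintro rfl; simp at hbt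
    have hba : b ≠ a := by rintro rfl; exact hbt hta
    have hbz : b ≠ z := by rintro rfl; exact hbt hfz
    have hbaz : b ≠ a * z := by
      rintro rfl
      apply hbt
      rw [show t * (a * z) * t⁻¹ = (t * a * t⁻¹) * (t * z * t⁻¹) from by group, hta, hfz]
    have hainv : a⁻¹ = a := inv_eq_of_mul_eq_one_left (hZsq a ha)
    have haz1 : a * z ≠ 1 := by
      intro h
      exact hza (by rw [eq_inv_of_mul_eq_one_right h, hainv])
    have h_a_z : a ≠ z := fun h => hza h.symm
    have haz_a : a * z ≠ a := fun h => hz1 (by simpa using h)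
    have haz_z : a * z ≠ z := fun h => ha1 (by simpa using h)
    have hsub : ({1, a, z, a * z, b} : Set G) ⊆ (Z : Set G) := by
      intro w hw
      simp only [Set.mem_insert_iff, Set.mem_singleton_iff] at hw
      rcases hw with rfl | rfl | rfl | rfl | rfl
      exacts [one_mem Z, ha, hz, mul_mem ha hz, hbZ]
    have h5 : ({1, a, z, a * z, b} : Set G).ncard = 5 :=
      aux_ncard_five (Ne.symm ha1) (Ne.symm hz1) (Ne.symm haz1) (Ne.symm hb1)
        h_a_z (Ne.symm haz_a) (Ne.symm hba) (Ne.symm haz_z) (Ne.symm hbz) (Ne.symm hbaz)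
    have hle := Set.ncard_le_ncard hsub hZsetfin
    rw [h5, hZncard] at hle
    omega
  -- classification of the elements of D
  have hSQ : ∀ w ∈ ({1, x, y, x * y} : Set G), w ∈ Q := by
    intro w hw
    simp only [Set.mem_insert_iff, Set.mem_singleton_iff] at hw
    rcases hw with hc | hc | hc | hc <;> rw [hc]
    exacts [one_mem Q, hxQ, hyQ, mul_mem hxQ hyQ]
  have m1 : (1 : G) ∈ ({1, x, y, x * y} : Set G) := by simp
  have mx : x ∈ ({1, x, y, x * y} : Set G) := by simp
  have my : y ∈ ({1, x, y, x * y} : Set G) := by simp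
  have mxy : x * y ∈ ({1, x, y, x * y} : Set G) := by simp
  have hyyx : (y * y) * x = x * (y * y) := hcen _ hy2Z x hxQ
  have hw : ∀ w₁ ∈ ({1, x, y, x * y} : Set G), ∀ w₂ ∈ ({1, x, y, x * y} : Set G),
      ∃ z ∈ Z, ∃ w₃ ∈ ({1, x, y, x * y} : Set G), w₁ * w₂ = z * w₃ := by
    intro w₁ h₁ w₂ h₂
    have h₁' := h₁
    simp only [Set.mem_insert_iff, Set.mem_singleton_iff] at h₁'
    have h₂' := h₂
    simp only [Set.mem_insert_iff, Set.mem_singleton_iff] at h₂'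
    rcases h₁' with hc1 | hc1 | hc1 | hc1 <;> rw [hc1]
    · exact ⟨1, one_mem Z, w₂, h₂, rfl⟩
    · rcases h₂' with hc2 | hc2 | hc2 | hc2 <;> rw [hc2]
      · exact ⟨1, one_mem Z, x, mx, by rw [mul_one, one_mul]⟩
      · exact ⟨x * x, hx2Z, 1, m1, (mul_one _).symm⟩
      · exact ⟨1, one_mem Z, x * y, mxy, (one_mul _).symm⟩
      · exact ⟨x * x, hx2Z, y, my, by group⟩
    · rcases h₂' with hc2 | hc2 | hc2 | hc2 <;> rw [hc2]
      · exact ⟨1, one_mem Z, y, my, by rw [mul_one, one_mul]⟩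
      · exact ⟨1, one_mem Z, x * y, mxy, by rw [one_mul, ← hxy]⟩
      · exact ⟨y * y, hy2Z, 1, m1, (mul_one _).symm⟩
      · refine ⟨y * y, hy2Z, x, mx, ?_⟩
        calc y * (x * y) = (y * x) * y := by group
          _ = (x * y) * y := by rw [← hxy]
          _ = x * (y * y) := by group
          _ = (y * y) * x := hyyx.symm
    · rcases h₂' with hc2 | hc2 | hc2 | hc2 <;> rw [hc2]
      · exact ⟨1, one_mem Z, x * y, mxy, by rw [mul_one, one_mul]⟩
      · refine ⟨x * x, hx2Z, y, my, ?_⟩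
        calc (x * y) * x = x * (y * x) := by group
          _ = x * (x * y) := by rw [← hxy]
          _ = (x * x) * y := by group
      · refine ⟨y * y, hy2Z, x, mx, ?_⟩
        calc (x * y) * y = x * (y * y) := by group
          _ = (y * y) * x := hyyx.symm
      · refine ⟨(x * x) * (y * y), mul_mem hx2Z hy2Z, 1, m1, ?_⟩
        rw [mul_one]
        calc (x * y) * (x * y) = x * (y * x) * y := by group
          _ = x * (x * y) * y := by rw [← hxy]
          _ = (x * x) * (y * y) := by group
  have hinvS : ∀ w ∈ ({1, x, y, x * y} : Set G),
      ∃ z ∈ Z, ∃ w₃ ∈ ({1, x, y, x * y} : Set G), w⁻¹ = z * w₃ := by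
    intro w hwmem
    simp only [Set.mem_insert_iff, Set.mem_singleton_iff] at hwmem
    rcases hwmem with hc | hc | hc | hc <;> rw [hc]
    · exact ⟨1, one_mem Z, 1, m1, by simp⟩
    · exact ⟨(x * x)⁻¹, inv_mem hx2Z, x, mx, by group⟩
    · exact ⟨(y * y)⁻¹, inv_mem hy2Z, y, my, by group⟩
    · refine ⟨(x * x)⁻¹ * (y * y)⁻¹, mul_mem (inv_mem hx2Z) (inv_mem hy2Z), x * y, mxy, ?_⟩
      have hxyinv : y⁻¹ * x⁻¹ = x⁻¹ * y⁻¹ := by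
        have h9 := congrArg (·⁻¹) hxy
        simpa [mul_inv_rev] using h9
      have hcomm : (y * y)⁻¹ * x = x * (y * y)⁻¹ := hcen _ (inv_mem hy2Z) x hxQ
      have key : (x * x)⁻¹ * (y * y)⁻¹ * (x * y) = x⁻¹ * y⁻¹ := by
        calc (x * x)⁻¹ * (y * y)⁻¹ * (x * y)
            = (x * x)⁻¹ * ((y * y)⁻¹ * x) * y := by group
          _ = (x * x)⁻¹ * (x * (y * y)⁻¹) * y := by rw [hcomm]
          _ = x⁻¹ * y⁻¹ := by group
      calc (x * y)⁻¹ = y⁻¹ * x⁻¹ := mul_inv_rev _ _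
        _ = x⁻¹ * y⁻¹ := hxyinv
        _ = (x * x)⁻¹ * (y * y)⁻¹ * (x * y) := key.symm
  have hclass : ∀ d ∈ D, ∃ z ∈ Z, ∃ w ∈ ({1, x, y, x * y} : Set G), d = z * w := by
    have hDK : D ≤ {
        carrier := {d : G | ∃ z ∈ Z, ∃ w ∈ ({1, x, y, x * y} : Set G), d = z * w}
        one_mem' := ⟨1, one_mem Z, 1, m1, by simp⟩
        mul_mem' := by
          rintro g₁ g₂ ⟨z₁, hz₁, w₁, hw₁, rfl⟩ ⟨z₂, hz₂, w₂, hw₂, rfl⟩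
          obtain ⟨z₃, hz₃, w₃, hw₃, he⟩ := hw w₁ hw₁ w₂ hw₂
          refine ⟨z₁ * z₂ * z₃, mul_mem (mul_mem hz₁ hz₂) hz₃, w₃, hw₃, ?_⟩
          have hC : Commute w₁ z₂ := (hcen z₂ hz₂ w₁ (hSQ w₁ hw₁)).symm
          calc z₁ * w₁ * (z₂ * w₂) = z₁ * z₂ * (w₁ * w₂) := hC.mul_mul_mul_comm z₁ w₂
            _ = z₁ * z₂ * (z₃ * w₃) := by rw [he]
            _ = z₁ * z₂ * z₃ * w₃ := (mul_assoc _ _ _).symm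
        inv_mem' := by
          rintro g ⟨z, hz, w, hwmem, rfl⟩
          obtain ⟨z₃, hz₃, w₃, hw₃, he⟩ := hinvS w hwmem
          refine ⟨z⁻¹ * z₃, mul_mem (inv_mem hz) hz₃, w₃, hw₃, ?_⟩
          have hC : Commute z w := hcen z hz w (hSQ w hwmem)
          calc (z * w)⁻¹ = w⁻¹ * z⁻¹ := mul_inv_rev _ _
            _ = z⁻¹ * w⁻¹ := (hC.inv_inv.eq).symm
            _ = z⁻¹ * (z₃ * w₃) := by rw [he]
            _ = z⁻¹ * z₃ * w₃ := (mul_assoc _ _ _).symm } := by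
      rw [hB.gen]
      apply sup_le
      · intro z hz
        exact ⟨z, hz, 1, m1, by simp⟩
      · apply (Subgroup.closure_le _).mpr
        intro g hg
        simp only [Set.mem_insert_iff, Set.mem_singleton_iff] at hg
        rcases hg with hc | hc
        · exact ⟨1, one_mem Z, x, mx, by rw [hc, one_mul]⟩
        · exact ⟨1, one_mem Z, y, my, by rw [hc, one_mul]⟩
    exact fun d hd => hDK hd
  -- the intersection W
  set W := D ⊓ (Subgroup.centralizer {t} ⊓ Q) with hWdef
  have hWconj : ∀ g ∈ W, g ∈ D ∧ t * g * t⁻¹ = g := by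
    intro g hg
    obtain ⟨hgD, hgrest⟩ := Subgroup.mem_inf.mp hg
    obtain ⟨hgc, _⟩ := Subgroup.mem_inf.mp hgrest
    have hcomm : t * g = g * t := Subgroup.mem_centralizer_iff.mp hgc t rfl
    refine ⟨hgD, ?_⟩
    rw [hcomm]; group
  have hmemW : ∀ g, g ∈ D → t * g * t⁻¹ = g → g ∈ W := by
    intro g hgD hgt
    refine Subgroup.mem_inf.mpr ⟨hgD, Subgroup.mem_inf.mpr
      ⟨Subgroup.mem_centralizer_iff.mpr ?_, hD.lt_Q.le hgD⟩⟩
    intro w hwmem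
    rw [Set.mem_singleton_iff] at hwmem
    subst hwmem
    exact aux_conj_comm hgt
  obtain ⟨z0, hz0Z, htyeq⟩ := hty
  have hWsub : ∀ g ∈ W, g = 1 ∨ g = a ∨ g = x ∨ g = a * x := by
    intro g hg
    obtain ⟨hgD, hgt⟩ := hWconj g hg
    obtain ⟨z, hz, w, hwmem, rfl⟩ := hclass g hgD
    have hzt : t * z * t⁻¹ ∈ Z := hZnorm t z hz
    simp only [Set.mem_insert_iff, Set.mem_singleton_iff] at hwmem
    rcases hwmem with hc | hc | hc | hc <;> rw [hc] at hgt ⊢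
    · rw [mul_one] at hgt ⊢
      rcases hfix z hz hgt with hc2 | hc2
      · exact Or.inl hc2
      · exact Or.inr (Or.inl hc2)
    · have h1 : t * (z * x) * t⁻¹ = (t * z * t⁻¹) * (t * x * t⁻¹) := by group
      rw [h1, hB.t_fix] at hgt
      have h2 : t * z * t⁻¹ = z := mul_right_cancel hgt
      rcases hfix z hz h2 with hc2 | hc2 <;> rw [hc2]
      · exact Or.inr (Or.inr (Or.inl (one_mul x)))
      · exact Or.inr (Or.inr (Or.inr rfl))
    · exfalso
      have h1 : t * (z * y) * t⁻¹ = (t * z * t⁻¹) * (t * y * t⁻¹) := by group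
      rw [h1, htyeq] at hgt
      have h2 : ((t * z * t⁻¹) * z0 * x) * y = z * y := by
        calc ((t * z * t⁻¹) * z0 * x) * y = (t * z * t⁻¹) * (z0 * (x * y)) := by group
          _ = z * y := hgt
      have h3 : (t * z * t⁻¹) * z0 * x = z := mul_right_cancel h2
      have h4 : x = ((t * z * t⁻¹) * z0)⁻¹ * ((t * z * t⁻¹) * z0 * x) := by group
      rw [h3] at h4
      refine hxZ ?_
      rw [h4]
      exact mul_mem (inv_mem (mul_mem hzt hz0Z)) hz
    · exfalso
      have h1 : t * (z * (x * y)) * t⁻¹ = (t * z * t⁻¹) * ((t * x * t⁻¹) *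
          (t * y * t⁻¹)) := by group
      rw [h1, hB.t_fix, htyeq] at hgt
      have h2 : ((t * z * t⁻¹) * (x * z0 * x)) * y = (z * x) * y := by
        calc ((t * z * t⁻¹) * (x * z0 * x)) * y
            = (t * z * t⁻¹) * (x * (z0 * (x * y))) := by group
          _ = z * (x * y) := hgt
          _ = (z * x) * y := by group
      have h3 : (t * z * t⁻¹) * (x * z0 * x) = z * x := mul_right_cancel h2
      have h5 : x * z0 * x = z0 * (x * x) := by
        rw [show x * z0 = z0 * x from (hcen z0 hz0Z x hxQ).symm]; group
      rw [h5] at h3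
      have h6 : z * x ∈ Z := by
        rw [← h3]
        exact mul_mem hzt (mul_mem hz0Z hx2Z)
      have h7 : x = z⁻¹ * (z * x) := by group
      refine hxZ ?_
      rw [h7]
      exact mul_mem (inv_mem hz) h6
  have haW : a ∈ W := hmemW a haD hta
  have hxW : x ∈ W := hmemW x hxD hB.t_fix
  -- distinctness
  have hx1 : x ≠ 1 := fun h => hxZ (h ▸ one_mem Z)
  have hxa : x ≠ a := fun h => hxZ (h ▸ ha)
  have hax1 : a * x ≠ 1 := by
    intro h
    exact hxZ ((eq_inv_of_mul_eq_one_right h) ▸ inv_mem ha)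
  have haax : a ≠ a * x := by
    intro h
    have h2 : a * 1 = a * x := by rw [mul_one]; exact h
    exact hx1 (mul_left_cancel h2).symm
  have hxax : x ≠ a * x := by
    intro h
    have h2 : 1 * x = a * x := by rw [one_mul]; exact h
    exact ha1 (mul_right_cancel h2).symm
  -- the full description of W
  have hWset : (W : Set G) = {1, a, x, a * x} := by
    apply Set.eq_of_subset_of_subset
    · intro g hg
      rcases hWsub g hg with rfl | rfl | rfl | rfl <;> simp
    · intro g hg
      simp only [Set.mem_insert_iff, Set.mem_singleton_iff] at hg
      rcases hg with rfl | rfl | rfl | rfl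
      exacts [one_mem W, haW, hxW, mul_mem haW hxW]
  have hWcard : Nat.card ↥W = 4 := by
    have e1 : Nat.card ↥W = (W : Set G).ncard := Nat.card_coe_set_eq (W : Set G)
    rw [e1, hWset]
    exact aux_ncard_four (Ne.symm ha1) (Ne.symm hx1) (Ne.symm hax1) hxa.symm haax hxax
  have hWax : W = Subgroup.closure {a, x} := by
    apply le_antisymm
    · intro g hg
      rcases hWsub g hg with rfl | rfl | rfl | rfl
      · exact one_mem _
      · exact Subgroup.subset_closure (by simp)
      · exact Subgroup.subset_closure (by simp)
      · exact mul_mem (Subgroup.subset_closure (by simp))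
          (Subgroup.subset_closure (by simp))
    · apply (Subgroup.closure_le _).mpr
      intro g hg
      simp only [Set.mem_insert_iff, Set.mem_singleton_iff] at hg
      rcases hg with rfl | rfl
      exacts [haW, hxW]
  -- square of x
  have hx2fix : t * (x * x) * t⁻¹ = x * x := by
    rw [show t * (x * x) * t⁻¹ = (t * x * t⁻¹) * (t * x * t⁻¹) from by group, hB.t_fix]
  have hx2cases : x * x = 1 ∨ x * x = a := hfix _ hx2Z hx2fix
  refine ⟨hWcard, fun _ => hWax, ?_⟩
  intro hns
  have hx2a : x * x = a := by
    rcases hx2cases with h | h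
    · exfalso
      apply hns
      intro d hd
      obtain ⟨z, hz, w, hwmem, rfl⟩ := hclass d hd
      have hC : Commute w z := (hcen z hz w (hSQ w hwmem)).symm
      have hsq : (z * w) * (z * w) = (z * z) * (w * w) := hC.mul_mul_mul_comm z w
      rw [hsq, hZsq z hz, one_mul]
      simp only [Set.mem_insert_iff, Set.mem_singleton_iff] at hwmem
      have hyy1 : y * y = 1 := by
        rw [← hB.s_x, show (s * x * s⁻¹) * (s * x * s⁻¹) = s * (x * x) * s⁻¹ from by group,
          h]
        group
      rcases hwmem with hc | hc | hc | hc <;> rw [hc]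
      · exact mul_one 1
      · exact h
      · exact hyy1
      · calc (x * y) * (x * y) = x * (y * x) * y := by group
          _ = x * (x * y) * y := by rw [← hxy]
          _ = (x * x) * (y * y) := by group
          _ = 1 := by rw [h, hyy1, mul_one]
    · exact h
  rw [hWax]
  apply le_antisymm
  · apply (Subgroup.closure_le _).mpr
    intro g hg
    simp only [Set.mem_insert_iff, Set.mem_singleton_iff] at hg
    rcases hg with rfl | rfl
    · rw [← hx2a]
      exact mul_mem (Subgroup.subset_closure rfl) (Subgroup.subset_closure rfl)
    · exact Subgroup.subset_closure rfl
  · apply (Subgroup.closure_le _).mpr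
    intro g hg
    rw [Set.mem_singleton_iff] at hg
    subst hg
    exact Subgroup.subset_closure (by simp)
end
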